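/- arXiv:1612.00406 — 3 statements merged into one kernel-verified Lean document; each statement's English description precedes it below -/
import Mathlib

section
/- For d ≥ 5 there exists a constant C < ∞ such that for all distinct nonzero x, y ∈ ℤ^d, the triple-product sum Σ_{z ∈ ℤ^d \ {0,x,y}} |z|^{−d+2}·|x−z|^{−d+2}·|y−z|^{−d+2} is at most C·(|x|^{−d+4}|y|^{−d+2} + |x|^{−d+2}|y|^{−d+4} + |x−y|^{−d+4}|x|^{−d+2} + |x−y|^{−d+4}|y|^{−d+2}). -/
open scoped BigOperators

/-- Euclidean norm of a lattice point in `ℤ^d`. -/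
noncomputable def nrm {d : ℕ} (x : Fin d → ℤ) : ℝ :=
  Real.sqrt (∑ i, ((x i : ℝ)) ^ 2)

open scoped ENNReal NNReal
open Set

section TripleConvAux
variable {d : ℕ}


noncomputable def emb (x : Fin d → ℤ) : EuclideanSpace ℝ (Fin d) :=
  (WithLp.equiv 2 (Fin d → ℝ)).symm (fun i => (x i : ℝ))

lemma nrm_eq (x : Fin d → ℤ) : nrm x = ‖emb x‖ := by
  unfold nrm emb
  rw [EuclideanSpace.norm_eq]
  congr 1
  apply Finset.sum_congr rfl
  intro i _
  rw [Real.norm_eq_abs, sq_abs]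
  rfl

lemma emb_sub (x y : Fin d → ℤ) : emb (x - y) = emb x - emb y := by
  ext i; simp [emb]

lemma emb_neg (x : Fin d → ℤ) : emb (-x) = - emb x := by
  ext i; simp [emb]

lemma nrm_nonneg (x : Fin d → ℤ) : 0 ≤ nrm x := Real.sqrt_nonneg _

lemma nrm_neg (x : Fin d → ℤ) : nrm (-x) = nrm x := by
  rw [nrm_eq, nrm_eq, emb_neg, norm_neg]

lemma nrm_sub_rev (x y : Fin d → ℤ) : nrm (x - y) = nrm (y - x) := by
  rw [← nrm_neg (x - y)]; congr 1; abel

lemma nrm_sub_le (x y : Fin d → ℤ) : nrm x - nrm y ≤ nrm (x - y) := by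
  rw [nrm_eq, nrm_eq, nrm_eq, emb_sub]
  exact norm_sub_norm_le _ _

lemma one_le_nrm {x : Fin d → ℤ} (hx : x ≠ 0) : 1 ≤ nrm x := by
  obtain ⟨i, hi⟩ : ∃ i, x i ≠ 0 := by
    by_contra h; push_neg at h; exact hx (funext h)
  have h1 : (1 : ℝ) ≤ (x i : ℝ) ^ 2 := by
    have : (1 : ℤ) ≤ (x i) ^ 2 := by
      rcases lt_or_gt_of_ne hi with h | h
      · nlinarith
      · nlinarith
    exact_mod_cast this
  have h2 : (x i : ℝ) ^ 2 ≤ ∑ j, ((x j : ℝ)) ^ 2 :=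
    Finset.single_le_sum (f := fun j => ((x j : ℝ))^2) (fun j _ => sq_nonneg _) (Finset.mem_univ i)
  have := Real.sqrt_le_sqrt (le_trans h1 h2)
  simpa [nrm] using this

lemma nrm_pos {x : Fin d → ℤ} (hx : x ≠ 0) : 0 < nrm x :=
  lt_of_lt_of_le one_pos (one_le_nrm hx)

lemma abs_coord_le (x : Fin d → ℤ) (i : Fin d) : |(x i : ℝ)| ≤ nrm x := by
  have h2 : (x i : ℝ) ^ 2 ≤ ∑ j, ((x j : ℝ)) ^ 2 :=
    Finset.single_le_sum (f := fun j => ((x j : ℝ))^2) (fun j _ => sq_nonneg _) (Finset.mem_univ i)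
  have := Real.sqrt_le_sqrt h2
  rwa [Real.sqrt_sq_eq_abs] at this




/-- the box of side `2^(k+1)` -/
noncomputable def box (d k : ℕ) : Finset (Fin d → ℤ) :=
  Fintype.piFinset (fun _ => Finset.Icc (-(2^(k+1) : ℤ)) (2^(k+1)))

lemma mem_box_of_nrm_lt {k : ℕ} {z : Fin d → ℤ} (h : nrm z < 2^(k+1)) : z ∈ box d k := by
  rw [box, Fintype.mem_piFinset]
  intro i
  rw [Finset.mem_Icc]
  have h1 : |(z i : ℝ)| ≤ nrm z := abs_coord_le z i
  have h2 : |(z i : ℝ)| < 2^(k+1) := lt_of_le_of_lt h1 h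
  obtain ⟨hl, hr⟩ := abs_lt.mp h2
  constructor
  · exact_mod_cast le_of_lt (by exact_mod_cast (by push_cast; linarith : ((-(2^(k+1)) : ℤ) : ℝ) < (z i : ℝ)))
  · exact_mod_cast le_of_lt (by exact_mod_cast (by push_cast; linarith : ((z i : ℝ)) < ((2^(k+1) : ℤ) : ℝ)))

lemma card_box (d k : ℕ) : (box d k).card ≤ 2^((k+3)*d) := by
  rw [box, Fintype.card_piFinset]
  have h : (Finset.Icc (-(2^(k+1) : ℤ)) (2^(k+1))).card = 2^(k+2) + 1 := by
    rw [Int.card_Icc]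
    have h3 : ((2^(k+2)+1 : ℕ) : ℤ) = (2:ℤ)^(k+1) - (-(2:ℤ)^(k+1)) + 1 := by push_cast; ring
    have hp : (0:ℤ) < 2^(k+1) := by positivity
    omega
  calc ∏ _i : Fin d, (Finset.Icc (-(2^(k+1) : ℤ)) (2^(k+1))).card
      = (2^(k+2)+1)^d := by rw [Finset.prod_const, h, Finset.card_univ, Fintype.card_fin]
    _ ≤ (2^(k+3))^d := Nat.pow_le_pow_left (by
        have h1 : (1:ℕ) ≤ 2^(k+2) := Nat.one_le_two_pow
        have h2 : (2:ℕ)^(k+3) = 2*2^(k+2) := by rw [pow_succ]; ring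
        omega) d
    _ = 2^((k+3)*d) := by rw [← pow_mul]

/-- per-shell bound -/
lemma shell_sum_le (e : ℝ) (he : e ≤ 0) (k : ℕ) (s : Set (Fin d → ℤ)) :
    ∑' z : Fin d → ℤ,
      indicator (s ∩ {z | (2:ℝ)^k ≤ nrm z ∧ nrm z < 2^(k+1)}) (fun z => ENNReal.ofReal (nrm z ^ e)) z
    ≤ ENNReal.ofReal ((2:ℝ)^(3*d) * ((2:ℝ)^k) ^ ((d:ℝ) + e)) := by
  have hpt : ∀ z : Fin d → ℤ,
      indicator (s ∩ {z | (2:ℝ)^k ≤ nrm z ∧ nrm z < 2^(k+1)}) (fun z => ENNReal.ofReal (nrm z ^ e)) z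
      ≤ (if z ∈ box d k then ENNReal.ofReal (((2:ℝ)^k) ^ e) else 0) := by
    intro z
    by_cases hz : z ∈ s ∩ {z | (2:ℝ)^k ≤ nrm z ∧ nrm z < 2^(k+1)}
    · obtain ⟨hzs, h1, h2⟩ := hz
      have hb : z ∈ box d k := mem_box_of_nrm_lt h2
      rw [indicator_of_mem (show z ∈ s ∩ {z | (2:ℝ)^k ≤ nrm z ∧ nrm z < 2^(k+1)} from ⟨hzs, h1, h2⟩), if_pos hb]
      exact ENNReal.ofReal_le_ofReal
        (Real.rpow_le_rpow_of_nonpos (by positivity) h1 he)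
    · rw [indicator_of_notMem hz]; exact zero_le'
  refine le_trans (ENNReal.tsum_le_tsum hpt) ?_
  have hsum : ∑' z : Fin d → ℤ,
      (if z ∈ box d k then ENNReal.ofReal (((2:ℝ)^k) ^ e) else 0)
      = (box d k).card * ENNReal.ofReal (((2:ℝ)^k) ^ e) := by
    rw [tsum_eq_sum (s := box d k) (fun b hb => if_neg hb)]
    rw [Finset.sum_congr rfl (fun z hz => if_pos hz)]
    rw [Finset.sum_const, nsmul_eq_mul]
  rw [hsum]
  calc ((box d k).card : ℝ≥0∞) * ENNReal.ofReal (((2:ℝ)^k) ^ e)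
      ≤ (2^((k+3)*d) : ℕ) * ENNReal.ofReal (((2:ℝ)^k) ^ e) := by
        gcongr
        exact_mod_cast card_box d k
    _ = ENNReal.ofReal ((2:ℝ)^((k+3)*d) * ((2:ℝ)^k) ^ e) := by
        rw [ENNReal.ofReal_mul (by positivity)]
        congr 1
        rw [ENNReal.ofReal_pow (by norm_num)]
        norm_num
    _ = ENNReal.ofReal ((2:ℝ)^(3*d) * ((2:ℝ)^k) ^ ((d:ℝ) + e)) := by
        congr 1
        rw [Real.rpow_add (by positivity : (0:ℝ) < 2^k), Real.rpow_natCast, ← pow_mul]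
        rw [show (k+3)*d = 3*d + k*d from by ring, pow_add]
        ring


def shell (d k : ℕ) : Set (Fin d → ℤ) := {z | (2:ℝ)^k ≤ nrm z ∧ nrm z < 2^(k+1)}

lemma exists_shell {r : ℝ} (hr : 1 ≤ r) : ∃ k : ℕ, (2:ℝ)^k ≤ r ∧ r < 2^(k+1) := by
  set n := ⌊r⌋₊ with hn
  have hn1 : 1 ≤ n := Nat.le_floor (by exact_mod_cast hr)
  refine ⟨Nat.log 2 n, ?_, ?_⟩
  · calc ((2:ℝ)^Nat.log 2 n) = ((2^Nat.log 2 n : ℕ) : ℝ) := by push_cast; ring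
      _ ≤ (n:ℝ) := by exact_mod_cast Nat.pow_log_le_self 2 (by omega)
      _ ≤ r := Nat.floor_le (by linarith)
  · have h1 : n < 2^(Nat.log 2 n + 1) := Nat.lt_pow_succ_log_self (by norm_num) n
    have h2 : r < n + 1 := Nat.lt_floor_add_one r
    have h3 : (n:ℝ) + 1 ≤ ((2^(Nat.log 2 n + 1) : ℕ) : ℝ) := by exact_mod_cast h1
    calc r < (n:ℝ) + 1 := h2
      _ ≤ ((2^(Nat.log 2 n + 1) : ℕ) : ℝ) := h3
      _ = (2:ℝ)^(Nat.log 2 n + 1) := by push_cast; ring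

lemma region_sum_le (e : ℝ) (s : Set (Fin d → ℤ)) (hs : ∀ z ∈ s, 1 ≤ nrm z) :
    ∑' z : Fin d → ℤ, indicator s (fun z => ENNReal.ofReal (nrm z ^ e)) z
    ≤ ∑' k : ℕ, ∑' z : Fin d → ℤ,
        indicator (s ∩ shell d k) (fun z => ENNReal.ofReal (nrm z ^ e)) z := by
  rw [ENNReal.tsum_comm]
  refine ENNReal.tsum_le_tsum (fun z => ?_)
  by_cases hz : z ∈ s
  · obtain ⟨k, hk1, hk2⟩ := exists_shell (hs z hz)
    calc indicator s (fun z => ENNReal.ofReal (nrm z ^ e)) z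
        = indicator (s ∩ shell d k) (fun z => ENNReal.ofReal (nrm z ^ e)) z := by
          rw [indicator_of_mem hz, indicator_of_mem (mem_inter hz (show z ∈ shell d k from ⟨hk1, hk2⟩))]
      _ ≤ ∑' k' : ℕ, indicator (s ∩ shell d k') (fun z => ENNReal.ofReal (nrm z ^ e)) z :=
          ENNReal.le_tsum k
  · simp [indicator_of_notMem hz]

/-- (i): ball sum -/
lemma ball_sum (hd : 5 ≤ d) (R : ℝ) (hR : 1 ≤ R) :
    ∑' z : Fin d → ℤ,
      indicator {z | z ≠ 0 ∧ nrm z ≤ R} (fun z => ENNReal.ofReal (nrm z ^ ((2:ℝ) - d))) z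
    ≤ ENNReal.ofReal (2^(3*d+1) * R^2) := by
  have he : (2:ℝ) - d ≤ 0 := by
    have : (5:ℝ) ≤ d := by exact_mod_cast hd
    linarith
  set s : Set (Fin d → ℤ) := {z | z ≠ 0 ∧ nrm z ≤ R} with hs
  have h1 := region_sum_le (d := d) ((2:ℝ) - d) s (fun z hz => one_le_nrm hz.1)
  set K := Nat.log 2 ⌊R⌋₊ with hK
  have hfl : 1 ≤ ⌊R⌋₊ := Nat.le_floor (by exact_mod_cast hR)
  have h2K : (2:ℝ)^K ≤ R := by
    calc ((2:ℝ)^K) = ((2^K : ℕ) : ℝ) := by push_cast; ring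
      _ ≤ (⌊R⌋₊:ℝ) := by exact_mod_cast Nat.pow_log_le_self 2 (by omega)
      _ ≤ R := Nat.floor_le (by linarith)
  -- per-shell bound with if
  have h2 : ∀ k : ℕ, ∑' z : Fin d → ℤ,
      indicator (s ∩ shell d k) (fun z => ENNReal.ofReal (nrm z ^ ((2:ℝ) - d))) z
      ≤ ENNReal.ofReal (if (2:ℝ)^k ≤ R then 2^(3*d) * ((2:ℝ)^k)^2 else 0) := by
    intro k
    by_cases hk : (2:ℝ)^k ≤ R
    · rw [if_pos hk]
      refine le_trans (shell_sum_le _ he k s) ?_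
      apply le_of_eq
      congr 1
      have : ((d:ℝ) + ((2:ℝ) - d)) = 2 := by ring
      rw [this]
      rw [show ((2:ℝ)^k) ^ (2:ℝ) = ((2:ℝ)^k)^(2:ℕ) from by
        rw [← Real.rpow_natCast ((2:ℝ)^k) 2]; norm_num]
    · rw [if_neg hk]
      have hempty : s ∩ shell d k = ∅ := by
        ext z; simp only [mem_inter_iff, mem_empty_iff_false, iff_false]
        rintro ⟨⟨_, hzR⟩, hk1, _⟩
        exact hk (le_trans hk1 hzR)
      rw [hempty]
      simp
  refine le_trans h1 (le_trans (ENNReal.tsum_le_tsum h2) ?_)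
  -- sum over k
  have hsupp : ∀ k ∉ Finset.range (K+1),
      ENNReal.ofReal (if (2:ℝ)^k ≤ R then 2^(3*d) * ((2:ℝ)^k)^2 else 0) = 0 := by
    intro k hk
    rw [Finset.mem_range, not_lt] at hk
    rw [if_neg, ENNReal.ofReal_zero]
    intro hcon
    have : (2:ℕ)^k ≤ ⌊R⌋₊ := Nat.le_floor (by push_cast; exact_mod_cast hcon)
    have := (Nat.le_log_iff_pow_le (by norm_num) (by omega)).mpr this
    omega
  rw [tsum_eq_sum hsupp]
  rw [← ENNReal.ofReal_sum_of_nonneg (fun k _ => by positivity)]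
  apply ENNReal.ofReal_le_ofReal
  calc ∑ k ∈ Finset.range (K+1), (if (2:ℝ)^k ≤ R then 2^(3*d) * ((2:ℝ)^k)^2 else 0)
      ≤ ∑ k ∈ Finset.range (K+1), 2^(3*d) * ((2:ℝ)^k)^2 := by
        apply Finset.sum_le_sum
        intro k _
        split
        · exact le_refl _
        · positivity
    _ = 2^(3*d) * ∑ k ∈ Finset.range (K+1), (4:ℝ)^k := by
        rw [Finset.mul_sum]
        refine Finset.sum_congr rfl (fun k _ => ?_)
        have h4k : (4:ℝ)^k = ((2:ℝ)^k)^2 := by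
          rw [← pow_mul, show (4:ℝ) = 2^2 from by norm_num, ← pow_mul, Nat.mul_comm]
        rw [h4k]
    _ = 2^(3*d) * (((4:ℝ)^(K+1) - 1)/(4-1)) := by
        rw [geom_sum_eq (by norm_num : (4:ℝ) ≠ 1)]
    _ ≤ 2^(3*d) * (2 * R^2) := by
        have h2Kpos : (0:ℝ) < (2:ℝ)^K := by positivity
        have h4K : (4:ℝ)^K = ((2:ℝ)^K)^2 := by
          rw [← pow_mul, show (4:ℝ) = 2^2 from by norm_num, ← pow_mul, Nat.mul_comm]
        have h4 : (4:ℝ)^(K+1) = 4 * ((2:ℝ)^K)^2 := by rw [pow_succ, h4K]; ring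
        have hsq : ((2:ℝ)^K)^2 ≤ R^2 := by nlinarith
        have hfin : ((4:ℝ)^(K+1) - 1)/(4-1) ≤ 2 * R^2 := by
          rw [h4]
          nlinarith
        have hpow : (0:ℝ) ≤ 2^(3*d) := by positivity
        exact mul_le_mul_of_nonneg_left hfin hpow
    _ = 2^(3*d+1) * R^2 := by rw [pow_succ]; ring


/-- (ii): tail sum -/
lemma tail_sum (hd : 5 ≤ d) (R : ℝ) (hR : 1 ≤ R) :
    ∑' z : Fin d → ℤ,
      indicator {z | z ≠ 0 ∧ R ≤ nrm z}
        (fun z => ENNReal.ofReal (nrm z ^ ((4:ℝ) - 2*d))) z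
    ≤ ENNReal.ofReal (2^(4*d+1) * R^((4:ℝ) - d)) := by
  have hd5 : (5:ℝ) ≤ d := by exact_mod_cast hd
  have he : (4:ℝ) - 2*d ≤ 0 := by linarith
  set s : Set (Fin d → ℤ) := {z | z ≠ 0 ∧ R ≤ nrm z} with hs
  have h1 := region_sum_le (d := d) ((4:ℝ) - 2*d) s (fun z hz => one_le_nrm hz.1)
  set K := Nat.log 2 ⌊R⌋₊ with hK
  have hfl : 1 ≤ ⌊R⌋₊ := Nat.le_floor (by exact_mod_cast hR)
  have h2K : (2:ℝ)^K ≤ R := by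
    calc ((2:ℝ)^K) = ((2^K : ℕ) : ℝ) := by push_cast; ring
      _ ≤ (⌊R⌋₊:ℝ) := by exact_mod_cast Nat.pow_log_le_self 2 (by omega)
      _ ≤ R := Nat.floor_le (by linarith)
  have hRK : R < 2 * (2:ℝ)^K := by
    have h1' : ⌊R⌋₊ < 2^(K+1) := Nat.lt_pow_succ_log_self (by norm_num) _
    have h2' : R < (⌊R⌋₊:ℝ) + 1 := Nat.lt_floor_add_one R
    have h3' : ((⌊R⌋₊:ℝ)) + 1 ≤ ((2^(K+1) : ℕ) : ℝ) := by exact_mod_cast h1'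
    have : ((2^(K+1) : ℕ) : ℝ) = 2 * (2:ℝ)^K := by push_cast; ring
    linarith
  -- per-shell
  have h2 : ∀ k : ℕ, ∑' z : Fin d → ℤ,
      indicator (s ∩ shell d k) (fun z => ENNReal.ofReal (nrm z ^ ((4:ℝ) - 2*d))) z
      ≤ ENNReal.ofReal (if R < 2^(k+1) then 2^(3*d) * ((2:ℝ)^k)^((4:ℝ) - d) else 0) := by
    intro k
    by_cases hk : R < 2^(k+1)
    · rw [if_pos hk]
      refine le_trans (shell_sum_le _ he k s) ?_
      apply le_of_eq
      congr 2
      ring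
    · rw [if_neg hk]
      have hempty : s ∩ shell d k = ∅ := by
        ext z; simp only [mem_inter_iff, mem_empty_iff_false, iff_false]
        rintro ⟨⟨_, hzR⟩, _, hk2⟩
        exact hk (lt_of_le_of_lt hzR hk2)
      rw [hempty]
      simp
  refine le_trans h1 (le_trans (ENNReal.tsum_le_tsum h2) ?_)
  -- termwise bound by geometric series
  have hterm : ∀ k : ℕ,
      ENNReal.ofReal (if R < 2^(k+1) then 2^(3*d) * ((2:ℝ)^k)^((4:ℝ) - d) else 0)
      ≤ ENNReal.ofReal (2^(4*d) * R^((4:ℝ) - d)) *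
        (if K ≤ k then ((2:ℝ≥0∞)⁻¹)^(k - K) else 0) := by
    intro k
    by_cases hk : R < 2^(k+1)
    · rw [if_pos hk]
      -- K ≤ k
      have hKk : K ≤ k := by
        by_contra hcon
        push_neg at hcon
        have : (2:ℝ)^(k+1) ≤ 2^K := pow_le_pow_right₀ (by norm_num) (by omega)
        linarith
      rw [if_pos hKk]
      -- split 2^k = 2^K * 2^(k-K)
      have hsplit : (2:ℝ)^k = 2^K * 2^(k-K) := by
        rw [← pow_add]
        congr 1
        omega
      have hpos1 : (0:ℝ) < 2^K := by positivity
      have hpos2 : (0:ℝ) < 2^(k-K) := by positivity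
      have hmul : ((2:ℝ)^k)^((4:ℝ)-d)
          = ((2:ℝ)^K)^((4:ℝ)-d) * ((2:ℝ)^(k-K))^((4:ℝ)-d) := by
        rw [hsplit, Real.mul_rpow (le_of_lt hpos1) (le_of_lt hpos2)]
      have hb1 : ((2:ℝ)^K)^((4:ℝ)-d) ≤ 2^d * R^((4:ℝ)-d) := by
        have hhalf : R/2 ≤ (2:ℝ)^K := by linarith
        have hRpos : (0:ℝ) < R/2 := by linarith
        have : ((2:ℝ)^K)^((4:ℝ)-d) ≤ (R/2)^((4:ℝ)-d) :=
          Real.rpow_le_rpow_of_nonpos hRpos hhalf (by linarith)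
        refine le_trans this ?_
        rw [Real.div_rpow (by linarith) (by norm_num)]
        rw [div_le_iff₀ (by positivity : (0:ℝ) < (2:ℝ)^((4:ℝ)-d))]
        -- R^(4-d) ≤ 2^d * R^(4-d) * 2^(4-d): since 2^d * 2^(4-d) ≥ 1
        have hgeq : (1:ℝ) ≤ 2^d * (2:ℝ)^((4:ℝ)-d) := by
          have : (2:ℝ)^d * (2:ℝ)^((4:ℝ)-d) = (2:ℝ)^((4:ℝ)) := by
            rw [← Real.rpow_natCast 2 d, ← Real.rpow_add (by norm_num)]
            congr 1; ring
          rw [this]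
          have : (2:ℝ)^((4:ℝ)) = 16 := by
            rw [show (4:ℝ) = ((4:ℕ):ℝ) from by norm_num, Real.rpow_natCast]; norm_num
          rw [this]; norm_num
        have hRe : (0:ℝ) ≤ R^((4:ℝ)-d) := Real.rpow_nonneg (by linarith) _
        nlinarith
      have hb2 : ((2:ℝ)^(k-K))^((4:ℝ)-d) ≤ (1/2:ℝ)^(k-K) := by
        have hone : (1:ℝ) ≤ (2:ℝ)^(k-K) := one_le_pow₀ (by norm_num)
        have h1' : ((2:ℝ)^(k-K))^((4:ℝ)-d) ≤ ((2:ℝ)^(k-K))^(-1:ℝ) :=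
          Real.rpow_le_rpow_of_exponent_le hone (by linarith)
        have h2' : ((2:ℝ)^(k-K))^(-1:ℝ) = (1/2:ℝ)^(k-K) := by
          rw [Real.rpow_neg_one]
          rw [← inv_pow]
          norm_num
        linarith
      -- combine
      have hcomb : 2^(3*d) * ((2:ℝ)^k)^((4:ℝ) - d)
          ≤ (2^(4*d) * R^((4:ℝ) - d)) * (1/2:ℝ)^(k-K) := by
        rw [hmul]
        have hnn1 : (0:ℝ) ≤ ((2:ℝ)^(k-K))^((4:ℝ)-d) := Real.rpow_nonneg (by positivity) _
        have hnn0 : (0:ℝ) ≤ ((2:ℝ)^K)^((4:ℝ)-d) := Real.rpow_nonneg (by positivity) _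
        calc (2:ℝ)^(3*d) * (((2:ℝ)^K)^((4:ℝ)-d) * ((2:ℝ)^(k-K))^((4:ℝ)-d))
            ≤ (2:ℝ)^(3*d) * ((2^d * R^((4:ℝ)-d)) * (1/2:ℝ)^(k-K)) := by
              apply mul_le_mul_of_nonneg_left _ (by positivity)
              apply mul_le_mul hb1 hb2 hnn1 (by positivity)
          _ = (2^(4*d) * R^((4:ℝ) - d)) * (1/2:ℝ)^(k-K) := by
              rw [show 4*d = 3*d + d from by ring, pow_add]
              ring
      calc ENNReal.ofReal (2^(3*d) * ((2:ℝ)^k)^((4:ℝ) - d))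
          ≤ ENNReal.ofReal ((2^(4*d) * R^((4:ℝ) - d)) * (1/2:ℝ)^(k-K)) :=
            ENNReal.ofReal_le_ofReal hcomb
        _ = ENNReal.ofReal (2^(4*d) * R^((4:ℝ) - d)) * ENNReal.ofReal ((1/2:ℝ)^(k-K)) := by
            rw [ENNReal.ofReal_mul (by positivity)]
        _ = ENNReal.ofReal (2^(4*d) * R^((4:ℝ) - d)) * ((2:ℝ≥0∞)⁻¹)^(k - K) := by
            congr 1
            rw [ENNReal.ofReal_pow (by norm_num)]
            congr 1
            rw [show (1/2:ℝ) = (2:ℝ)⁻¹ from by norm_num]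
            rw [ENNReal.ofReal_inv_of_pos (by norm_num)]
            norm_num
    · rw [if_neg hk]
      simp
  refine le_trans (ENNReal.tsum_le_tsum hterm) ?_
  rw [ENNReal.tsum_mul_left]
  -- geometric sum
  have hgeo : ∑' k : ℕ, (if K ≤ k then ((2:ℝ≥0∞)⁻¹)^(k - K) else 0) = 2 := by
    have hinj : Function.Injective (fun j : ℕ => K + j) := add_right_injective K
    have hsupp : Function.support (fun k : ℕ => (if K ≤ k then ((2:ℝ≥0∞)⁻¹)^(k - K) else 0))
        ⊆ Set.range (fun j : ℕ => K + j) := by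
      intro k hk
      simp only [Function.mem_support] at hk
      by_cases h : K ≤ k
      · exact ⟨k - K, show K + (k - K) = k by omega⟩
      · exact (hk (if_neg h)).elim
    rw [← Function.Injective.tsum_eq hinj hsupp]
    simp only [le_add_iff_nonneg_right, zero_le, if_true, Nat.add_sub_cancel_left]
    rw [ENNReal.tsum_geometric, ENNReal.one_sub_inv_two, inv_inv]
  rw [hgeo]
  rw [← ENNReal.ofReal_ofNat 2, ← ENNReal.ofReal_mul (by positivity)]
  apply ENNReal.ofReal_le_ofReal
  have hRe : (0:ℝ) ≤ R^((4:ℝ)-d) := Real.rpow_nonneg (by linarith) _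
  rw [pow_succ]
  apply le_of_eq
  ring


/-- helper real inequality: `W^2 * (W/2)^(2-d) ≤ 2^d * W^(4-d)` for `1 ≤ W`. -/
lemma helper_real1 (hd : 5 ≤ d) {W : ℝ} (hW : 1 ≤ W) :
    W^2 * (W/2)^((2:ℝ)-d) ≤ 2^d * W^((4:ℝ)-d) := by
  have hW0 : (0:ℝ) < W := by linarith
  rw [Real.div_rpow (by linarith) (by norm_num), ← mul_div_assoc]
  rw [div_le_iff₀ (by positivity : (0:ℝ) < (2:ℝ)^((2:ℝ)-(d:ℝ)))]
  have h1 : W^2 * W^((2:ℝ)-d) = W^((4:ℝ)-d) := by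
    rw [← Real.rpow_natCast W 2, ← Real.rpow_add hW0]
    congr 1
    push_cast
    ring
  rw [h1]
  have h2 : (1:ℝ) ≤ 2^d * (2:ℝ)^((2:ℝ)-d) := by
    have he : (2:ℝ)^(d:ℕ) * (2:ℝ)^((2:ℝ)-d) = (2:ℝ)^((2:ℝ)) := by
      rw [← Real.rpow_natCast 2 d, ← Real.rpow_add (by norm_num)]
      congr 1; ring
    rw [he, show (2:ℝ) = ((2:ℕ):ℝ) from by norm_num, Real.rpow_natCast]
    norm_num
  have h3 : (0:ℝ) ≤ W^((4:ℝ)-d) := Real.rpow_nonneg (by linarith) _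
  nlinarith

/-- helper: `(max 1 (W/2))^(4-d) ≤ 2^d * W^(4-d)` for `1 ≤ W`, `5 ≤ d`. -/
lemma helper_real2 (hd : 5 ≤ d) {W : ℝ} (hW : 1 ≤ W) :
    (max 1 (W/2))^((4:ℝ)-(d:ℝ)) ≤ 2^d * W^((4:ℝ)-d) := by
  have hd5 : (5:ℝ) ≤ d := by exact_mod_cast hd
  have hW0 : (0:ℝ) < W := by linarith
  have h1 : (max 1 (W/2))^((4:ℝ)-(d:ℝ)) ≤ (W/2)^((4:ℝ)-(d:ℝ)) :=
    Real.rpow_le_rpow_of_nonpos (by linarith) (le_max_right _ _) (by linarith)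
  refine le_trans h1 ?_
  rw [Real.div_rpow (by linarith) (by norm_num)]
  rw [div_le_iff₀ (by positivity : (0:ℝ) < (2:ℝ)^((4:ℝ)-(d:ℝ)))]
  have h2 : (1:ℝ) ≤ 2^d * (2:ℝ)^((4:ℝ)-d) := by
    have he : (2:ℝ)^(d:ℕ) * (2:ℝ)^((4:ℝ)-d) = (2:ℝ)^((4:ℝ)) := by
      rw [← Real.rpow_natCast 2 d, ← Real.rpow_add (by norm_num)]
      congr 1; ring
    rw [he, show (4:ℝ) = ((4:ℕ):ℝ) from by norm_num, Real.rpow_natCast]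
    norm_num
  have h3 : (0:ℝ) ≤ W^((4:ℝ)-d) := Real.rpow_nonneg (by linarith) _
  nlinarith

/-- Two-point convolution bound. -/
lemma twopoint (hd : 5 ≤ d) (w : Fin d → ℤ) (hw : w ≠ 0) :
    ∑' z : Fin d → ℤ,
      indicator {z | z ≠ 0 ∧ z ≠ w}
        (fun z => ENNReal.ofReal (nrm z ^ ((2:ℝ)-d)) *
          ENNReal.ofReal (nrm (w - z) ^ ((2:ℝ)-d))) z
    ≤ ENNReal.ofReal (2^(5*d+3) * nrm w ^ ((4:ℝ)-d)) := by
  have hd5 : (5:ℝ) ≤ d := by exact_mod_cast hd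
  set W := nrm w with hWdef
  have hW : 1 ≤ W := one_le_nrm hw
  have hW0 : (0:ℝ) < W := by linarith
  set F : (Fin d → ℤ) → ℝ≥0∞ := fun z =>
    ENNReal.ofReal (nrm z ^ ((2:ℝ)-d)) * ENNReal.ofReal (nrm (w - z) ^ ((2:ℝ)-d)) with hF
  set P : Set (Fin d → ℤ) := {z | z ≠ 0 ∧ z ≠ w} with hP
  set SA : Set (Fin d → ℤ) := {z | z ∈ P ∧ nrm z ≤ W/2} with hSA
  set SB : Set (Fin d → ℤ) := {z | z ∈ P ∧ W/2 < nrm z ∧ nrm (w - z) ≤ W/2} with hSB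
  set SC : Set (Fin d → ℤ) := {z | z ∈ P ∧ W/2 < nrm z ∧ W/2 < nrm (w - z) ∧ nrm z ≤ nrm (w - z)} with hSC
  set SD : Set (Fin d → ℤ) := {z | z ∈ P ∧ W/2 < nrm z ∧ W/2 < nrm (w - z) ∧ nrm (w - z) < nrm z} with hSD
  -- cover
  have hcover : ∀ z, indicator P F z ≤
      indicator SA F z + indicator SB F z + indicator SC F z + indicator SD F z := by
    intro z
    by_cases hz : z ∈ P
    · rw [indicator_of_mem hz]
      rcases le_or_gt (nrm z) (W/2) with h1 | h1
      · rw [indicator_of_mem (show z ∈ SA from ⟨hz, h1⟩)]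
        exact (le_self_add.trans le_self_add).trans le_self_add
      · rcases le_or_gt (nrm (w - z)) (W/2) with h2 | h2
        · rw [indicator_of_mem (show z ∈ SB from ⟨hz, h1, h2⟩)]
          exact (le_add_self.trans le_self_add).trans le_self_add
        · rcases le_or_gt (nrm z) (nrm (w - z)) with h3 | h3
          · rw [indicator_of_mem (show z ∈ SC from ⟨hz, h1, h2, h3⟩)]
            exact le_add_self.trans le_self_add
          · rw [indicator_of_mem (show z ∈ SD from ⟨hz, h1, h2, h3⟩)]
            exact le_add_self
    · rw [indicator_of_notMem hz]
      exact zero_le'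
  set PB : ℝ≥0∞ := ENNReal.ofReal (2^(5*d+1) * W^((4:ℝ)-d)) with hPB
  have hWe_nn : (0:ℝ) ≤ W^((4:ℝ)-d) := Real.rpow_nonneg (by linarith) _
  -- ending helper : ofReal (2^(3*d+1) * R^2) * ofReal ((W/2)^(2-d)) ≤ PB with R = W
  have hendA : ENNReal.ofReal (2^(3*d+1) * W^2) * ENNReal.ofReal ((W/2)^((2:ℝ)-(d:ℝ))) ≤ PB := by
    rw [← ENNReal.ofReal_mul (by positivity)]
    apply ENNReal.ofReal_le_ofReal
    calc 2^(3*d+1) * W^2 * (W/2)^((2:ℝ)-(d:ℝ))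
        = 2^(3*d+1) * (W^2 * (W/2)^((2:ℝ)-(d:ℝ))) := by ring
      _ ≤ 2^(3*d+1) * (2^d * W^((4:ℝ)-d)) :=
          mul_le_mul_of_nonneg_left (helper_real1 hd hW) (by positivity)
      _ = 2^(4*d+1) * W^((4:ℝ)-d) := by
          rw [show 4*d+1 = d + (3*d+1) from by ring, pow_add]
          ring
      _ ≤ 2^(5*d+1) * W^((4:ℝ)-d) := by
          apply mul_le_mul_of_nonneg_right _ hWe_nn
          exact pow_le_pow_right₀ (by norm_num) (by omega)
  have hendC : ENNReal.ofReal (2^(4*d+1) * (max 1 (W/2))^((4:ℝ)-(d:ℝ))) ≤ PB := by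
    apply ENNReal.ofReal_le_ofReal
    calc 2^(4*d+1) * (max 1 (W/2))^((4:ℝ)-(d:ℝ))
        ≤ 2^(4*d+1) * (2^d * W^((4:ℝ)-d)) :=
          mul_le_mul_of_nonneg_left (helper_real2 hd hW) (by positivity)
      _ = 2^(5*d+1) * W^((4:ℝ)-d) := by
          rw [show 5*d+1 = d + (4*d+1) from by ring, pow_add]
          ring
  -- piece A
  have hA : ∑' z : Fin d → ℤ, indicator SA F z ≤ PB := by
    have hpt : ∀ z, indicator SA F z ≤
        indicator {z : Fin d → ℤ | z ≠ 0 ∧ nrm z ≤ W}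
          (fun z => ENNReal.ofReal (nrm z ^ ((2:ℝ)-d))) z *
          ENNReal.ofReal ((W/2)^((2:ℝ)-(d:ℝ))) := by
      intro z
      by_cases hz : z ∈ SA
      · obtain ⟨⟨hz0, hzw⟩, hzW⟩ := hz
        have hwz : W/2 ≤ nrm (w - z) := by
          have := nrm_sub_le w z
          linarith
        have hmem : z ∈ {z : Fin d → ℤ | z ≠ 0 ∧ nrm z ≤ W} := ⟨hz0, by linarith⟩
        rw [indicator_of_mem (show z ∈ SA from ⟨⟨hz0, hzw⟩, hzW⟩), indicator_of_mem hmem]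
        apply mul_le_mul_right
        exact ENNReal.ofReal_le_ofReal
          (Real.rpow_le_rpow_of_nonpos (by linarith) hwz (by linarith))
      · rw [indicator_of_notMem hz]; exact zero_le'
    refine le_trans (ENNReal.tsum_le_tsum hpt) ?_
    rw [ENNReal.tsum_mul_right]
    exact le_trans (mul_le_mul_left (ball_sum hd W hW) _) hendA
  -- piece B (reindex u = w - z)
  have hB : ∑' z : Fin d → ℤ, indicator SB F z ≤ PB := by
    rw [← (Equiv.subLeft w).tsum_eq (indicator SB F)]
    have hpt : ∀ u, indicator SB F ((Equiv.subLeft w) u) ≤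
        indicator {u : Fin d → ℤ | u ≠ 0 ∧ nrm u ≤ W}
          (fun u => ENNReal.ofReal (nrm u ^ ((2:ℝ)-d))) u *
          ENNReal.ofReal ((W/2)^((2:ℝ)-(d:ℝ))) := by
      intro u
      simp only [Equiv.subLeft_apply]
      by_cases hz : w - u ∈ SB
      · obtain ⟨⟨hz0, hzw⟩, hzgt, hzle⟩ := hz
        have hwu : nrm (w - (w - u)) = nrm u := by rw [sub_sub_cancel]
        have hu0 : u ≠ 0 := by
          intro h; apply hzw; rw [h, sub_zero]
        have huW : nrm u ≤ W/2 := by rw [hwu] at hzle; exact hzle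
        have hwz : W/2 ≤ nrm (w - u) := by
          have := nrm_sub_le w u
          linarith
        have hmem : u ∈ {u : Fin d → ℤ | u ≠ 0 ∧ nrm u ≤ W} := ⟨hu0, by linarith⟩
        rw [indicator_of_mem (show w - u ∈ SB from ⟨⟨hz0, hzw⟩, hzgt, hzle⟩),
          indicator_of_mem hmem]
        rw [hF]
        simp only []
        rw [hwu, mul_comm]
        apply mul_le_mul_right
        exact ENNReal.ofReal_le_ofReal
          (Real.rpow_le_rpow_of_nonpos (by linarith) hwz (by linarith))
      · rw [indicator_of_notMem hz]; exact zero_le'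
    refine le_trans (ENNReal.tsum_le_tsum hpt) ?_
    rw [ENNReal.tsum_mul_right]
    exact le_trans (mul_le_mul_left (ball_sum hd W hW) _) hendA
  -- piece C
  have hC : ∑' z : Fin d → ℤ, indicator SC F z ≤ PB := by
    have hpt : ∀ z, indicator SC F z ≤
        indicator {z : Fin d → ℤ | z ≠ 0 ∧ max 1 (W/2) ≤ nrm z}
          (fun z => ENNReal.ofReal (nrm z ^ ((4:ℝ) - 2*d))) z := by
      intro z
      by_cases hz : z ∈ SC
      · obtain ⟨⟨hz0, hzw⟩, h1, h2, h3⟩ := hz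
        have hz1 : (1:ℝ) ≤ nrm z := one_le_nrm hz0
        have hmem : z ∈ {z : Fin d → ℤ | z ≠ 0 ∧ max 1 (W/2) ≤ nrm z} :=
          ⟨hz0, max_le hz1 (le_of_lt h1)⟩
        rw [indicator_of_mem (show z ∈ SC from ⟨⟨hz0, hzw⟩, h1, h2, h3⟩), indicator_of_mem hmem]
        rw [hF]
        simp only []
        calc ENNReal.ofReal (nrm z ^ ((2:ℝ)-d)) * ENNReal.ofReal (nrm (w - z) ^ ((2:ℝ)-d))
            ≤ ENNReal.ofReal (nrm z ^ ((2:ℝ)-d)) * ENNReal.ofReal (nrm z ^ ((2:ℝ)-d)) := by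
              apply mul_le_mul_right
              exact ENNReal.ofReal_le_ofReal
                (Real.rpow_le_rpow_of_nonpos (by linarith) h3 (by linarith))
          _ = ENNReal.ofReal (nrm z ^ ((4:ℝ) - 2*d)) := by
              rw [← ENNReal.ofReal_mul (Real.rpow_nonneg (by linarith) _)]
              congr 1
              rw [← Real.rpow_add (by linarith : (0:ℝ) < nrm z)]
              congr 1
              ring
      · rw [indicator_of_notMem hz]; exact zero_le'
    refine le_trans (ENNReal.tsum_le_tsum hpt) ?_
    exact le_trans (tail_sum hd (max 1 (W/2)) (le_max_left _ _)) hendC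
  -- piece D (reindex u = w - z)
  have hD : ∑' z : Fin d → ℤ, indicator SD F z ≤ PB := by
    rw [← (Equiv.subLeft w).tsum_eq (indicator SD F)]
    have hpt : ∀ u, indicator SD F ((Equiv.subLeft w) u) ≤
        indicator {u : Fin d → ℤ | u ≠ 0 ∧ max 1 (W/2) ≤ nrm u}
          (fun u => ENNReal.ofReal (nrm u ^ ((4:ℝ) - 2*d))) u := by
      intro u
      simp only [Equiv.subLeft_apply]
      by_cases hz : w - u ∈ SD
      · obtain ⟨⟨hz0, hzw⟩, h1, h2, h3⟩ := hz
        have hwu : nrm (w - (w - u)) = nrm u := by rw [sub_sub_cancel]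
        rw [hwu] at h2 h3
        have hu0 : u ≠ 0 := by
          intro h; apply hzw; rw [h, sub_zero]
        have hu1 : (1:ℝ) ≤ nrm u := one_le_nrm hu0
        have hmem : u ∈ {u : Fin d → ℤ | u ≠ 0 ∧ max 1 (W/2) ≤ nrm u} :=
          ⟨hu0, max_le hu1 (le_of_lt h2)⟩
        rw [indicator_of_mem (show w - u ∈ SD from ⟨⟨hz0, hzw⟩, h1, by rw [hwu]; exact h2, by rw [hwu]; exact h3⟩), indicator_of_mem hmem]
        rw [hF]
        simp only []
        rw [hwu]
        calc ENNReal.ofReal (nrm (w - u) ^ ((2:ℝ)-d)) * ENNReal.ofReal (nrm u ^ ((2:ℝ)-d))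
            ≤ ENNReal.ofReal (nrm u ^ ((2:ℝ)-d)) * ENNReal.ofReal (nrm u ^ ((2:ℝ)-d)) := by
              apply mul_le_mul_left
              exact ENNReal.ofReal_le_ofReal
                (Real.rpow_le_rpow_of_nonpos (by linarith) (le_of_lt h3) (by linarith))
          _ = ENNReal.ofReal (nrm u ^ ((4:ℝ) - 2*d)) := by
              rw [← ENNReal.ofReal_mul (Real.rpow_nonneg (by linarith) _)]
              congr 1
              rw [← Real.rpow_add (by linarith : (0:ℝ) < nrm u)]
              congr 1
              ring
      · rw [indicator_of_notMem hz]; exact zero_le'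
    refine le_trans (ENNReal.tsum_le_tsum hpt) ?_
    exact le_trans (tail_sum hd (max 1 (W/2)) (le_max_left _ _)) hendC
  -- combine
  calc ∑' z : Fin d → ℤ, indicator P F z
      ≤ ∑' z : Fin d → ℤ, (indicator SA F z + indicator SB F z + indicator SC F z + indicator SD F z) :=
        ENNReal.tsum_le_tsum hcover
    _ = (∑' z : Fin d → ℤ, indicator SA F z) + (∑' z : Fin d → ℤ, indicator SB F z)
        + (∑' z : Fin d → ℤ, indicator SC F z) + (∑' z : Fin d → ℤ, indicator SD F z) := by
        rw [ENNReal.tsum_add, ENNReal.tsum_add, ENNReal.tsum_add]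
    _ ≤ PB + PB + PB + PB := by
        exact add_le_add (add_le_add (add_le_add hA hB) hC) hD
    _ ≤ ENNReal.ofReal (2^(5*d+3) * W^((4:ℝ)-d)) := by
        rw [hPB, ← ENNReal.ofReal_add (by positivity) (by positivity),
          ← ENNReal.ofReal_add (by positivity) (by positivity),
          ← ENNReal.ofReal_add (by positivity) (by positivity)]
        apply ENNReal.ofReal_le_ofReal
        rw [show 5*d+3 = (5*d+1)+2 from by ring, pow_add]
        apply le_of_eq
        ring


lemma helper_real3 (hd : 5 ≤ d) {A : ℝ} (hA : 1 ≤ A) :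
    (A/2)^((2:ℝ)-(d:ℝ)) ≤ 2^d * A^((2:ℝ)-d) := by
  have hA0 : (0:ℝ) < A := by linarith
  rw [Real.div_rpow (by linarith) (by norm_num)]
  rw [div_le_iff₀ (by positivity : (0:ℝ) < (2:ℝ)^((2:ℝ)-(d:ℝ)))]
  have h2 : (1:ℝ) ≤ 2^d * (2:ℝ)^((2:ℝ)-d) := by
    have he : (2:ℝ)^(d:ℕ) * (2:ℝ)^((2:ℝ)-d) = (2:ℝ)^((2:ℝ)) := by
      rw [← Real.rpow_natCast 2 d, ← Real.rpow_add (by norm_num)]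
      congr 1; ring
    rw [he, show (2:ℝ) = ((2:ℕ):ℝ) from by norm_num, Real.rpow_natCast]
    norm_num
  have h3 : (0:ℝ) ≤ A^((2:ℝ)-d) := Real.rpow_nonneg (by linarith) _
  nlinarith

/-- triple sum bound, ENNReal version -/
lemma triple (hd : 5 ≤ d) (x y : Fin d → ℤ) (hx : x ≠ 0) (hy : y ≠ 0) (hxy : x ≠ y) :
    ∑' z : Fin d → ℤ,
      indicator {z | z ≠ 0 ∧ z ≠ x ∧ z ≠ y}
        (fun z => ENNReal.ofReal (nrm z ^ ((2:ℝ)-d)) *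
          ENNReal.ofReal (nrm (x - z) ^ ((2:ℝ)-d)) *
          ENNReal.ofReal (nrm (y - z) ^ ((2:ℝ)-d))) z
    ≤ ENNReal.ofReal (2^(6*d+4) *
        (nrm x ^ ((2:ℝ)-d) * nrm (x - y) ^ ((4:ℝ)-d) +
         nrm x ^ ((2:ℝ)-d) * nrm y ^ ((4:ℝ)-d))) := by
  have hd5 : (5:ℝ) ≤ d := by exact_mod_cast hd
  set A := nrm x with hAdef
  have hA : 1 ≤ A := one_le_nrm hx
  have hA0 : (0:ℝ) < A := by linarith
  set G : (Fin d → ℤ) → ℝ≥0∞ := fun z =>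
    ENNReal.ofReal (nrm z ^ ((2:ℝ)-d)) *
      ENNReal.ofReal (nrm (x - z) ^ ((2:ℝ)-d)) *
      ENNReal.ofReal (nrm (y - z) ^ ((2:ℝ)-d)) with hG
  set P : Set (Fin d → ℤ) := {z | z ≠ 0 ∧ z ≠ x ∧ z ≠ y} with hP
  set SA : Set (Fin d → ℤ) := {z | z ∈ P ∧ A/2 ≤ nrm z} with hSA
  set SB : Set (Fin d → ℤ) := {z | z ∈ P ∧ nrm z < A/2} with hSB
  have hcover : ∀ z, indicator P G z ≤ indicator SA G z + indicator SB G z := by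
    intro z
    by_cases hz : z ∈ P
    · rw [indicator_of_mem hz]
      rcases le_or_gt (A/2) (nrm z) with h1 | h1
      · rw [indicator_of_mem (show z ∈ SA from ⟨hz, h1⟩)]
        exact le_self_add
      · rw [indicator_of_mem (show z ∈ SB from ⟨hz, h1⟩)]
        exact le_add_self
    · rw [indicator_of_notMem hz]; exact zero_le'
  have hfac : ENNReal.ofReal ((A/2)^((2:ℝ)-(d:ℝ))) ≤ ENNReal.ofReal (2^d * A^((2:ℝ)-d)) :=
    ENNReal.ofReal_le_ofReal (helper_real3 hd hA)
  -- piece SA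
  have hA' : ∑' z : Fin d → ℤ, indicator SA G z ≤
      ENNReal.ofReal ((A/2)^((2:ℝ)-(d:ℝ))) *
        ENNReal.ofReal (2^(5*d+3) * nrm (x - y) ^ ((4:ℝ)-d)) := by
    have hpt : ∀ z, indicator SA G z ≤
        ENNReal.ofReal ((A/2)^((2:ℝ)-(d:ℝ))) *
          indicator {z : Fin d → ℤ | z ≠ x ∧ z ≠ y}
            (fun z => ENNReal.ofReal (nrm (x - z) ^ ((2:ℝ)-d)) *
              ENNReal.ofReal (nrm (y - z) ^ ((2:ℝ)-d))) z := by
      intro z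
      by_cases hz : z ∈ SA
      · obtain ⟨⟨hz0, hzx, hzy⟩, h1⟩ := hz
        rw [indicator_of_mem (show z ∈ SA from ⟨⟨hz0, hzx, hzy⟩, h1⟩),
          indicator_of_mem (show z ∈ {z : Fin d → ℤ | z ≠ x ∧ z ≠ y} from ⟨hzx, hzy⟩)]
        rw [hG]
        simp only []
        rw [mul_assoc]
        apply mul_le_mul_left
        exact ENNReal.ofReal_le_ofReal
          (Real.rpow_le_rpow_of_nonpos (by linarith) h1 (by linarith))
      · rw [indicator_of_notMem hz]; exact zero_le'
    refine le_trans (ENNReal.tsum_le_tsum hpt) ?_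
    rw [ENNReal.tsum_mul_left]
    apply mul_le_mul_right
    -- reindex u = z - x
    rw [← (Equiv.addRight x).tsum_eq]
    have hyx : y - x ≠ 0 := sub_ne_zero.mpr (Ne.symm hxy)
    have hpt2 : ∀ u : Fin d → ℤ,
        indicator {z : Fin d → ℤ | z ≠ x ∧ z ≠ y}
          (fun z => ENNReal.ofReal (nrm (x - z) ^ ((2:ℝ)-d)) *
            ENNReal.ofReal (nrm (y - z) ^ ((2:ℝ)-d))) ((Equiv.addRight x) u)
        = indicator {u : Fin d → ℤ | u ≠ 0 ∧ u ≠ y - x}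
          (fun u => ENNReal.ofReal (nrm u ^ ((2:ℝ)-d)) *
            ENNReal.ofReal (nrm ((y - x) - u) ^ ((2:ℝ)-d))) u := by
      intro u
      simp only [Equiv.coe_addRight]
      have hs : ((u + x) ∈ {z : Fin d → ℤ | z ≠ x ∧ z ≠ y}) ↔
          (u ∈ {u : Fin d → ℤ | u ≠ 0 ∧ u ≠ y - x}) := by
        simp only [mem_setOf_eq, ne_eq]
        constructor
        · rintro ⟨h1, h2⟩
          refine ⟨fun hc => h1 (by rw [hc, zero_add]), fun hc => h2 ?_⟩
          rw [hc]; abel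
        · rintro ⟨h1, h2⟩
          refine ⟨fun hc => h1 ?_, fun hc => h2 ?_⟩
          · have : u + x - x = x - x := by rw [hc]
            simpa using this
          · rw [← hc]; abel
      have hv1 : x - (u + x) = -u := by abel
      have hv2 : y - (u + x) = (y - x) - u := by abel
      by_cases hm : u ∈ {u : Fin d → ℤ | u ≠ 0 ∧ u ≠ y - x}
      · rw [indicator_of_mem (hs.mpr hm), indicator_of_mem hm, hv1, hv2, nrm_neg]
      · rw [indicator_of_notMem (fun hc => hm (hs.mp hc)), indicator_of_notMem hm]
    rw [tsum_congr hpt2, nrm_sub_rev x y]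
    exact twopoint hd (y - x) hyx
  -- piece SB
  have hB' : ∑' z : Fin d → ℤ, indicator SB G z ≤
      ENNReal.ofReal ((A/2)^((2:ℝ)-(d:ℝ))) *
        ENNReal.ofReal (2^(5*d+3) * nrm y ^ ((4:ℝ)-d)) := by
    have hpt : ∀ z, indicator SB G z ≤
        ENNReal.ofReal ((A/2)^((2:ℝ)-(d:ℝ))) *
          indicator {z : Fin d → ℤ | z ≠ 0 ∧ z ≠ y}
            (fun z => ENNReal.ofReal (nrm z ^ ((2:ℝ)-d)) *
              ENNReal.ofReal (nrm (y - z) ^ ((2:ℝ)-d))) z := by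
      intro z
      by_cases hz : z ∈ SB
      · obtain ⟨⟨hz0, hzx, hzy⟩, h1⟩ := hz
        have hxz : A/2 ≤ nrm (x - z) := by
          have := nrm_sub_le x z
          linarith
        rw [indicator_of_mem (show z ∈ SB from ⟨⟨hz0, hzx, hzy⟩, h1⟩),
          indicator_of_mem (show z ∈ {z : Fin d → ℤ | z ≠ 0 ∧ z ≠ y} from ⟨hz0, hzy⟩)]
        rw [hG]
        simp only []
        calc ENNReal.ofReal (nrm z ^ ((2:ℝ)-d)) * ENNReal.ofReal (nrm (x - z) ^ ((2:ℝ)-d)) *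
              ENNReal.ofReal (nrm (y - z) ^ ((2:ℝ)-d))
            = ENNReal.ofReal (nrm (x - z) ^ ((2:ℝ)-d)) *
              (ENNReal.ofReal (nrm z ^ ((2:ℝ)-d)) * ENNReal.ofReal (nrm (y - z) ^ ((2:ℝ)-d))) := by
              ring
          _ ≤ ENNReal.ofReal ((A/2)^((2:ℝ)-(d:ℝ))) *
              (ENNReal.ofReal (nrm z ^ ((2:ℝ)-d)) * ENNReal.ofReal (nrm (y - z) ^ ((2:ℝ)-d))) := by
              apply mul_le_mul_left
              exact ENNReal.ofReal_le_ofReal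
                (Real.rpow_le_rpow_of_nonpos (by linarith) hxz (by linarith))
      · rw [indicator_of_notMem hz]; exact zero_le'
    refine le_trans (ENNReal.tsum_le_tsum hpt) ?_
    rw [ENNReal.tsum_mul_left]
    apply mul_le_mul_right
    exact twopoint hd y hy
  -- combine
  have hcnn : (0:ℝ) ≤ nrm (x - y) ^ ((4:ℝ)-(d:ℝ)) := Real.rpow_nonneg (nrm_nonneg _) _
  have hbnn : (0:ℝ) ≤ nrm y ^ ((4:ℝ)-(d:ℝ)) := Real.rpow_nonneg (nrm_nonneg _) _
  have hann : (0:ℝ) ≤ A ^ ((2:ℝ)-(d:ℝ)) := Real.rpow_nonneg (by linarith) _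
  calc ∑' z : Fin d → ℤ, indicator P G z
      ≤ ∑' z : Fin d → ℤ, (indicator SA G z + indicator SB G z) :=
        ENNReal.tsum_le_tsum hcover
    _ = (∑' z : Fin d → ℤ, indicator SA G z) + ∑' z : Fin d → ℤ, indicator SB G z :=
        ENNReal.tsum_add
    _ ≤ ENNReal.ofReal ((A/2)^((2:ℝ)-(d:ℝ))) *
          ENNReal.ofReal (2^(5*d+3) * nrm (x - y) ^ ((4:ℝ)-d)) +
        ENNReal.ofReal ((A/2)^((2:ℝ)-(d:ℝ))) *
          ENNReal.ofReal (2^(5*d+3) * nrm y ^ ((4:ℝ)-d)) := add_le_add hA' hB'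
    _ = ENNReal.ofReal ((A/2)^((2:ℝ)-(d:ℝ))) *
          (ENNReal.ofReal (2^(5*d+3) * nrm (x - y) ^ ((4:ℝ)-d)) +
           ENNReal.ofReal (2^(5*d+3) * nrm y ^ ((4:ℝ)-d))) := by rw [mul_add]
    _ ≤ ENNReal.ofReal (2^d * A^((2:ℝ)-d)) *
          (ENNReal.ofReal (2^(5*d+3) * nrm (x - y) ^ ((4:ℝ)-d)) +
           ENNReal.ofReal (2^(5*d+3) * nrm y ^ ((4:ℝ)-d))) := mul_le_mul_left hfac _
    _ = ENNReal.ofReal ((2^d * A^((2:ℝ)-d)) *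
          (2^(5*d+3) * nrm (x - y) ^ ((4:ℝ)-d) + 2^(5*d+3) * nrm y ^ ((4:ℝ)-d))) := by
        rw [← ENNReal.ofReal_add (by positivity) (by positivity),
          ← ENNReal.ofReal_mul (by positivity)]
    _ ≤ ENNReal.ofReal (2^(6*d+4) *
        (A ^ ((2:ℝ)-d) * nrm (x - y) ^ ((4:ℝ)-d) +
         A ^ ((2:ℝ)-d) * nrm y ^ ((4:ℝ)-d))) := by
        apply ENNReal.ofReal_le_ofReal
        have e1 : (2:ℝ)^d * (2:ℝ)^(5*d+3) = 2^(6*d+3) := by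
          rw [← pow_add]; congr 1; ring
        have e2 : (2:ℝ)^(6*d+4) = 2 * 2^(6*d+3) := by
          rw [show 6*d+4 = (6*d+3)+1 from by ring, pow_succ]; ring
        nlinarith [mul_nonneg hann hcnn, mul_nonneg hann hbnn,
          pow_nonneg (by norm_num : (0:ℝ) ≤ 2) (6*d+3)]


lemma conv_real {ι : Type*} (g : ι → ℝ) (hg : ∀ i, 0 ≤ g i) (B : ℝ) (hB : 0 ≤ B)
    (h : ∑' i, ENNReal.ofReal (g i) ≤ ENNReal.ofReal B) :
    Summable g ∧ (∑' i, g i) ≤ B := by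
  have hfin : (∑' i, ENNReal.ofReal (g i)) ≠ ⊤ :=
    ne_top_of_le_ne_top ENNReal.ofReal_ne_top h
  have hGsum : Summable (fun i => Real.toNNReal (g i)) := by
    rw [← ENNReal.tsum_coe_ne_top_iff_summable]
    exact hfin
  have hsg : Summable g := by
    have h2 := NNReal.summable_coe.2 hGsum
    have : (fun i => ((Real.toNNReal (g i) : ℝ≥0) : ℝ)) = g := by
      funext i; exact Real.coe_toNNReal _ (hg i)
    rwa [this] at h2
  refine ⟨hsg, ?_⟩
  have hcoe : ENNReal.ofReal (∑' i, g i) = ∑' i, ENNReal.ofReal (g i) :=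
    ENNReal.ofReal_tsum_of_nonneg hg hsg
  have := le_trans (le_of_eq hcoe) h
  rwa [ENNReal.ofReal_le_ofReal_iff hB] at this


end TripleConvAux

/-- For `d ≥ 5` there is `C < ∞` such that for all distinct nonzero
`x, y ∈ ℤ^d`,
`∑_{z ∉ {0,x,y}} |z|^{2-d} |x-z|^{2-d} |y-z|^{2-d}
  ≤ C (|x|^{4-d}|y|^{2-d} + |x|^{2-d}|y|^{4-d} + |x-y|^{4-d}|x|^{2-d} + |x-y|^{4-d}|y|^{2-d})`. -/
theorem triple_convolution_upper_bound (d : ℕ) (hd : 5 ≤ d) :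
    ∃ C : ℝ, 0 < C ∧ ∀ x y : Fin d → ℤ, x ≠ 0 → y ≠ 0 → x ≠ y →
      Summable (fun z : {z : Fin d → ℤ // z ≠ 0 ∧ z ≠ x ∧ z ≠ y} =>
        nrm z.1 ^ ((2 : ℝ) - d) * nrm (x - z.1) ^ ((2 : ℝ) - d) *
          nrm (y - z.1) ^ ((2 : ℝ) - d)) ∧
      (∑' z : {z : Fin d → ℤ // z ≠ 0 ∧ z ≠ x ∧ z ≠ y},
          nrm z.1 ^ ((2 : ℝ) - d) * nrm (x - z.1) ^ ((2 : ℝ) - d) *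
            nrm (y - z.1) ^ ((2 : ℝ) - d))
        ≤ C * (nrm x ^ ((4 : ℝ) - d) * nrm y ^ ((2 : ℝ) - d) +
               nrm x ^ ((2 : ℝ) - d) * nrm y ^ ((4 : ℝ) - d) +
               nrm (x - y) ^ ((4 : ℝ) - d) * nrm x ^ ((2 : ℝ) - d) +
               nrm (x - y) ^ ((4 : ℝ) - d) * nrm y ^ ((2 : ℝ) - d)) := by
  refine ⟨2^(6*d+4), by positivity, ?_⟩
  intro x y hx hy hxy
  set g : {z : Fin d → ℤ // z ≠ 0 ∧ z ≠ x ∧ z ≠ y} → ℝ := fun z =>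
    nrm z.1 ^ ((2 : ℝ) - d) * nrm (x - z.1) ^ ((2 : ℝ) - d) *
      nrm (y - z.1) ^ ((2 : ℝ) - d) with hg
  have hgnn : ∀ z, 0 ≤ g z := by
    intro z
    have h1 : (0:ℝ) ≤ nrm z.1 ^ ((2:ℝ)-(d:ℝ)) := Real.rpow_nonneg (nrm_nonneg _) _
    have h2 : (0:ℝ) ≤ nrm (x - z.1) ^ ((2:ℝ)-(d:ℝ)) := Real.rpow_nonneg (nrm_nonneg _) _
    have h3 : (0:ℝ) ≤ nrm (y - z.1) ^ ((2:ℝ)-(d:ℝ)) := Real.rpow_nonneg (nrm_nonneg _) _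
    exact mul_nonneg (mul_nonneg h1 h2) h3
  -- nonneg of the target bound terms
  have ht1 : (0:ℝ) ≤ nrm x ^ ((4:ℝ)-(d:ℝ)) * nrm y ^ ((2:ℝ)-(d:ℝ)) :=
    mul_nonneg (Real.rpow_nonneg (nrm_nonneg _) _) (Real.rpow_nonneg (nrm_nonneg _) _)
  have ht2 : (0:ℝ) ≤ nrm x ^ ((2:ℝ)-(d:ℝ)) * nrm y ^ ((4:ℝ)-(d:ℝ)) :=
    mul_nonneg (Real.rpow_nonneg (nrm_nonneg _) _) (Real.rpow_nonneg (nrm_nonneg _) _)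
  have ht3 : (0:ℝ) ≤ nrm (x - y) ^ ((4:ℝ)-(d:ℝ)) * nrm x ^ ((2:ℝ)-(d:ℝ)) :=
    mul_nonneg (Real.rpow_nonneg (nrm_nonneg _) _) (Real.rpow_nonneg (nrm_nonneg _) _)
  have ht4 : (0:ℝ) ≤ nrm (x - y) ^ ((4:ℝ)-(d:ℝ)) * nrm y ^ ((2:ℝ)-(d:ℝ)) :=
    mul_nonneg (Real.rpow_nonneg (nrm_nonneg _) _) (Real.rpow_nonneg (nrm_nonneg _) _)
  set B : ℝ := 2^(6*d+4) * (nrm x ^ ((4:ℝ)-(d:ℝ)) * nrm y ^ ((2:ℝ)-(d:ℝ)) +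
    nrm x ^ ((2:ℝ)-(d:ℝ)) * nrm y ^ ((4:ℝ)-(d:ℝ)) +
    nrm (x - y) ^ ((4:ℝ)-(d:ℝ)) * nrm x ^ ((2:ℝ)-(d:ℝ)) +
    nrm (x - y) ^ ((4:ℝ)-(d:ℝ)) * nrm y ^ ((2:ℝ)-(d:ℝ))) with hB
  have hBnn : 0 ≤ B := by
    apply mul_nonneg (by positivity)
    linarith
  -- ENNReal bound
  have hkey : ∑' z, ENNReal.ofReal (g z) ≤ ENNReal.ofReal B := by
    have heq : ∀ z : {z : Fin d → ℤ // z ≠ 0 ∧ z ≠ x ∧ z ≠ y},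
        ENNReal.ofReal (g z) =
          ENNReal.ofReal (nrm z.1 ^ ((2:ℝ)-d)) *
          ENNReal.ofReal (nrm (x - z.1) ^ ((2:ℝ)-d)) *
          ENNReal.ofReal (nrm (y - z.1) ^ ((2:ℝ)-d)) := by
      intro z
      rw [hg]
      simp only []
      rw [ENNReal.ofReal_mul (mul_nonneg (Real.rpow_nonneg (nrm_nonneg _) _)
        (Real.rpow_nonneg (nrm_nonneg _) _)),
        ENNReal.ofReal_mul (Real.rpow_nonneg (nrm_nonneg _) _)]
    rw [tsum_congr heq]
    have hsub : ∑' z : {z : Fin d → ℤ // z ≠ 0 ∧ z ≠ x ∧ z ≠ y},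
        (ENNReal.ofReal (nrm z.1 ^ ((2:ℝ)-d)) *
          ENNReal.ofReal (nrm (x - z.1) ^ ((2:ℝ)-d)) *
          ENNReal.ofReal (nrm (y - z.1) ^ ((2:ℝ)-d)))
        = ∑' z : Fin d → ℤ, indicator {z : Fin d → ℤ | z ≠ 0 ∧ z ≠ x ∧ z ≠ y}
            (fun z => ENNReal.ofReal (nrm z ^ ((2:ℝ)-d)) *
              ENNReal.ofReal (nrm (x - z) ^ ((2:ℝ)-d)) *
              ENNReal.ofReal (nrm (y - z) ^ ((2:ℝ)-d))) z :=
      by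
        exact tsum_subtype {z : Fin d → ℤ | z ≠ 0 ∧ z ≠ x ∧ z ≠ y}
          (fun z => ENNReal.ofReal (nrm z ^ ((2:ℝ)-d)) *
            ENNReal.ofReal (nrm (x - z) ^ ((2:ℝ)-d)) *
            ENNReal.ofReal (nrm (y - z) ^ ((2:ℝ)-d)))
    rw [hsub]
    refine le_trans (triple hd x y hx hy hxy) (ENNReal.ofReal_le_ofReal ?_)
    rw [hB]
    have e2 : (0:ℝ) ≤ 2^(6*d+4) := by positivity
    nlinarith [mul_comm (nrm x ^ ((2:ℝ)-(d:ℝ))) (nrm (x - y) ^ ((4:ℝ)-(d:ℝ)))]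
  obtain ⟨h1, h2⟩ := conv_real g hgnn B hBnn hkey
  exact ⟨h1, h2⟩
end

section
/- For d ≥ 5 there exists C < ∞ such that for all distinct nonzero x, y ∈ ℤ^d, the sum Σ_{z ∈ ℤ^d \ {0,x,y}} |z|^{−d+2}·|x−z|^{−d+2}·|y−z|^{−d+4} is at most C·(|y|^{−d+4}|x−y|^{−d+4} + |y|^{−d+4}|x|^{−d+4} + |x−y|^{−d+4}|x|^{−d+4}). -/
open scoped BigOperators
open Set ENNReal

namespace MCB
variable {d : ℕ}

/-- embedding into Euclidean space -/
noncomputable def φ (z : Fin d → ℤ) : EuclideanSpace ℝ (Fin d) := WithLp.toLp 2 (fun i => (z i : ℝ))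

lemma nrm_eq (z : Fin d → ℤ) : nrm z = ‖φ z‖ := by
  rw [EuclideanSpace.norm_eq]
  simp only [Real.norm_eq_abs, sq_abs]
  rfl

lemma φ_sub (a b : Fin d → ℤ) : φ (a - b) = φ a - φ b := by
  ext i; simp [φ]

lemma nrm_nonneg (z : Fin d → ℤ) : 0 ≤ nrm z := Real.sqrt_nonneg _

lemma nrm_sub_comm (a b : Fin d → ℤ) : nrm (a - b) = nrm (b - a) := by
  rw [nrm_eq, nrm_eq, φ_sub, φ_sub, ← norm_neg, neg_sub]

lemma one_le_nrm {z : Fin d → ℤ} (hz : z ≠ 0) : 1 ≤ nrm z := by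
  obtain ⟨i, hi⟩ : ∃ i, z i ≠ 0 := by
    by_contra h; push_neg at h; exact hz (funext h)
  have h1 : (1 : ℝ) ≤ ((z i : ℝ)) ^ 2 := by
    have : (1 : ℤ) ≤ (z i) ^ 2 := by
      rcases lt_or_gt_of_ne hi with h | h <;> nlinarith
    exact_mod_cast this
  have h2 : (1 : ℝ) ≤ ∑ j, ((z j : ℝ)) ^ 2 :=
    h1.trans (Finset.single_le_sum (f := fun j => ((z j:ℝ))^2) (fun j _ => sq_nonneg _) (Finset.mem_univ i))
  calc (1:ℝ) = Real.sqrt 1 := (Real.sqrt_one).symm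
  _ ≤ nrm z := Real.sqrt_le_sqrt h2

lemma nrm_pos {z : Fin d → ℤ} (hz : z ≠ 0) : 0 < nrm z :=
  lt_of_lt_of_le one_pos (one_le_nrm hz)

lemma nrm_sub_nrm_le (a b : Fin d → ℤ) : nrm a - nrm b ≤ nrm (a - b) := by
  rw [nrm_eq, nrm_eq, nrm_eq, φ_sub]; exact norm_sub_norm_le _ _

/-- second triangle-type inequality: `nrm (x - z) ≥ nrm (x - y) - nrm (y - z)` -/
lemma nrm_sub_ge (x y z : Fin d → ℤ) : nrm (x - y) - nrm (y - z) ≤ nrm (x - z) := by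
  have h := nrm_sub_nrm_le (x - y) ((x - y) - (x - z))
  have e1 : (x - y) - ((x - y) - (x - z)) = x - z := by ring
  have e2 : (x - y) - (x - z) = -(y - z) := by ring
  rw [e1, e2] at h
  have : nrm (-(y - z)) = nrm (y - z) := by
    have := nrm_sub_comm (0 : Fin d → ℤ) (y - z)
    simpa using this
  linarith [h, this.le]

lemma coord_le_nrm (w : Fin d → ℤ) (i : Fin d) : |(w i : ℝ)| ≤ nrm w := by
  have h : ((w i : ℝ)) ^ 2 ≤ ∑ j, ((w j : ℝ)) ^ 2 :=
    Finset.single_le_sum (f := fun j => ((w j:ℝ))^2) (fun j _ => sq_nonneg _) (Finset.mem_univ i)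
  calc |(w i : ℝ)| = Real.sqrt (((w i : ℝ))^2) := (Real.sqrt_sq_eq_abs _).symm
  _ ≤ nrm w := Real.sqrt_le_sqrt h

/-- the finite box of side `2N+1` -/
noncomputable def box (d N : ℕ) : Finset (Fin d → ℤ) := Fintype.piFinset (fun _ => Finset.Icc (-(N:ℤ)) N)

lemma mem_box {w : Fin d → ℤ} {N : ℕ} (h : nrm w ≤ N) : w ∈ box d N := by
  rw [box, Fintype.mem_piFinset]
  intro i
  have := (coord_le_nrm w i).trans h
  rw [Finset.mem_Icc]
  constructor
  · have : -(N:ℝ) ≤ (w i : ℝ) := by cases abs_le.mp this; linarith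
    exact_mod_cast this
  · have : (w i : ℝ) ≤ (N:ℝ) := (le_abs_self _).trans ((coord_le_nrm w i).trans h)
    exact_mod_cast this

lemma card_box (N : ℕ) : (box d N).card = (2*N+1)^d := by
  rw [box, Fintype.card_piFinset]
  simp [Int.card_Icc]
  congr 1
  omega

/-- generic counting bound: a set inside the ball of radius `R` contributes at most
`(8R)^d * c` when the summand is bounded by `c` on the set. -/
lemma tsum_indicator_le_of_ball (A : Set (Fin d → ℤ)) (R : ℝ) (hR : (1:ℝ)/2 ≤ R)
    (hA : ∀ w ∈ A, nrm w ≤ R) (f : (Fin d → ℤ) → ℝ≥0∞) (c : ℝ≥0∞)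
    (hf : ∀ w ∈ A, f w ≤ c) :
    ∑' w, A.indicator f w ≤ ENNReal.ofReal ((8*R)^d) * c := by
  classical
  set N : ℕ := ⌈R⌉₊ with hN
  have hzero : ∀ w ∉ box d N, A.indicator f w = 0 := by
    intro w hw
    rw [Set.indicator_apply_eq_zero]
    intro hwA
    exact absurd (mem_box ((hA w hwA).trans (Nat.le_ceil R))) hw
  rw [tsum_eq_sum hzero]
  have hle : ∑ w ∈ box d N, A.indicator f w ≤ ∑ _w ∈ box d N, c := by
    refine Finset.sum_le_sum fun w _ => ?_
    by_cases hwA : w ∈ A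
    · rw [Set.indicator_of_mem hwA]; exact hf w hwA
    · rw [Set.indicator_of_notMem hwA]; exact zero_le
  refine hle.trans ?_
  rw [Finset.sum_const, nsmul_eq_mul]
  refine mul_le_mul_left ?_ c
  rw [card_box]
  have hcard : ((2*N+1 : ℕ) : ℝ) ≤ 8*R := by
    push_cast
    have h1 : (N:ℝ) ≤ R + 1 := le_of_lt (Nat.ceil_lt_add_one (by linarith))
    nlinarith
  calc ((((2*N+1)^d : ℕ)) : ℝ≥0∞) = ENNReal.ofReal (((2*N+1:ℕ):ℝ))^d := by
        rw [ENNReal.ofReal_natCast]; push_cast; ring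
  _ ≤ ENNReal.ofReal (8*R)^d := by
        exact pow_le_pow_left' (ENNReal.ofReal_le_ofReal hcard) d
  _ = ENNReal.ofReal ((8*R)^d) := by
        rw [← ENNReal.ofReal_pow (by linarith)]


lemma two_pow_rpow (k : ℕ) (e : ℝ) : (((2:ℝ)^k) : ℝ) ^ e = ((2:ℝ) ^ e) ^ k := by
  rw [← Real.rpow_natCast (2:ℝ) k, ← Real.rpow_mul (by norm_num), mul_comm,
    Real.rpow_mul (by norm_num), Real.rpow_natCast]

/-- dyadic shell -/
def shell (d k : ℕ) : Set (Fin d → ℤ) := {w | (2:ℝ)^k ≤ nrm w ∧ nrm w < (2:ℝ)^(k+1)}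

lemma exists_shell {w : Fin d → ℤ} (h1 : 1 ≤ nrm w) : ∃ k : ℕ, w ∈ shell d k := by
  set L := Real.logb 2 (nrm w) with hL
  have hw0 : 0 < nrm w := lt_of_lt_of_le one_pos h1
  have hL0 : 0 ≤ L := Real.logb_nonneg one_lt_two h1
  refine ⟨⌊L⌋₊, ?_, ?_⟩
  · calc (2:ℝ)^(⌊L⌋₊) = (2:ℝ) ^ ((⌊L⌋₊ : ℝ)) := (Real.rpow_natCast 2 _).symm
    _ ≤ (2:ℝ) ^ L := Real.rpow_le_rpow_of_exponent_le one_le_two (Nat.floor_le hL0)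
    _ = nrm w := Real.rpow_logb two_pos (by norm_num) hw0
  · calc nrm w = (2:ℝ) ^ L := (Real.rpow_logb two_pos (by norm_num) hw0).symm
    _ < (2:ℝ) ^ ((⌊L⌋₊ + 1 : ℕ) : ℝ) := by
        refine Real.rpow_lt_rpow_of_exponent_lt one_lt_two ?_
        push_cast
        exact Nat.lt_floor_add_one L
    _ = (2:ℝ) ^ (⌊L⌋₊ + 1) := Real.rpow_natCast 2 _

lemma shell_term_le (s : ℝ) (hs : 0 ≤ s) (k : ℕ) (B : Set (Fin d → ℤ))
    (hB : B ⊆ shell d k) :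
    ∑' w, B.indicator (fun w => ENNReal.ofReal (nrm w ^ (-s))) w ≤
      ENNReal.ofReal ((16:ℝ)^d * ((2:ℝ) ^ ((d:ℝ) - s)) ^ k) := by
  have h2k : (0:ℝ) < (2:ℝ)^k := by positivity
  have hbound := tsum_indicator_le_of_ball B ((2:ℝ)^(k+1))
    (by nlinarith [one_le_pow₀ (M₀ := ℝ) (a := 2) (n := k+1) one_le_two])
    (fun w hw => le_of_lt (hB hw).2)
    (fun w => ENNReal.ofReal (nrm w ^ (-s)))
    (ENNReal.ofReal (((2:ℝ)^k) ^ (-s)))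
    (fun w hw => ENNReal.ofReal_le_ofReal
      (Real.rpow_le_rpow_of_nonpos h2k (hB hw).1 (neg_nonpos.mpr hs)))
  refine hbound.trans ?_
  rw [← ENNReal.ofReal_mul (by positivity)]
  refine ENNReal.ofReal_le_ofReal (le_of_eq ?_)
  have e1 : (8 * (2:ℝ)^(k+1)) = 16 * (2:ℝ)^k := by ring
  rw [e1, mul_pow]
  have e2 : (((2:ℝ)^k) : ℝ)^d * ((2:ℝ)^k) ^ (-s) = ((2:ℝ) ^ ((d:ℝ) - s)) ^ k := by
    rw [← Real.rpow_natCast ((2:ℝ)^k) d, ← Real.rpow_add h2k, ← two_pow_rpow,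
      sub_eq_add_neg]
  rw [mul_assoc, e2]

lemma near_bound (s : ℝ) (hs0 : 0 < s) (hsd : s < (d:ℝ)) :
    ∃ C : ℝ, 0 < C ∧ ∀ R : ℝ, 1 ≤ R →
      ∑' w, (Set.indicator {w : Fin d → ℤ | w ≠ 0 ∧ nrm w ≤ R}
          (fun w => ENNReal.ofReal (nrm w ^ (-s)))) w
        ≤ ENNReal.ofReal (C * R ^ ((d:ℝ) - s)) := by
  classical
  set ρ : ℝ := (2:ℝ) ^ ((d:ℝ) - s) with hρ
  have hρ1 : 1 < ρ := by
    have : (2:ℝ) ^ (0:ℝ) < (2:ℝ) ^ ((d:ℝ) - s) :=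
      Real.rpow_lt_rpow_of_exponent_lt one_lt_two (by linarith)
    simpa [hρ] using this
  refine ⟨(16:ℝ)^d * (ρ / (ρ - 1)),
    mul_pos (by positivity) (div_pos (by linarith) (by linarith)), ?_⟩
  intro R hR
  set K := ⌊Real.logb 2 R⌋₊ with hK
  set f : (Fin d → ℤ) → ℝ≥0∞ := fun w => ENNReal.ofReal (nrm w ^ (-s)) with hf
  have hcov : ∀ w, (Set.indicator {w : Fin d → ℤ | w ≠ 0 ∧ nrm w ≤ R} f) w ≤
      ∑ k ∈ Finset.range (K+1), (shell d k).indicator f w := by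
    intro w
    by_cases hw : w ∈ {w : Fin d → ℤ | w ≠ 0 ∧ nrm w ≤ R}
    · obtain ⟨hw0, hwR⟩ := hw
      obtain ⟨k, hk⟩ := exists_shell (one_le_nrm hw0)
      have hkK : k ∈ Finset.range (K+1) := by
        refine Finset.mem_range.mpr (Nat.lt_succ_of_le (Nat.le_floor ?_))
        rw [Real.le_logb_iff_rpow_le one_lt_two (by linarith)]
        calc (2:ℝ)^((k:ℝ)) = (2:ℝ)^k := Real.rpow_natCast 2 k
        _ ≤ nrm w := hk.1
        _ ≤ R := hwR
      calc (Set.indicator {w : Fin d → ℤ | w ≠ 0 ∧ nrm w ≤ R} f) w ≤ f w :=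
            Set.indicator_le_self _ _ w
      _ = (shell d k).indicator f w := (Set.indicator_of_mem hk _).symm
      _ ≤ ∑ k ∈ Finset.range (K+1), (shell d k).indicator f w :=
            Finset.single_le_sum (f := fun k => (shell d k).indicator f w)
              (fun i _ => zero_le) hkK
    · rw [Set.indicator_of_notMem hw]; exact zero_le
  calc ∑' w, (Set.indicator {w : Fin d → ℤ | w ≠ 0 ∧ nrm w ≤ R} f) w
      ≤ ∑' w, ∑ k ∈ Finset.range (K+1), (shell d k).indicator f w :=
        ENNReal.tsum_le_tsum hcov
  _ = ∑ k ∈ Finset.range (K+1), ∑' w, (shell d k).indicator f w :=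
        Summable.tsum_finsetSum (fun i _ => ENNReal.summable)
  _ ≤ ∑ k ∈ Finset.range (K+1), ENNReal.ofReal ((16:ℝ)^d * ρ ^ k) :=
        Finset.sum_le_sum (fun k _ => shell_term_le s hs0.le k _ (le_refl _))
  _ = ENNReal.ofReal (∑ k ∈ Finset.range (K+1), (16:ℝ)^d * ρ ^ k) :=
        (ENNReal.ofReal_sum_of_nonneg (fun k _ => by positivity)).symm
  _ ≤ ENNReal.ofReal ((16:ℝ)^d * (ρ / (ρ - 1)) * R ^ ((d:ℝ) - s)) := by
        refine ENNReal.ofReal_le_ofReal ?_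
        rw [← Finset.mul_sum, geom_sum_eq (ne_of_gt hρ1) (K+1)]
        have hρK : ρ ^ K ≤ R ^ ((d:ℝ) - s) := by
          have h2K : (2:ℝ)^K ≤ R := by
            calc (2:ℝ)^K = (2:ℝ)^((K:ℝ)) := (Real.rpow_natCast 2 K).symm
            _ ≤ (2:ℝ) ^ Real.logb 2 R :=
                Real.rpow_le_rpow_of_exponent_le one_le_two
                  (Nat.floor_le (Real.logb_nonneg one_lt_two hR))
            _ = R := Real.rpow_logb two_pos (by norm_num) (by linarith)
          calc ρ ^ K = (((2:ℝ)^K)) ^ ((d:ℝ) - s) := (two_pow_rpow K _).symm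
          _ ≤ R ^ ((d:ℝ) - s) := Real.rpow_le_rpow (by positivity) h2K (by linarith)
        have hnum : ρ^(K+1) - 1 ≤ ρ * R ^ ((d:ℝ) - s) := by
          rw [pow_succ]
          nlinarith [hρK, pow_pos (lt_trans one_pos hρ1) K]
        calc (16:ℝ)^d * ((ρ^(K+1) - 1)/(ρ - 1))
            ≤ (16:ℝ)^d * ((ρ * R ^ ((d:ℝ) - s))/(ρ - 1)) := by gcongr <;> linarith
        _ = (16:ℝ)^d * (ρ / (ρ - 1)) * R ^ ((d:ℝ) - s) := by ring

lemma tail_bound (t : ℝ) (ht : (d:ℝ) < t) :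
    ∃ C : ℝ, 0 < C ∧ ∀ R : ℝ, 1/2 ≤ R →
      ∑' w, (Set.indicator {w : Fin d → ℤ | R < nrm w}
          (fun w => ENNReal.ofReal (nrm w ^ (-t)))) w
        ≤ ENNReal.ofReal (C * R ^ ((d:ℝ) - t)) := by
  classical
  set ρ : ℝ := (2:ℝ) ^ ((d:ℝ) - t) with hρ
  have hρ0 : 0 < ρ := Real.rpow_pos_of_pos two_pos _
  have hρ1 : ρ < 1 := by
    have : (2:ℝ) ^ ((d:ℝ) - t) < (2:ℝ) ^ (0:ℝ) :=
      Real.rpow_lt_rpow_of_exponent_lt one_lt_two (by linarith)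
    simpa [hρ] using this
  have h1ρ : 0 < 1 - ρ := by linarith
  refine ⟨(16:ℝ)^d * (2:ℝ) ^ (t - (d:ℝ)) * (1 - ρ)⁻¹,
    by positivity, ?_⟩
  intro R hR
  have hR0 : (0:ℝ) < R := by linarith
  set K := ⌊Real.logb 2 R⌋₊ with hK
  set f : (Fin d → ℤ) → ℝ≥0∞ := fun w => ENNReal.ofReal (nrm w ^ (-t)) with hf
  set T : Set (Fin d → ℤ) := {w | R < nrm w} with hT
  set g : ℕ → ℝ≥0∞ := fun k => ∑' w, (shell d k ∩ T).indicator f w with hg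
  have hcov : ∀ w, T.indicator f w ≤ ∑' k : ℕ, (shell d k ∩ T).indicator f w := by
    intro w
    by_cases hw : w ∈ T
    · have hwR : R < nrm w := hw
      have hw0 : w ≠ 0 := by
        rintro rfl
        have h0 : nrm (0 : Fin d → ℤ) = 0 := by simp [nrm]
        rw [h0] at hwR
        linarith
      obtain ⟨k, hk⟩ := exists_shell (one_le_nrm hw0)
      calc T.indicator f w = (shell d k ∩ T).indicator f w := by
            rw [Set.indicator_of_mem hw, Set.indicator_of_mem (Set.mem_inter hk hw)]
      _ ≤ ∑' k : ℕ, (shell d k ∩ T).indicator f w := ENNReal.le_tsum k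
    · rw [Set.indicator_of_notMem hw]; exact zero_le
  have hgle : ∀ k, g k ≤ ENNReal.ofReal ((16:ℝ)^d * ρ ^ k) :=
    fun k => shell_term_le t (le_trans (Nat.cast_nonneg d) ht.le) k _ Set.inter_subset_left
  have hgzero : ∀ k, k < K → g k = 0 := by
    intro k hkK
    have hlogb0 : 0 ≤ Real.logb 2 R := by
      by_contra hcon
      push_neg at hcon
      have : K = 0 := by
        rw [hK, Nat.floor_eq_zero]
        linarith
      omega
    have hkk1 : ((k:ℝ) + 1) ≤ Real.logb 2 R := by
      have h2 : ((k+1:ℕ):ℝ) ≤ (K:ℝ) := by exact_mod_cast hkK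
      have h3 : (K:ℝ) ≤ Real.logb 2 R := Nat.floor_le hlogb0
      push_cast at h2
      linarith
    have hempty : shell d k ∩ T = ∅ := by
      rw [Set.eq_empty_iff_forall_notMem]
      rintro w ⟨hks, hwT⟩
      have h1 : nrm w < (2:ℝ)^(k+1) := hks.2
      have h2 : (2:ℝ)^(k+1) ≤ R := by
        calc (2:ℝ)^(k+1) = (2:ℝ)^(((k+1 : ℕ)) : ℝ) := (Real.rpow_natCast 2 _).symm
        _ ≤ R := by
            rw [← Real.le_logb_iff_rpow_le one_lt_two hR0]
            push_cast
            exact hkk1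
      have h3 : R < nrm w := hwT
      linarith
    simp [hg, hempty]
  have hρK : ρ^K ≤ (2:ℝ)^(t-(d:ℝ)) * R^((d:ℝ)-t) := by
    have h2K : R/2 ≤ (2:ℝ)^K := by
      calc R/2 = (2:ℝ)^(Real.logb 2 R) / 2 := by
            rw [Real.rpow_logb two_pos (by norm_num) hR0]
      _ = (2:ℝ)^(Real.logb 2 R - 1) := by
            rw [Real.rpow_sub two_pos, Real.rpow_one]
      _ ≤ (2:ℝ)^((K:ℝ)) :=
            Real.rpow_le_rpow_of_exponent_le one_le_two (Nat.sub_one_lt_floor _).le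
      _ = (2:ℝ)^K := Real.rpow_natCast 2 K
    calc ρ^K = ((2:ℝ)^K) ^ ((d:ℝ) - t) := (two_pow_rpow K _).symm
    _ ≤ (R/2) ^ ((d:ℝ) - t) :=
        Real.rpow_le_rpow_of_nonpos (by linarith) h2K (by linarith)
    _ = (2:ℝ)^(t-(d:ℝ)) * R^((d:ℝ)-t) := by
        rw [Real.div_rpow hR0.le (by norm_num : (0:ℝ) ≤ 2)]
        rw [div_eq_mul_inv, ← Real.rpow_neg (by norm_num : (0:ℝ) ≤ 2), neg_sub]
        ring
  calc ∑' w, T.indicator f w ≤ ∑' w, ∑' k : ℕ, (shell d k ∩ T).indicator f w :=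
        ENNReal.tsum_le_tsum hcov
  _ = ∑' k : ℕ, g k := ENNReal.tsum_comm
  _ = ∑' j : ℕ, g (K + j) := by
      refine (Function.Injective.tsum_eq (g := fun j : ℕ => K + j) ?_ ?_).symm
      · exact fun a b hab => by simpa using hab
      · intro k hk
        rcases le_or_gt K k with h | h
        · exact ⟨k - K, by simpa using Nat.add_sub_cancel' h⟩
        · exact absurd (hgzero k h) hk
  _ ≤ ∑' j : ℕ, ENNReal.ofReal (((16:ℝ)^d * ρ^K) * ρ^j) := by
      refine ENNReal.tsum_le_tsum fun j => ?_
      refine (hgle (K+j)).trans (ENNReal.ofReal_le_ofReal (le_of_eq ?_))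
      rw [pow_add]
      ring
  _ = ENNReal.ofReal ((16:ℝ)^d * ρ^K) * ∑' j : ℕ, ENNReal.ofReal ρ ^ j := by
      rw [← ENNReal.tsum_mul_left]
      congr 1
      funext j
      rw [ENNReal.ofReal_mul (by positivity), ENNReal.ofReal_pow hρ0.le]
  _ = ENNReal.ofReal ((16:ℝ)^d * ρ^K) * ENNReal.ofReal ((1-ρ)⁻¹) := by
      rw [ENNReal.tsum_geometric, ENNReal.ofReal_inv_of_pos h1ρ,
        ENNReal.ofReal_sub 1 hρ0.le, ENNReal.ofReal_one]
  _ ≤ ENNReal.ofReal ((16:ℝ)^d * (2:ℝ)^(t-(d:ℝ)) * (1-ρ)⁻¹ * R^((d:ℝ)-t)) := by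
      rw [← ENNReal.ofReal_mul (by positivity)]
      refine ENNReal.ofReal_le_ofReal ?_
      have hpos : (0:ℝ) ≤ (16:ℝ)^d * (1-ρ)⁻¹ :=
        mul_nonneg (by positivity) (inv_nonneg.mpr h1ρ.le)
      calc (16:ℝ)^d * ρ^K * (1-ρ)⁻¹ = ((16:ℝ)^d * (1-ρ)⁻¹) * ρ^K := by ring
      _ ≤ ((16:ℝ)^d * (1-ρ)⁻¹) * ((2:ℝ)^(t-(d:ℝ)) * R^((d:ℝ)-t)) :=
          mul_le_mul_of_nonneg_left hρK hpos
      _ = (16:ℝ)^d * (2:ℝ)^(t-(d:ℝ)) * (1-ρ)⁻¹ * R^((d:ℝ)-t) := by ring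

lemma tsum_sub_left (y : Fin d → ℤ) (h : (Fin d → ℤ) → ℝ≥0∞) :
    ∑' z, h (y - z) = ∑' w, h w := by
  simpa using Equiv.tsum_eq (Equiv.subLeft y) h

lemma indicator_cover_le {α : Type*} {S A B : Set α} (h : S ⊆ A ∪ B)
    (f : α → ℝ≥0∞) (z : α) :
    S.indicator f z ≤ A.indicator f z + B.indicator f z := by
  by_cases hz : z ∈ S
  · rw [Set.indicator_of_mem hz]
    rcases h hz with hA | hB
    · rw [Set.indicator_of_mem hA]; exact le_self_add
    · rw [Set.indicator_of_mem hB]; exact le_add_self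
  · rw [Set.indicator_of_notMem hz]; exact zero_le

lemma indicator_mono_set {α : Type*} {A B : Set α} (h : A ⊆ B) (f : α → ℝ≥0∞) (z : α) :
    A.indicator f z ≤ B.indicator f z := by
  by_cases hz : z ∈ A
  · rw [Set.indicator_of_mem hz, Set.indicator_of_mem (h hz)]
  · rw [Set.indicator_of_notMem hz]; exact zero_le

lemma two_factor (hd : 5 ≤ d) :
    ∃ C : ℝ, 0 < C ∧ ∀ x : Fin d → ℤ, x ≠ 0 →
      ∑' z, (Set.indicator {z : Fin d → ℤ | z ≠ 0 ∧ z ≠ x}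
          (fun z => ENNReal.ofReal (nrm z ^ ((2:ℝ) - d) * nrm (x - z) ^ ((2:ℝ) - d)))) z
        ≤ ENNReal.ofReal (C * nrm x ^ ((4:ℝ) - d)) := by
  classical
  have hd5 : (5:ℝ) ≤ (d:ℝ) := by exact_mod_cast hd
  obtain ⟨C₁, hC₁, hnear⟩ := near_bound (d := d) ((d:ℝ) - 2) (by linarith) (by linarith)
  obtain ⟨C₂, hC₂, htail⟩ := tail_bound (d := d) (2*(d:ℝ) - 4) (by linarith)
  set e : ℝ := (2:ℝ) - d with he
  set t : ℝ := 2*(d:ℝ) - 4 with htdef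
  refine ⟨2*(C₁ * (2:ℝ)^((d:ℝ)-2)) + 2*(C₂ * (2:ℝ)^((d:ℝ)-4)), by positivity, ?_⟩
  -- a preliminary bound for the "near 0" half, for arbitrary nonzero x'
  have T1bound : ∀ x' : Fin d → ℤ, x' ≠ 0 →
      ∑' z, (Set.indicator {z : Fin d → ℤ | z ≠ 0 ∧ nrm z ≤ nrm x' / 2}
          (fun z => ENNReal.ofReal (nrm z ^ e * nrm (x' - z) ^ e))) z
        ≤ ENNReal.ofReal (C₁ * (2:ℝ)^((d:ℝ)-2) * nrm x' ^ ((4:ℝ) - d)) := by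
    intro x' hx'
    have ha1 : 1 ≤ nrm x' := one_le_nrm hx'
    have ha0 : 0 < nrm x' := by linarith
    set a := nrm x' with hadef
    have hpt : ∀ z, (Set.indicator {z : Fin d → ℤ | z ≠ 0 ∧ nrm z ≤ a / 2}
        (fun z => ENNReal.ofReal (nrm z ^ e * nrm (x' - z) ^ e))) z
        ≤ ENNReal.ofReal ((a/2) ^ e) *
          (Set.indicator {z : Fin d → ℤ | z ≠ 0 ∧ nrm z ≤ a}
            (fun z => ENNReal.ofReal (nrm z ^ (-(((d:ℝ) - 2))))) ) z := by
      intro z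
      by_cases hz : z ∈ {z : Fin d → ℤ | z ≠ 0 ∧ nrm z ≤ a / 2}
      · have hz0 := hz.1
        have hzR := hz.2
        have hz2 : z ∈ {z : Fin d → ℤ | z ≠ 0 ∧ nrm z ≤ a} :=
          ⟨hz0, hzR.trans (by linarith)⟩
        rw [Set.indicator_of_mem hz, Set.indicator_of_mem hz2]
        rw [← ENNReal.ofReal_mul (by positivity)]
        refine ENNReal.ofReal_le_ofReal ?_
        have hxz : a/2 ≤ nrm (x' - z) := by
          have := nrm_sub_nrm_le x' z
          linarith
        have h1 : nrm (x' - z) ^ e ≤ (a/2) ^ e :=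
          Real.rpow_le_rpow_of_nonpos (by linarith) hxz (by rw [he]; linarith)
        have h2 : nrm z ^ e = nrm z ^ (-((d:ℝ) - 2)) := by
          congr 1
          rw [he]; ring
        calc nrm z ^ e * nrm (x' - z) ^ e ≤ nrm z ^ e * (a/2) ^ e := by
              refine mul_le_mul_of_nonneg_left h1 ?_
              exact Real.rpow_nonneg (nrm_nonneg z) e
        _ = (a/2) ^ e * nrm z ^ (-((d:ℝ) - 2)) := by rw [h2]; ring
      · rw [Set.indicator_of_notMem hz]; exact zero_le
    calc ∑' z, (Set.indicator {z : Fin d → ℤ | z ≠ 0 ∧ nrm z ≤ a / 2}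
          (fun z => ENNReal.ofReal (nrm z ^ e * nrm (x' - z) ^ e))) z
        ≤ ∑' z, (ENNReal.ofReal ((a/2) ^ e) *
          (Set.indicator {z : Fin d → ℤ | z ≠ 0 ∧ nrm z ≤ a}
            (fun z => ENNReal.ofReal (nrm z ^ (-(((d:ℝ) - 2))))) ) z) :=
          ENNReal.tsum_le_tsum hpt
    _ = ENNReal.ofReal ((a/2) ^ e) * ∑' z, (Set.indicator {z : Fin d → ℤ | z ≠ 0 ∧ nrm z ≤ a}
            (fun z => ENNReal.ofReal (nrm z ^ (-(((d:ℝ) - 2))))) ) z := ENNReal.tsum_mul_left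
    _ ≤ ENNReal.ofReal ((a/2) ^ e) * ENNReal.ofReal (C₁ * a ^ ((d:ℝ) - ((d:ℝ)-2))) := by
          exact mul_le_mul_right (hnear a ha1) _
    _ ≤ ENNReal.ofReal (C₁ * (2:ℝ)^((d:ℝ)-2) * a ^ ((4:ℝ) - d)) := by
          rw [← ENNReal.ofReal_mul (by positivity)]
          refine ENNReal.ofReal_le_ofReal (le_of_eq ?_)
          have h1 : (a/2) ^ e = a ^ e * (2:ℝ)^((d:ℝ)-2) := by
            rw [Real.div_rpow ha0.le (by norm_num), div_eq_mul_inv,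
              ← Real.rpow_neg (by norm_num : (0:ℝ) ≤ 2)]
            congr 2
            rw [he]; ring
          have h2 : (d:ℝ) - ((d:ℝ)-2) = (2:ℝ) := by ring
          rw [h1, h2]
          rw [show a ^ e * (2:ℝ)^((d:ℝ)-2) * (C₁ * a ^ (2:ℝ)) =
            C₁ * (2:ℝ)^((d:ℝ)-2) * (a ^ e * a ^ (2:ℝ)) by ring]
          rw [← Real.rpow_add ha0]
          congr 2
          rw [he]; ring
  -- preliminary bound for the "far" half
  have T3bound : ∀ x' : Fin d → ℤ, x' ≠ 0 →
      ∑' z, (Set.indicator {z : Fin d → ℤ | nrm x' / 2 < nrm z ∧ nrm z ≤ nrm (x' - z)}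
          (fun z => ENNReal.ofReal (nrm z ^ e * nrm (x' - z) ^ e))) z
        ≤ ENNReal.ofReal (C₂ * (2:ℝ)^((d:ℝ)-4) * nrm x' ^ ((4:ℝ) - d)) := by
    intro x' hx'
    have ha1 : 1 ≤ nrm x' := one_le_nrm hx'
    have ha0 : 0 < nrm x' := by linarith
    set a := nrm x' with hadef
    have hpt : ∀ z, (Set.indicator {z : Fin d → ℤ | a / 2 < nrm z ∧ nrm z ≤ nrm (x' - z)}
        (fun z => ENNReal.ofReal (nrm z ^ e * nrm (x' - z) ^ e))) z
        ≤ (Set.indicator {z : Fin d → ℤ | a / 2 < nrm z}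
            (fun z => ENNReal.ofReal (nrm z ^ (-t)))) z := by
      intro z
      by_cases hz : z ∈ {z : Fin d → ℤ | a / 2 < nrm z ∧ nrm z ≤ nrm (x' - z)}
      · have hz1 := hz.1
        have hz2 := hz.2
        have hz0 : (0:ℝ) < nrm z := lt_trans (by linarith) hz1
        rw [Set.indicator_of_mem hz,
          Set.indicator_of_mem (show z ∈ {z : Fin d → ℤ | a / 2 < nrm z} from hz1)]
        refine ENNReal.ofReal_le_ofReal ?_
        have h1 : nrm (x' - z) ^ e ≤ nrm z ^ e :=
          Real.rpow_le_rpow_of_nonpos hz0 hz2 (by rw [he]; linarith)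
        calc nrm z ^ e * nrm (x' - z) ^ e ≤ nrm z ^ e * nrm z ^ e :=
              mul_le_mul_of_nonneg_left h1 (Real.rpow_nonneg (nrm_nonneg z) e)
        _ = nrm z ^ (-t) := by
            rw [← Real.rpow_add hz0]
            congr 1
            rw [he, htdef]; ring
      · rw [Set.indicator_of_notMem hz]; exact zero_le
    calc ∑' z, (Set.indicator {z : Fin d → ℤ | a / 2 < nrm z ∧ nrm z ≤ nrm (x' - z)}
          (fun z => ENNReal.ofReal (nrm z ^ e * nrm (x' - z) ^ e))) z
        ≤ ∑' z, (Set.indicator {z : Fin d → ℤ | a / 2 < nrm z}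
            (fun z => ENNReal.ofReal (nrm z ^ (-t)))) z := ENNReal.tsum_le_tsum hpt
    _ ≤ ENNReal.ofReal (C₂ * (a/2) ^ ((d:ℝ) - t)) := htail (a/2) (by linarith)
    _ ≤ ENNReal.ofReal (C₂ * (2:ℝ)^((d:ℝ)-4) * a ^ ((4:ℝ) - d)) := by
          refine ENNReal.ofReal_le_ofReal (le_of_eq ?_)
          have h1 : (a/2) ^ ((d:ℝ) - t) = a ^ ((d:ℝ) - t) * (2:ℝ)^(t - (d:ℝ)) := by
            rw [Real.div_rpow ha0.le (by norm_num), div_eq_mul_inv,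
              ← Real.rpow_neg (by norm_num : (0:ℝ) ≤ 2), neg_sub]
          have h2 : (d:ℝ) - t = (4:ℝ) - d := by rw [htdef]; ring
          have h3 : t - (d:ℝ) = (d:ℝ) - 4 := by rw [htdef]; ring
          rw [h1, h2, h3]
          ring
  intro x hx
  have ha1 : 1 ≤ nrm x := one_le_nrm hx
  have ha0 : 0 < nrm x := by linarith
  set a := nrm x with hadef
  set f : (Fin d → ℤ) → ℝ≥0∞ := fun z => ENNReal.ofReal (nrm z ^ e * nrm (x - z) ^ e)
    with hfdef
  set A1 : Set (Fin d → ℤ) := {z | z ≠ 0 ∧ nrm z ≤ a / 2} with hA1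
  set A2 : Set (Fin d → ℤ) := {z | z ≠ x ∧ nrm (x - z) ≤ a / 2} with hA2
  set A3 : Set (Fin d → ℤ) := {z | a / 2 < nrm z ∧ nrm z ≤ nrm (x - z)} with hA3
  set A4 : Set (Fin d → ℤ) := {z | a / 2 < nrm (x - z) ∧ nrm (x - z) < nrm z} with hA4
  have hcov : {z : Fin d → ℤ | z ≠ 0 ∧ z ≠ x} ⊆ A1 ∪ (A2 ∪ (A3 ∪ A4)) := by
    rintro z ⟨hz0, hzx⟩
    by_cases h1 : nrm z ≤ a / 2
    · exact Or.inl ⟨hz0, h1⟩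
    by_cases h2 : nrm (x - z) ≤ a / 2
    · exact Or.inr (Or.inl ⟨hzx, h2⟩)
    push_neg at h1 h2
    rcases le_or_gt (nrm z) (nrm (x - z)) with h3 | h3
    · exact Or.inr (Or.inr (Or.inl ⟨h1, h3⟩))
    · exact Or.inr (Or.inr (Or.inr ⟨h2, h3⟩))
  have hsplit : ∀ z, (Set.indicator {z : Fin d → ℤ | z ≠ 0 ∧ z ≠ x} f) z ≤
      A1.indicator f z + (A2.indicator f z + (A3.indicator f z + A4.indicator f z)) := by
    intro z
    refine (indicator_cover_le hcov f z).trans ?_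
    refine add_le_add_right ?_ _ |>.trans (add_le_add_right (le_refl _) _)
    refine (indicator_cover_le (Set.Subset.refl _) f z).trans ?_
    exact add_le_add_right ((indicator_cover_le (Set.Subset.refl _) f z)) _
  -- change of variables for A2
  have hA2eq : ∀ z, A2.indicator f z =
      (Set.indicator {w : Fin d → ℤ | w ≠ 0 ∧ nrm w ≤ a / 2}
        (fun w => ENNReal.ofReal (nrm w ^ e * nrm (x - w) ^ e))) (x - z) := by
    intro z
    have hmem : z ∈ A2 ↔ (x - z) ∈ {w : Fin d → ℤ | w ≠ 0 ∧ nrm w ≤ a / 2} := by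
      constructor
      · rintro ⟨hzx, hle⟩; exact ⟨sub_ne_zero.mpr (Ne.symm hzx), hle⟩
      · rintro ⟨hw0, hle⟩; exact ⟨Ne.symm (sub_ne_zero.mp hw0), hle⟩
    by_cases h : z ∈ A2
    · rw [Set.indicator_of_mem h, Set.indicator_of_mem (hmem.mp h)]
      rw [hfdef]
      simp only []
      rw [_root_.sub_sub_cancel, mul_comm]
    · rw [Set.indicator_of_notMem h, Set.indicator_of_notMem (fun hc => h (hmem.mpr hc))]
  -- change of variables for A4
  have hA4eq : ∀ z, A4.indicator f z =
      (Set.indicator {w : Fin d → ℤ | a / 2 < nrm w ∧ nrm w < nrm (x - w)}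
        (fun w => ENNReal.ofReal (nrm w ^ e * nrm (x - w) ^ e))) (x - z) := by
    intro z
    have hmem : z ∈ A4 ↔ (x - z) ∈ {w : Fin d → ℤ | a / 2 < nrm w ∧ nrm w < nrm (x - w)} := by
      constructor
      · rintro ⟨h1, h2⟩
        refine ⟨h1, ?_⟩
        rwa [_root_.sub_sub_cancel]
      · rintro ⟨h1, h2⟩
        rw [_root_.sub_sub_cancel] at h2
        exact ⟨h1, h2⟩
    by_cases h : z ∈ A4
    · rw [Set.indicator_of_mem h, Set.indicator_of_mem (hmem.mp h)]
      rw [hfdef]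
      simp only []
      rw [_root_.sub_sub_cancel, mul_comm]
    · rw [Set.indicator_of_notMem h, Set.indicator_of_notMem (fun hc => h (hmem.mpr hc))]
  have hT2 : ∑' z, A2.indicator f z ≤
      ENNReal.ofReal (C₁ * (2:ℝ)^((d:ℝ)-2) * a ^ ((4:ℝ) - d)) := by
    calc ∑' z, A2.indicator f z
        = ∑' z, (Set.indicator {w : Fin d → ℤ | w ≠ 0 ∧ nrm w ≤ a / 2}
          (fun w => ENNReal.ofReal (nrm w ^ e * nrm (x - w) ^ e))) (x - z) :=
          tsum_congr hA2eq
    _ = ∑' w, (Set.indicator {w : Fin d → ℤ | w ≠ 0 ∧ nrm w ≤ a / 2}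
          (fun w => ENNReal.ofReal (nrm w ^ e * nrm (x - w) ^ e))) w :=
          tsum_sub_left x _
    _ ≤ _ := T1bound x hx
  have hT4 : ∑' z, A4.indicator f z ≤
      ENNReal.ofReal (C₂ * (2:ℝ)^((d:ℝ)-4) * a ^ ((4:ℝ) - d)) := by
    calc ∑' z, A4.indicator f z
        = ∑' z, (Set.indicator {w : Fin d → ℤ | a / 2 < nrm w ∧ nrm w < nrm (x - w)}
          (fun w => ENNReal.ofReal (nrm w ^ e * nrm (x - w) ^ e))) (x - z) :=
          tsum_congr hA4eq
    _ = ∑' w, (Set.indicator {w : Fin d → ℤ | a / 2 < nrm w ∧ nrm w < nrm (x - w)}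
          (fun w => ENNReal.ofReal (nrm w ^ e * nrm (x - w) ^ e))) w :=
          tsum_sub_left x _
    _ ≤ ∑' w, (Set.indicator {w : Fin d → ℤ | a / 2 < nrm w ∧ nrm w ≤ nrm (x - w)}
          (fun w => ENNReal.ofReal (nrm w ^ e * nrm (x - w) ^ e))) w := by
          refine ENNReal.tsum_le_tsum fun w => indicator_mono_set ?_ _ w
          rintro w ⟨h1, h2⟩; exact ⟨h1, h2.le⟩
    _ ≤ _ := T3bound x hx
  calc ∑' z, (Set.indicator {z : Fin d → ℤ | z ≠ 0 ∧ z ≠ x} f) z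
      ≤ ∑' z, (A1.indicator f z + (A2.indicator f z + (A3.indicator f z + A4.indicator f z))) :=
        ENNReal.tsum_le_tsum hsplit
  _ = (∑' z, A1.indicator f z) + ((∑' z, A2.indicator f z) +
        ((∑' z, A3.indicator f z) + (∑' z, A4.indicator f z))) := by
        rw [ENNReal.tsum_add, ENNReal.tsum_add, ENNReal.tsum_add]
  _ ≤ ENNReal.ofReal (C₁ * (2:ℝ)^((d:ℝ)-2) * a ^ ((4:ℝ) - d)) +
      (ENNReal.ofReal (C₁ * (2:ℝ)^((d:ℝ)-2) * a ^ ((4:ℝ) - d)) +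
      (ENNReal.ofReal (C₂ * (2:ℝ)^((d:ℝ)-4) * a ^ ((4:ℝ) - d)) +
       ENNReal.ofReal (C₂ * (2:ℝ)^((d:ℝ)-4) * a ^ ((4:ℝ) - d)))) := by
        refine add_le_add (T1bound x hx) (add_le_add hT2 (add_le_add ?_ hT4))
        exact T3bound x hx
  _ ≤ ENNReal.ofReal ((2*(C₁ * (2:ℝ)^((d:ℝ)-2)) + 2*(C₂ * (2:ℝ)^((d:ℝ)-4))) * a ^ ((4:ℝ) - d)) := by
        rw [← ENNReal.ofReal_add (by positivity) (by positivity),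
          ← ENNReal.ofReal_add (by positivity) (by positivity),
          ← ENNReal.ofReal_add (by positivity) (by positivity)]
        refine ENNReal.ofReal_le_ofReal (le_of_eq ?_)
        ring

lemma half_rpow {a : ℝ} (ha : 0 < a) (e : ℝ) : (a/2)^e = a^e * (2:ℝ)^(-e) := by
  rw [Real.div_rpow ha.le (by norm_num), div_eq_mul_inv,
    ← Real.rpow_neg (by norm_num : (0:ℝ) ≤ 2)]

lemma summable_of_ofReal_ne_top {ι : Type*} {g : ι → ℝ} (hg : ∀ i, 0 ≤ g i)
    (h : (∑' i, ENNReal.ofReal (g i)) ≠ ⊤) : Summable g := by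
  have h2 : Summable (fun i => Real.toNNReal (g i)) :=
    ENNReal.tsum_coe_ne_top_iff_summable.mp h
  exact (NNReal.summable_coe.mpr h2).congr (fun i => Real.coe_toNNReal _ (hg i))

end MCB

set_option maxHeartbeats 1000000 in
/-- For `d ≥ 5` there is `C < ∞` such that for all distinct nonzero
`x, y ∈ ℤ^d`,
`∑_{z ∉ {0,x,y}} |z|^{2-d} |x-z|^{2-d} |y-z|^{4-d}
  ≤ C (|y|^{4-d}|x-y|^{4-d} + |y|^{4-d}|x|^{4-d} + |x-y|^{4-d}|x|^{4-d})`. -/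
theorem mixed_convolution_upper_bound (d : ℕ) (hd : 5 ≤ d) :
    ∃ C : ℝ, 0 < C ∧ ∀ x y : Fin d → ℤ, x ≠ 0 → y ≠ 0 → x ≠ y →
      Summable (fun z : {z : Fin d → ℤ // z ≠ 0 ∧ z ≠ x ∧ z ≠ y} =>
        nrm z.1 ^ ((2 : ℝ) - d) * nrm (x - z.1) ^ ((2 : ℝ) - d) *
          nrm (y - z.1) ^ ((4 : ℝ) - d)) ∧
      (∑' z : {z : Fin d → ℤ // z ≠ 0 ∧ z ≠ x ∧ z ≠ y},
          nrm z.1 ^ ((2 : ℝ) - d) * nrm (x - z.1) ^ ((2 : ℝ) - d) *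
            nrm (y - z.1) ^ ((4 : ℝ) - d))
        ≤ C * (nrm y ^ ((4 : ℝ) - d) * nrm (x - y) ^ ((4 : ℝ) - d) +
               nrm y ^ ((4 : ℝ) - d) * nrm x ^ ((4 : ℝ) - d) +
               nrm (x - y) ^ ((4 : ℝ) - d) * nrm x ^ ((4 : ℝ) - d)) := by
  classical
  open MCB in
  have hd5 : (5:ℝ) ≤ (d:ℝ) := by exact_mod_cast hd
  obtain ⟨C₁, hC₁, hnear⟩ := MCB.near_bound (d := d) ((d:ℝ) - 4) (by linarith) (by linarith)
  obtain ⟨C₂, hC₂, htwo⟩ := MCB.two_factor (d := d) hd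
  set q : ℝ := (2:ℝ)^((d:ℝ)-4) with hqdef
  have hq0 : 0 < q := Real.rpow_pos_of_pos two_pos _
  refine ⟨C₁ * (q * q) + C₂ * q,
    add_pos (mul_pos hC₁ (mul_pos hq0 hq0)) (mul_pos hC₂ hq0), ?_⟩
  intro x y hx hy hxy
  set ax := nrm x with haxdef
  set ay := nrm y with haydef
  set axy := nrm (x - y) with haxydef
  have hax1 : 1 ≤ ax := MCB.one_le_nrm hx
  have hay1 : 1 ≤ ay := MCB.one_le_nrm hy
  have haxy1 : 1 ≤ axy := MCB.one_le_nrm (sub_ne_zero.mpr hxy)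
  set D : ℝ := min ay axy / 2 with hDdef
  have hD0 : (1:ℝ)/2 ≤ D := by
    rw [hDdef]
    have : (1:ℝ) ≤ min ay axy := le_min hay1 haxy1
    linarith
  have hDpos : (0:ℝ) < D := by linarith
  have hDy : D ≤ ay / 2 := by
    rw [hDdef]
    have := min_le_left ay axy
    linarith
  have hDxy : D ≤ axy / 2 := by
    rw [hDdef]
    have := min_le_right ay axy
    linarith
  set e : ℝ := (2:ℝ) - d with hedef
  set e4 : ℝ := (4:ℝ) - d with he4def
  have he4neg : e4 ≤ 0 := by rw [he4def]; linarith
  set F0 : (Fin d → ℤ) → ℝ :=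
    fun z => nrm z ^ e * nrm (x - z) ^ e * nrm (y - z) ^ e4 with hF0def
  set F : (Fin d → ℤ) → ℝ≥0∞ := fun z => ENNReal.ofReal (F0 z) with hFdef
  set S : Set (Fin d → ℤ) := {z | z ≠ 0 ∧ z ≠ x ∧ z ≠ y} with hSdef
  set B1 : Set (Fin d → ℤ) := {z | z ≠ y ∧ nrm (y - z) ≤ D} with hB1def
  set B2 : Set (Fin d → ℤ) := {z | (z ≠ 0 ∧ z ≠ x) ∧ D < nrm (y - z)} with hB2def
  set N : Set (Fin d → ℤ) := {w | w ≠ 0 ∧ nrm w ≤ D} with hNdef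
  set g : (Fin d → ℤ) → ℝ≥0∞ := fun w => ENNReal.ofReal (nrm w ^ (-((d:ℝ) - 4)))
    with hgdef
  -- the near sum bound (with the trivial case D < 1)
  have hNS : ∑' w, N.indicator g w ≤ ENNReal.ofReal (C₁ * D ^ (4:ℝ)) := by
    rcases le_or_gt 1 D with hD1 | hD1
    · have h := hnear D hD1
      have he : (d:ℝ) - ((d:ℝ) - 4) = (4:ℝ) := by ring
      rw [he] at h
      exact h
    · have hzero : ∀ w, N.indicator g w = 0 := by
        intro w
        refine Set.indicator_of_notMem ?_ g
        rintro ⟨hw0, hwD⟩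
        exact absurd (MCB.one_le_nrm hw0) (not_le.mpr (lt_of_le_of_lt hwD hD1))
      rw [tsum_congr hzero, tsum_zero]
      exact zero_le
  set cxy : ℝ := (ay/2) ^ e * (axy/2) ^ e with hcxydef
  have hay2 : (0:ℝ) < ay/2 := by linarith
  have haxy2 : (0:ℝ) < axy/2 := by linarith
  have hcxy0 : 0 ≤ cxy :=
    mul_nonneg (Real.rpow_nonneg hay2.le _) (Real.rpow_nonneg haxy2.le _)
  -- pointwise bound on B1
  have hpt1 : ∀ z, B1.indicator F z ≤ ENNReal.ofReal cxy * N.indicator g (y - z) := by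
    intro z
    by_cases hz : z ∈ B1
    · have hzy : z ≠ y := hz.1
      have hzD : nrm (y - z) ≤ D := hz.2
      have hmemN : (y - z) ∈ N := ⟨sub_ne_zero.mpr (Ne.symm hzy), hzD⟩
      rw [Set.indicator_of_mem hz, Set.indicator_of_mem hmemN]
      rw [hFdef]
      simp only []
      rw [hgdef]
      simp only []
      rw [← ENNReal.ofReal_mul hcxy0]
      refine ENNReal.ofReal_le_ofReal ?_
      have hz1 : ay/2 ≤ nrm z := by
        have h := MCB.nrm_sub_nrm_le y (y - z)
        rw [_root_.sub_sub_cancel] at h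
        linarith
      have hz2 : axy/2 ≤ nrm (x - z) := by
        have h := MCB.nrm_sub_ge x y z
        linarith
      have h1 : nrm z ^ e ≤ (ay/2) ^ e :=
        Real.rpow_le_rpow_of_nonpos hay2 hz1 (by rw [hedef]; linarith)
      have h2 : nrm (x - z) ^ e ≤ (axy/2) ^ e :=
        Real.rpow_le_rpow_of_nonpos haxy2 hz2 (by rw [hedef]; linarith)
      have h3 : nrm (y - z) ^ e4 = nrm (y - z) ^ (-((d:ℝ) - 4)) := by
        congr 1
        rw [he4def]; ring
      rw [hF0def]
      simp only []
      calc nrm z ^ e * nrm (x - z) ^ e * nrm (y - z) ^ e4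
          ≤ ((ay/2) ^ e * (axy/2) ^ e) * nrm (y - z) ^ e4 := by
            refine mul_le_mul_of_nonneg_right ?_ (Real.rpow_nonneg (MCB.nrm_nonneg _) _)
            exact mul_le_mul h1 h2 (Real.rpow_nonneg (MCB.nrm_nonneg _) _)
              (Real.rpow_nonneg hay2.le _)
      _ = cxy * nrm (y - z) ^ (-((d:ℝ) - 4)) := by rw [h3, hcxydef]
    · rw [Set.indicator_of_notMem hz]; exact zero_le
  -- pointwise bound on B2
  have hpt2 : ∀ z, B2.indicator F z ≤ ENNReal.ofReal (D ^ e4) *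
      (Set.indicator {z : Fin d → ℤ | z ≠ 0 ∧ z ≠ x}
        (fun z => ENNReal.ofReal (nrm z ^ e * nrm (x - z) ^ e))) z := by
    intro z
    by_cases hz : z ∈ B2
    · rw [Set.indicator_of_mem hz,
        Set.indicator_of_mem (show z ∈ {z : Fin d → ℤ | z ≠ 0 ∧ z ≠ x} from hz.1)]
      rw [hFdef]
      simp only []
      rw [← ENNReal.ofReal_mul (Real.rpow_nonneg hDpos.le _)]
      refine ENNReal.ofReal_le_ofReal ?_
      have hc : nrm (y - z) ^ e4 ≤ D ^ e4 :=
        Real.rpow_le_rpow_of_nonpos hDpos hz.2.le he4neg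
      rw [hF0def]
      simp only []
      calc nrm z ^ e * nrm (x - z) ^ e * nrm (y - z) ^ e4
          ≤ nrm z ^ e * nrm (x - z) ^ e * D ^ e4 := by
            refine mul_le_mul_of_nonneg_left hc ?_
            exact mul_nonneg (Real.rpow_nonneg (MCB.nrm_nonneg _) _)
              (Real.rpow_nonneg (MCB.nrm_nonneg _) _)
      _ = D ^ e4 * (nrm z ^ e * nrm (x - z) ^ e) := by ring
    · rw [Set.indicator_of_notMem hz]; exact zero_le
  -- cover
  have hcov : ∀ z, S.indicator F z ≤ B1.indicator F z + B2.indicator F z := by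
    refine fun z => MCB.indicator_cover_le ?_ F z
    rintro z ⟨hz0, hzx, hzy⟩
    rcases le_or_gt (nrm (y - z)) D with h | h
    · exact Or.inl ⟨hzy, h⟩
    · exact Or.inr ⟨⟨hz0, hzx⟩, h⟩
  -- sum over B1
  have hsum1 : ∑' z, B1.indicator F z ≤
      ENNReal.ofReal (C₁ * (q * q) * (ay ^ e4 * axy ^ e4)) := by
    calc ∑' z, B1.indicator F z ≤ ∑' z, ENNReal.ofReal cxy * N.indicator g (y - z) :=
          ENNReal.tsum_le_tsum hpt1
    _ = ENNReal.ofReal cxy * ∑' z, N.indicator g (y - z) := ENNReal.tsum_mul_left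
    _ = ENNReal.ofReal cxy * ∑' w, N.indicator g w := by
          rw [MCB.tsum_sub_left y (fun w => N.indicator g w)]
    _ ≤ ENNReal.ofReal cxy * ENNReal.ofReal (C₁ * D ^ (4:ℝ)) := mul_le_mul_right hNS _
    _ = ENNReal.ofReal (cxy * (C₁ * D ^ (4:ℝ))) := (ENNReal.ofReal_mul hcxy0).symm
    _ ≤ ENNReal.ofReal (C₁ * (q * q) * (ay ^ e4 * axy ^ e4)) := by
          refine ENNReal.ofReal_le_ofReal ?_
          have hD4 : D ^ (4:ℝ) = D ^ (2:ℝ) * D ^ (2:ℝ) := by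
            rw [← Real.rpow_add hDpos]; norm_num
          have hD2y : D ^ (2:ℝ) ≤ (ay/2) ^ (2:ℝ) :=
            Real.rpow_le_rpow hDpos.le hDy (by norm_num)
          have hD2xy : D ^ (2:ℝ) ≤ (axy/2) ^ (2:ℝ) :=
            Real.rpow_le_rpow hDpos.le hDxy (by norm_num)
          have hcomb1 : (ay/2) ^ e * (ay/2) ^ (2:ℝ) = (ay/2) ^ e4 := by
            rw [← Real.rpow_add hay2]
            congr 1
            rw [hedef, he4def]; ring
          have hcomb2 : (axy/2) ^ e * (axy/2) ^ (2:ℝ) = (axy/2) ^ e4 := by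
            rw [← Real.rpow_add haxy2]
            congr 1
            rw [hedef, he4def]; ring
          have hhalf1 : (ay/2) ^ e4 = ay ^ e4 * q := by
            rw [MCB.half_rpow (by linarith : (0:ℝ) < ay) e4, hqdef]
            congr 2
            rw [he4def]; ring
          have hhalf2 : (axy/2) ^ e4 = axy ^ e4 * q := by
            rw [MCB.half_rpow (by linarith : (0:ℝ) < axy) e4, hqdef]
            congr 2
            rw [he4def]; ring
          calc cxy * (C₁ * D ^ (4:ℝ))
              = C₁ * ((ay/2) ^ e * (axy/2) ^ e * (D ^ (2:ℝ) * D ^ (2:ℝ))) := by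
                rw [hcxydef, hD4]; ring
          _ ≤ C₁ * ((ay/2) ^ e * (axy/2) ^ e * ((ay/2) ^ (2:ℝ) * (axy/2) ^ (2:ℝ))) := by
                have hnn : 0 ≤ (ay/2) ^ e * (axy/2) ^ e := hcxy0
                have hstep : D ^ (2:ℝ) * D ^ (2:ℝ) ≤ (ay/2) ^ (2:ℝ) * (axy/2) ^ (2:ℝ) :=
                  mul_le_mul hD2y hD2xy (Real.rpow_nonneg hDpos.le _)
                    (Real.rpow_nonneg hay2.le _)
                exact mul_le_mul_of_nonneg_left
                  (mul_le_mul_of_nonneg_left hstep hnn) hC₁.le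
          _ = C₁ * (((ay/2) ^ e * (ay/2) ^ (2:ℝ)) * ((axy/2) ^ e * (axy/2) ^ (2:ℝ))) := by
                ring
          _ = C₁ * (q * q) * (ay ^ e4 * axy ^ e4) := by
                rw [hcomb1, hcomb2, hhalf1, hhalf2]; ring
  -- sum over B2
  have hsum2 : ∑' z, B2.indicator F z ≤
      ENNReal.ofReal (C₂ * q * (ay ^ e4 * ax ^ e4 + axy ^ e4 * ax ^ e4)) := by
    calc ∑' z, B2.indicator F z
        ≤ ∑' z, (ENNReal.ofReal (D ^ e4) *
          (Set.indicator {z : Fin d → ℤ | z ≠ 0 ∧ z ≠ x}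
            (fun z => ENNReal.ofReal (nrm z ^ e * nrm (x - z) ^ e))) z) :=
          ENNReal.tsum_le_tsum hpt2
    _ = ENNReal.ofReal (D ^ e4) * ∑' z, (Set.indicator {z : Fin d → ℤ | z ≠ 0 ∧ z ≠ x}
            (fun z => ENNReal.ofReal (nrm z ^ e * nrm (x - z) ^ e))) z :=
          ENNReal.tsum_mul_left
    _ ≤ ENNReal.ofReal (D ^ e4) * ENNReal.ofReal (C₂ * ax ^ e4) := by
          refine mul_le_mul_right ?_ _
          have h := htwo x hx
          rw [hedef, he4def]
          exact h
    _ = ENNReal.ofReal (D ^ e4 * (C₂ * ax ^ e4)) :=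
          (ENNReal.ofReal_mul (Real.rpow_nonneg hDpos.le _)).symm
    _ ≤ ENNReal.ofReal (C₂ * q * (ay ^ e4 * ax ^ e4 + axy ^ e4 * ax ^ e4)) := by
          refine ENNReal.ofReal_le_ofReal ?_
          have hDval : D ^ e4 = (min ay axy / 2) ^ e4 := by rw [hDdef]
          have haxnn : 0 ≤ ax ^ e4 := Real.rpow_nonneg (by linarith) _
          have haynn : 0 ≤ ay ^ e4 := Real.rpow_nonneg (by linarith) _
          have haxynn : 0 ≤ axy ^ e4 := Real.rpow_nonneg (by linarith) _
          rcases min_choice ay axy with hmin | hmin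
          · have : D ^ e4 = ay ^ e4 * q := by
              rw [hDval, hmin, MCB.half_rpow (by linarith : (0:ℝ) < ay) e4, hqdef]
              congr 2
              rw [he4def]; ring
            rw [this]
            have hrest : 0 ≤ C₂ * q * (axy ^ e4 * ax ^ e4) :=
              mul_nonneg (mul_nonneg hC₂.le hq0.le) (mul_nonneg haxynn haxnn)
            linarith [hrest]
          · have : D ^ e4 = axy ^ e4 * q := by
              rw [hDval, hmin, MCB.half_rpow (by linarith : (0:ℝ) < axy) e4, hqdef]
              congr 2
              rw [he4def]; ring
            rw [this]
            have hrest : 0 ≤ C₂ * q * (ay ^ e4 * ax ^ e4) :=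
              mul_nonneg (mul_nonneg hC₂.le hq0.le) (mul_nonneg haynn haxnn)
            linarith [hrest]
  -- total ENNReal bound
  have hnnT1 : 0 ≤ ay ^ e4 * axy ^ e4 :=
    mul_nonneg (Real.rpow_nonneg (by linarith) _) (Real.rpow_nonneg (by linarith) _)
  have hnnT2 : 0 ≤ ay ^ e4 * ax ^ e4 :=
    mul_nonneg (Real.rpow_nonneg (by linarith) _) (Real.rpow_nonneg (by linarith) _)
  have hnnT3 : 0 ≤ axy ^ e4 * ax ^ e4 :=
    mul_nonneg (Real.rpow_nonneg (by linarith) _) (Real.rpow_nonneg (by linarith) _)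
  have hmain : ∑' z, S.indicator F z ≤
      ENNReal.ofReal ((C₁ * (q * q) + C₂ * q) *
        (ay ^ e4 * axy ^ e4 + ay ^ e4 * ax ^ e4 + axy ^ e4 * ax ^ e4)) := by
    calc ∑' z, S.indicator F z ≤ ∑' z, (B1.indicator F z + B2.indicator F z) :=
          ENNReal.tsum_le_tsum hcov
    _ = (∑' z, B1.indicator F z) + (∑' z, B2.indicator F z) := ENNReal.tsum_add
    _ ≤ ENNReal.ofReal (C₁ * (q * q) * (ay ^ e4 * axy ^ e4)) +
        ENNReal.ofReal (C₂ * q * (ay ^ e4 * ax ^ e4 + axy ^ e4 * ax ^ e4)) :=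
          add_le_add hsum1 hsum2
    _ = ENNReal.ofReal (C₁ * (q * q) * (ay ^ e4 * axy ^ e4) +
          C₂ * q * (ay ^ e4 * ax ^ e4 + axy ^ e4 * ax ^ e4)) :=
          (ENNReal.ofReal_add
            (mul_nonneg (mul_nonneg hC₁.le (mul_nonneg hq0.le hq0.le)) hnnT1)
            (mul_nonneg (mul_nonneg hC₂.le hq0.le) (add_nonneg hnnT2 hnnT3))).symm
    _ ≤ _ := by
          refine ENNReal.ofReal_le_ofReal ?_
          linarith [mul_nonneg (mul_nonneg hC₂.le hq0.le) hnnT1,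
            mul_nonneg (mul_nonneg hC₁.le (mul_nonneg hq0.le hq0.le)) hnnT2,
            mul_nonneg (mul_nonneg hC₁.le (mul_nonneg hq0.le hq0.le)) hnnT3]
  -- back to the real statement
  have hsub : (∑' z : {z : Fin d → ℤ // z ≠ 0 ∧ z ≠ x ∧ z ≠ y}, F z.1) =
      ∑' z, S.indicator F z := tsum_subtype S F
  have hne : (∑' z : {z : Fin d → ℤ // z ≠ 0 ∧ z ≠ x ∧ z ≠ y}, F z.1) ≠ ⊤ := by
    rw [hsub]
    exact ne_top_of_le_ne_top ENNReal.ofReal_ne_top hmain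
  have hgnn : ∀ z : {z : Fin d → ℤ // z ≠ 0 ∧ z ≠ x ∧ z ≠ y}, 0 ≤ F0 z.1 := by
    intro z
    rw [hF0def]
    exact mul_nonneg (mul_nonneg (Real.rpow_nonneg (MCB.nrm_nonneg _) _)
      (Real.rpow_nonneg (MCB.nrm_nonneg _) _)) (Real.rpow_nonneg (MCB.nrm_nonneg _) _)
  have hsummable : Summable (fun z : {z : Fin d → ℤ // z ≠ 0 ∧ z ≠ x ∧ z ≠ y} => F0 z.1) :=
    MCB.summable_of_ofReal_ne_top hgnn hne
  refine ⟨hsummable, ?_⟩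
  have hofReal : ENNReal.ofReal (∑' z : {z : Fin d → ℤ // z ≠ 0 ∧ z ≠ x ∧ z ≠ y}, F0 z.1) =
      ∑' z : {z : Fin d → ℤ // z ≠ 0 ∧ z ≠ x ∧ z ≠ y}, F z.1 :=
    ENNReal.ofReal_tsum_of_nonneg hgnn hsummable
  have hRHSnn : 0 ≤ (C₁ * (q * q) + C₂ * q) *
      (ay ^ e4 * axy ^ e4 + ay ^ e4 * ax ^ e4 + axy ^ e4 * ax ^ e4) := by
    refine mul_nonneg ?_ (by linarith)
    nlinarith [hC₁, hC₂, hq0]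
  have hfinal : (∑' z : {z : Fin d → ℤ // z ≠ 0 ∧ z ≠ x ∧ z ≠ y}, F0 z.1) ≤
      (C₁ * (q * q) + C₂ * q) *
        (ay ^ e4 * axy ^ e4 + ay ^ e4 * ax ^ e4 + axy ^ e4 * ax ^ e4) := by
    rw [← ENNReal.ofReal_le_ofReal_iff hRHSnn, hofReal, hsub]
    exact hmain
  exact hfinal
end

section
/- For d ≥ 5 there exists C < ∞ such that for any pairwise distinct nonzero x, y, z ∈ ℤ^d, the sum Σ_{w ∈ ℤ^d \ {0,x,y,z}} |w|^{−d+2}·|w−x|^{−d+4}·|w−y|^{−d+4}·|w−z|^{−d+2} is bounded above by C·h_c(x,y,z), where h_c(x,y,z) = Σ_τ ⟨τ⟩^{−d+4}, the sum over all 16 spanning trees τ on the vertex set {0,x,y,z} of the product of the (d−4)-th negative powers of the Euclidean edge lengths of τ. -/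
open scoped BigOperators

/-- `h_c(x,y,z) = ∑_τ ⟨τ⟩^{4-d}`, the sum over the 16 spanning trees `τ` of the
complete graph on the vertex set `{0, x, y, z}` of the product of the `(d-4)`-th
negative powers of the Euclidean edge lengths of `τ`.  With edge labels
`1 = {0,x}, 2 = {0,y}, 3 = {0,z}, 4 = {x,y}, 5 = {x,z}, 6 = {y,z}`, the spanning trees
are the sixteen 3-subsets of edges that do not form a triangle. -/
noncomputable def hcFun (d : ℕ) (x y z : Fin d → ℤ) : ℝ :=
  let p1 := nrm x ^ ((4 : ℝ) - d)
  let p2 := nrm y ^ ((4 : ℝ) - d)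
  let p3 := nrm z ^ ((4 : ℝ) - d)
  let p4 := nrm (x - y) ^ ((4 : ℝ) - d)
  let p5 := nrm (x - z) ^ ((4 : ℝ) - d)
  let p6 := nrm (y - z) ^ ((4 : ℝ) - d)
  p1*p2*p3 + p1*p2*p5 + p1*p2*p6 + p1*p3*p4 + p1*p3*p6 + p1*p4*p5 + p1*p4*p6 +
  p1*p5*p6 + p2*p3*p4 + p2*p3*p5 + p2*p4*p5 + p2*p4*p6 + p2*p5*p6 + p3*p4*p5 +
  p3*p4*p6 + p3*p5*p6

namespace QCTB
variable {d : ℕ}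

noncomputable def emb (x : Fin d → ℤ) : EuclideanSpace ℝ (Fin d) := WithLp.toLp 2 (fun i => (x i : ℝ))

lemma nrm_eq_norm (x : Fin d → ℤ) : nrm x = ‖emb x‖ := by
  rw [EuclideanSpace.norm_eq]
  unfold nrm
  congr 1
  refine Finset.sum_congr rfl fun i _ => ?_
  simp [emb, sq_abs]

lemma emb_sub (a b : Fin d → ℤ) : emb (a - b) = emb a - emb b := by
  ext i
  simp [emb]

lemma nrm_nonneg (x : Fin d → ℤ) : 0 ≤ nrm x := Real.sqrt_nonneg _

lemma nrm_sub_comm (a b : Fin d → ℤ) : nrm (a - b) = nrm (b - a) := by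
  rw [nrm_eq_norm, nrm_eq_norm, emb_sub, emb_sub, norm_sub_rev]

lemma nrm_tri (p q w : Fin d → ℤ) : nrm (p - q) ≤ nrm (w - p) + nrm (w - q) := by
  have h : p - q = (w - q) - (w - p) := by abel
  rw [h, nrm_eq_norm, emb_sub, nrm_eq_norm, nrm_eq_norm]
  have := norm_sub_le (emb (w - q)) (emb (w - p))
  linarith [this, norm_sub_rev (emb (w-p)) (emb (w-q))]

lemma coord_le_nrm (x : Fin d → ℤ) (i : Fin d) : |(x i : ℝ)| ≤ nrm x := by
  unfold nrm
  rw [← Real.sqrt_sq_eq_abs]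
  apply Real.sqrt_le_sqrt
  exact Finset.single_le_sum (f := fun j => ((x j : ℝ))^2) (fun j _ => sq_nonneg _) (Finset.mem_univ i)

lemma one_le_nrm {x : Fin d → ℤ} (hx : x ≠ 0) : 1 ≤ nrm x := by
  have : ∃ i, x i ≠ 0 := by
    by_contra h
    push_neg at h
    exact hx (funext h)
  obtain ⟨i, hi⟩ := this
  have h1 : (1 : ℝ) ≤ |(x i : ℝ)| := by
    have : (1 : ℤ) ≤ |x i| := Int.one_le_abs (by exact_mod_cast hi)
    calc (1:ℝ) ≤ (|x i| : ℤ) := by exact_mod_cast this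
    _ = |(x i : ℝ)| := by push_cast; rfl
  exact h1.trans (coord_le_nrm x i)

lemma nrm_pos {x : Fin d → ℤ} (hx : x ≠ 0) : 0 < nrm x :=
  lt_of_lt_of_le one_pos (one_le_nrm hx)

/-- sup-norm as a natural number -/
def sn (x : Fin d → ℤ) : ℕ := Finset.univ.sup fun i => (x i).natAbs

lemma sn_le_iff {x : Fin d → ℤ} {N : ℕ} : sn x ≤ N ↔ ∀ i, (x i).natAbs ≤ N := by
  simp [sn, Finset.sup_le_iff]

lemma sn_le_nrm (hd : 0 < d) (x : Fin d → ℤ) : (sn x : ℝ) ≤ nrm x := by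
  have : Nonempty (Fin d) := ⟨⟨0, hd⟩⟩
  have hne : (Finset.univ : Finset (Fin d)).Nonempty := Finset.univ_nonempty
  obtain ⟨i, _, hi⟩ := Finset.exists_mem_eq_sup Finset.univ hne fun i => (x i).natAbs
  rw [sn, hi]
  calc ((x i).natAbs : ℝ) = |(x i : ℝ)| := by
        rw [Nat.cast_natAbs]; push_cast; rfl
  _ ≤ nrm x := coord_le_nrm x i

lemma abs_coord_le_sn (x : Fin d → ℤ) (i : Fin d) : |(x i : ℝ)| ≤ (sn x : ℝ) := by
  have h : (x i).natAbs ≤ sn x := Finset.le_sup (f := fun j => (x j).natAbs) (Finset.mem_univ i)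
  calc |(x i : ℝ)| = ((x i).natAbs : ℝ) := by rw [Nat.cast_natAbs]; push_cast; rfl
  _ ≤ (sn x : ℝ) := by exact_mod_cast h

lemma nrm_le_sqrt_d_mul_sn (x : Fin d → ℤ) : nrm x ≤ Real.sqrt d * sn x := by
  have h : ∑ i, ((x i : ℝ))^2 ≤ (d : ℝ) * (sn x : ℝ)^2 := by
    calc ∑ i, ((x i : ℝ))^2 ≤ ∑ _i : Fin d, (sn x : ℝ)^2 := by
          refine Finset.sum_le_sum fun i _ => ?_
          rw [← sq_abs]
          exact pow_le_pow_left₀ (abs_nonneg _) (abs_coord_le_sn x i) 2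
    _ = (d : ℝ) * (sn x : ℝ)^2 := by simp [mul_comm]
  calc nrm x ≤ Real.sqrt ((d : ℝ) * (sn x : ℝ)^2) := Real.sqrt_le_sqrt h
  _ = Real.sqrt d * sn x := by
      rw [Real.sqrt_mul (by positivity), Real.sqrt_sq (by positivity)]

lemma sn_pos {x : Fin d → ℤ} (hx : x ≠ 0) : 1 ≤ sn x := by
  by_contra h
  push_neg at h
  have : sn x = 0 := by omega
  rw [sn] at this
  apply hx
  funext i
  have := (sn_le_iff (N := 0)).1 (le_of_eq this) i
  simp only [Pi.zero_apply]
  omega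



noncomputable def box (d N : ℕ) : Finset (Fin d → ℤ) := Fintype.piFinset fun _ => Finset.Icc (-(N:ℤ)) N

lemma mem_box {N : ℕ} {x : Fin d → ℤ} : x ∈ box d N ↔ sn x ≤ N := by
  rw [box, Fintype.mem_piFinset, sn_le_iff]
  refine forall_congr' fun i => ?_
  rw [Finset.mem_Icc]
  omega

lemma card_box (N : ℕ) : (box d N).card = (2*N+1)^d := by
  rw [box, Fintype.card_piFinset]
  calc ∏ _i : Fin d, (Finset.Icc (-(N:ℤ)) N).card = ∏ _i : Fin d, (2*N+1) :=
        Finset.prod_congr rfl (fun i _ => by rw [Int.card_Icc]; omega)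
  _ = (2*N+1)^d := by simp

lemma box_mono {M N : ℕ} (h : M ≤ N) : box d M ⊆ box d N := by
  intro w hw
  rw [mem_box] at *
  omega

lemma card_shell_le (s : Finset (Fin d → ℤ)) (n : ℕ) (hn : 1 ≤ n)
    (hs : ∀ w ∈ s, sn w = n) : (s.card : ℝ) ≤ 2*d*(3*(n:ℝ))^(d-1) := by
  have hsub : s ⊆ box d n \ box d (n-1) := by
    intro w hw
    rw [Finset.mem_sdiff, mem_box, mem_box, hs w hw]
    omega
  have hcard : s.card ≤ (2*n+1)^d - (2*n-1)^d := by
    calc s.card ≤ (box d n \ box d (n-1)).card := Finset.card_le_card hsub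
    _ = (box d n).card - (box d (n-1)).card :=
        Finset.card_sdiff_of_subset (box_mono (by omega))
    _ = (2*n+1)^d - (2*n-1)^d := by
        rw [card_box, card_box]
        congr 2
        omega
  have hle : ((2*n-1)^d : ℕ) ≤ ((2*n+1)^d : ℕ) := Nat.pow_le_pow_left (by omega) d
  have hn1 : (1:ℝ) ≤ (n:ℝ) := by exact_mod_cast hn
  have hcast : (s.card : ℝ) ≤ (2*(n:ℝ)+1)^d - (2*(n:ℝ)-1)^d := by
    have h1 : (s.card:ℝ) ≤ (((2*n+1)^d : ℕ) : ℝ) - (((2*n-1)^d : ℕ) : ℝ) := by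
      rw [← Nat.cast_sub hle]
      exact_mod_cast hcard
    calc (s.card:ℝ) ≤ _ := h1
    _ = (2*(n:ℝ)+1)^d - (2*(n:ℝ)-1)^d := by
        push_cast [Nat.cast_sub (show 1 ≤ 2*n by omega)]
        ring
  refine hcast.trans ?_
  set x := 2*(n:ℝ)+1 with hxdef
  set y := 2*(n:ℝ)-1 with hydef
  have hxy : x - y = 2 := by rw [hxdef, hydef]; ring
  have hgeom := geom_sum₂_mul x y d
  rw [hxy] at hgeom
  rw [← hgeom]
  have hy0 : (0:ℝ) ≤ y := by rw [hydef]; linarith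
  have hyx : y ≤ x := by rw [hxdef, hydef]; linarith
  have hx3 : x ≤ 3*(n:ℝ) := by rw [hxdef]; linarith
  have hx0 : (0:ℝ) ≤ x := by linarith
  have hterm : ∀ i ∈ Finset.range d, x^i * y^(d-1-i) ≤ (3*(n:ℝ))^(d-1) := by
    intro i hi
    rw [Finset.mem_range] at hi
    calc x^i * y^(d-1-i) ≤ x^i * x^(d-1-i) :=
          mul_le_mul_of_nonneg_left (pow_le_pow_left₀ hy0 hyx _) (by positivity)
    _ = x^(d-1) := by
        rw [← pow_add]
        congr 1
        omega
    _ ≤ (3*(n:ℝ))^(d-1) := pow_le_pow_left₀ hx0 hx3 _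
  calc (∑ i ∈ Finset.range d, x^i * y^(d-1-i)) * 2
      ≤ ((d:ℝ) * (3*(n:ℝ))^(d-1)) * 2 := by
        have := Finset.sum_le_card_nsmul _ _ _ hterm
        rw [Finset.card_range] at this
        have h2 : (∑ i ∈ Finset.range d, x^i * y^(d-1-i)) ≤ (d:ℝ) * (3*(n:ℝ))^(d-1) := by
          simpa [nsmul_eq_mul] using this
        linarith
  _ = 2*d*(3*(n:ℝ))^(d-1) := by ring


lemma sum_shell_le (s : Finset (Fin d → ℤ)) (f : (Fin d → ℤ) → ℝ) (g : ℕ → ℝ)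
    (hg : ∀ n, 0 ≤ g n) (h0 : ∀ w ∈ s, w ≠ 0) (hf : ∀ w ∈ s, f w ≤ g (sn w)) (N : ℕ)
    (hN : ∀ w ∈ s, sn w ≤ N) :
    ∑ w ∈ s, f w ≤ ∑ n ∈ Finset.Icc 1 N, 2*d*(3*(n:ℝ))^(d-1) * g n := by
  calc ∑ w ∈ s, f w ≤ ∑ w ∈ s, g (sn w) := Finset.sum_le_sum hf
  _ = ∑ n ∈ Finset.Icc 1 N, ∑ w ∈ s.filter (fun w => sn w = n), g (sn w) :=
      (Finset.sum_fiberwise_of_maps_to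
        (fun w hw => Finset.mem_Icc.2 ⟨sn_pos (h0 w hw), hN w hw⟩) _).symm
  _ ≤ ∑ n ∈ Finset.Icc 1 N, 2*d*(3*(n:ℝ))^(d-1) * g n := by
      refine Finset.sum_le_sum fun n hn => ?_
      rw [Finset.mem_Icc] at hn
      have hs' : ∀ w ∈ s.filter (fun w => sn w = n), sn w = n := fun w hw =>
        (Finset.mem_filter.1 hw).2
      calc ∑ w ∈ s.filter (fun w => sn w = n), g (sn w)
          = ∑ w ∈ s.filter (fun w => sn w = n), g n :=
            Finset.sum_congr rfl fun w hw => by rw [hs' w hw]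
      _ = ((s.filter (fun w => sn w = n)).card : ℝ) * g n := by
            rw [Finset.sum_const, nsmul_eq_mul]
      _ ≤ 2*d*(3*(n:ℝ))^(d-1) * g n :=
            mul_le_mul_of_nonneg_right (card_shell_le _ n hn.1 hs') (hg n)

/-- Near-ball sum bound. -/
lemma lemA (hd5 : 5 ≤ d) (k : ℕ) (hk : k + 1 ≤ d) (R : ℝ) (hR : 1 ≤ R)
    (s : Finset (Fin d → ℤ)) (hs : ∀ w ∈ s, w ≠ 0 ∧ nrm w ≤ R) :
    ∑ w ∈ s, (nrm w ^ k)⁻¹ ≤ 2*d*3^(d-1) * R^(d-k) := by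
  have hd0 : 0 < d := by omega
  set N := ⌊R⌋₊ with hNdef
  have hN1 : 1 ≤ N := Nat.le_floor (by exact_mod_cast hR)
  have hNR : (N:ℝ) ≤ R := Nat.floor_le (by linarith)
  have key := sum_shell_le s (fun w => (nrm w ^ k)⁻¹) (fun n => ((n:ℝ)^k)⁻¹)
    (fun n => by positivity) (fun w hw => (hs w hw).1)
    (fun w hw => by
      have h1 : (sn w : ℝ) ≤ nrm w := sn_le_nrm hd0 w
      have h2 : (0:ℝ) < (sn w : ℝ) := by
        have := sn_pos (hs w hw).1
        exact_mod_cast this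
      exact inv_anti₀ (by positivity) (pow_le_pow_left₀ (le_of_lt h2) h1 k))
    N
    (fun w hw => by
      have h1 : (sn w : ℝ) ≤ nrm w := sn_le_nrm hd0 w
      exact Nat.le_floor (h1.trans (hs w hw).2))
  refine key.trans ?_
  have hstep : ∀ n ∈ Finset.Icc 1 N,
      2*(d:ℝ)*(3*(n:ℝ))^(d-1) * ((n:ℝ)^k)⁻¹ ≤ 2*d*3^(d-1) * (N:ℝ)^(d-1-k) := by
    intro n hn
    rw [Finset.mem_Icc] at hn
    have hn1 : (1:ℝ) ≤ (n:ℝ) := by exact_mod_cast hn.1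
    have hnN : (n:ℝ) ≤ (N:ℝ) := by exact_mod_cast hn.2
    have hsplit : (3*(n:ℝ))^(d-1) = 3^(d-1) * ((n:ℝ)^(d-1-k) * (n:ℝ)^k) := by
      rw [mul_pow, ← pow_add]
      congr 2
      omega
    rw [hsplit]
    have hnk : ((n:ℝ)^k)⁻¹ * (n:ℝ)^k = 1 := inv_mul_cancel₀ (by positivity)
    calc 2*(d:ℝ)*(3^(d-1) * ((n:ℝ)^(d-1-k) * (n:ℝ)^k)) * ((n:ℝ)^k)⁻¹
        = 2*(d:ℝ)*3^(d-1) * (n:ℝ)^(d-1-k) * (((n:ℝ)^k)⁻¹ * (n:ℝ)^k) := by ring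
    _ = 2*(d:ℝ)*3^(d-1) * (n:ℝ)^(d-1-k) := by rw [hnk, mul_one]
    _ ≤ 2*d*3^(d-1) * (N:ℝ)^(d-1-k) := by
        have := pow_le_pow_left₀ (by linarith : (0:ℝ) ≤ (n:ℝ)) hnN (d-1-k)
        have hc : (0:ℝ) ≤ 2*(d:ℝ)*3^(d-1) := by positivity
        nlinarith [this]
  calc ∑ n ∈ Finset.Icc 1 N, 2*(d:ℝ)*(3*(n:ℝ))^(d-1) * ((n:ℝ)^k)⁻¹
      ≤ ∑ _n ∈ Finset.Icc 1 N, 2*(d:ℝ)*3^(d-1) * (N:ℝ)^(d-1-k) :=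
        Finset.sum_le_sum hstep
  _ = (N:ℝ) * (2*(d:ℝ)*3^(d-1) * (N:ℝ)^(d-1-k)) := by
        rw [Finset.sum_const, nsmul_eq_mul, Nat.card_Icc]
        norm_num
  _ = 2*(d:ℝ)*3^(d-1) * ((N:ℝ) * (N:ℝ)^(d-1-k)) := by ring
  _ ≤ 2*d*3^(d-1) * R^(d-k) := by
        have h1 : (N:ℝ) * (N:ℝ)^(d-1-k) = (N:ℝ)^(d-k) := by
          rw [← pow_succ']
          congr 1
          omega
        rw [h1]
        have h2 : (N:ℝ)^(d-k) ≤ R^(d-k) :=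
          pow_le_pow_left₀ (by positivity) hNR _
        have hc : (0:ℝ) ≤ 2*(d:ℝ)*3^(d-1) := by positivity
        nlinarith [h2]

lemma sum_inv_sq_le (m : ℕ) (hm : 1 ≤ m) :
    ∀ N : ℕ, ∑ n ∈ Finset.Icc m N, ((n:ℝ)^2)⁻¹ ≤ 2/(m:ℝ) := by
  have hm0 : (0:ℝ) < (m:ℝ) := by exact_mod_cast hm
  have key : ∀ N : ℕ, N < m ∨ ∑ n ∈ Finset.Icc m N, ((n:ℝ)^2)⁻¹ ≤ 2/(m:ℝ) - 2/((N:ℝ)+1) := by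
    intro N
    induction N with
    | zero => exact Or.inl hm
    | succ N ih =>
      by_cases hNm : N + 1 < m
      · exact Or.inl hNm
      · right
        push_neg at hNm
        have hsucc : ∑ n ∈ Finset.Icc m (N+1), ((n:ℝ)^2)⁻¹
            = (∑ n ∈ Finset.Icc m N, ((n:ℝ)^2)⁻¹) + (((N:ℝ)+1)^2)⁻¹ := by
          rw [Finset.sum_Icc_succ_top hNm]
          push_cast
          ring_nf
        have hN1 : (0:ℝ) < (N:ℝ)+1 := by positivity
        have hN2 : (0:ℝ) < (N:ℝ)+2 := by positivity
        have harith : (((N:ℝ)+1)^2)⁻¹ ≤ 2/((N:ℝ)+1) - 2/((N:ℝ)+2) := by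
          rw [div_sub_div _ _ (ne_of_gt hN1) (ne_of_gt hN2), inv_eq_one_div,
            div_le_div_iff₀ (by positivity) (by positivity)]
          ring_nf
          nlinarith
        rcases ih with h | h
        · have hmN : m = N + 1 := by omega
          have hempty : Finset.Icc m N = ∅ := by
            apply Finset.Icc_eq_empty
            omega
          rw [hsucc, hempty, Finset.sum_empty, zero_add, hmN]
          have : ((N:ℝ)+1+1) = (N:ℝ)+2 := by ring
          push_cast
          rw [this]
          linarith [harith]
        · rw [hsucc]
          have : ((N:ℝ)+1+1) = (N:ℝ)+2 := by ring
          push_cast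
          rw [this]
          linarith [harith]
  intro N
  rcases key N with h | h
  · rw [Finset.Icc_eq_empty (by omega)]
    simp
    positivity
  · have : (0:ℝ) < (N:ℝ)+1 := by positivity
    have h2 : (0:ℝ) ≤ 2/((N:ℝ)+1) := by positivity
    linarith

/-- Far-region sum bound, exponent `2d-4`. -/
lemma lemB (hd5 : 5 ≤ d) (R : ℝ) (hR : 1 ≤ R)
    (s : Finset (Fin d → ℤ)) (hs : ∀ w ∈ s, w ≠ 0 ∧ R ≤ nrm w) :
    ∑ w ∈ s, (nrm w ^ (2*d-4))⁻¹
      ≤ 4*d*3^(d-1) * Real.sqrt d ^ (d-4) * (R^(d-4))⁻¹ := by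
  have hd0 : 0 < d := by omega
  have hsd : (1:ℝ) < Real.sqrt d := by
    rw [show (1:ℝ) = Real.sqrt 1 by simp]
    apply Real.sqrt_lt_sqrt <;> norm_num
    exact_mod_cast by omega
  have hRd : (0:ℝ) < R / Real.sqrt d := by positivity
  set m := ⌈R / Real.sqrt d⌉₊ with hmdef
  have hm1 : 1 ≤ m := Nat.one_le_iff_ne_zero.2 (by
    intro h
    have := Nat.ceil_eq_zero.1 h
    linarith)
  have hmR : R / Real.sqrt d ≤ (m:ℝ) := Nat.le_ceil _
  set N := s.sup sn with hNdef
  -- every w in s has m ≤ sn w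
  have hsnm : ∀ w ∈ s, m ≤ sn w := by
    intro w hw
    have h1 : nrm w ≤ Real.sqrt d * sn w := nrm_le_sqrt_d_mul_sn w
    have h2 : R ≤ Real.sqrt d * sn w := le_trans (hs w hw).2 h1
    have h3 : R / Real.sqrt d ≤ (sn w : ℝ) := by
      rw [div_le_iff₀ (by positivity)]
      linarith [mul_comm (Real.sqrt d) ((sn w : ℝ))]
    exact Nat.ceil_le.2 h3
  have key := sum_shell_le s (fun w => (nrm w ^ (2*d-4))⁻¹)
    (fun n => if n < m then 0 else ((n:ℝ)^(2*d-4))⁻¹)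
    (fun n => by split <;> positivity)
    (fun w hw => (hs w hw).1)
    (fun w hw => by
      rw [if_neg (by have := hsnm w hw; omega)]
      have h1 : (sn w : ℝ) ≤ nrm w := sn_le_nrm hd0 w
      have h2 : (0:ℝ) < (sn w : ℝ) := by
        exact_mod_cast sn_pos (hs w hw).1
      exact inv_anti₀ (by positivity) (pow_le_pow_left₀ (le_of_lt h2) h1 _))
    N (fun w hw => Finset.le_sup hw)
  refine key.trans ?_
  have hm0 : (0:ℝ) < (m:ℝ) := by exact_mod_cast hm1
  set c : ℝ := 2*d*3^(d-1) * (((m:ℝ))^(d-5))⁻¹ with hcdef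
  have hc0 : (0:ℝ) ≤ c := by positivity
  have hstep : ∀ n ∈ Finset.Icc 1 N,
      2*(d:ℝ)*(3*(n:ℝ))^(d-1) * (if n < m then 0 else ((n:ℝ)^(2*d-4))⁻¹)
        ≤ (if m ≤ n then c * ((n:ℝ)^2)⁻¹ else 0) := by
    intro n hn
    rw [Finset.mem_Icc] at hn
    by_cases hnm : n < m
    · rw [if_pos hnm, if_neg (by omega)]
      simp
    · rw [if_neg hnm, if_pos (by omega)]
      push_neg at hnm
      have hn1 : (1:ℝ) ≤ (n:ℝ) := by exact_mod_cast hn.1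
      have hmn : (m:ℝ) ≤ (n:ℝ) := by exact_mod_cast hnm
      have hnne : ((n:ℝ)^(d-1)) ≠ 0 := by positivity
      have e2 : (n:ℝ)^(2*d-4) = (n:ℝ)^(d-1) * ((n:ℝ)^(d-5) * (n:ℝ)^2) := by
        rw [← pow_add, ← pow_add]
        congr 1
        omega
      have e3 : (n:ℝ)^(d-1) * ((n:ℝ)^(2*d-4))⁻¹ = ((n:ℝ)^(d-5))⁻¹ * ((n:ℝ)^2)⁻¹ := by
        rw [e2, mul_inv, ← mul_assoc, mul_inv_cancel₀ hnne, one_mul, mul_inv]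
      have e4 : ((n:ℝ)^(d-5))⁻¹ ≤ ((m:ℝ)^(d-5))⁻¹ :=
        inv_anti₀ (by positivity) (pow_le_pow_left₀ (by linarith) hmn _)
      calc 2*(d:ℝ)*(3*(n:ℝ))^(d-1) * ((n:ℝ)^(2*d-4))⁻¹
          = 2*(d:ℝ)*3^(d-1) * ((n:ℝ)^(d-1) * ((n:ℝ)^(2*d-4))⁻¹) := by
            rw [mul_pow]
            ring
      _ = 2*(d:ℝ)*3^(d-1) * (((n:ℝ)^(d-5))⁻¹ * ((n:ℝ)^2)⁻¹) := by rw [e3]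
      _ = (2*(d:ℝ)*3^(d-1) * ((n:ℝ)^(d-5))⁻¹) * ((n:ℝ)^2)⁻¹ := by ring
      _ ≤ c * ((n:ℝ)^2)⁻¹ := by
            rw [hcdef]
            have h5 : (0:ℝ) ≤ ((n:ℝ)^2)⁻¹ := by positivity
            have h6 : (0:ℝ) ≤ 2*(d:ℝ)*3^(d-1) := by positivity
            exact mul_le_mul_of_nonneg_right (mul_le_mul_of_nonneg_left e4 h6) h5
  refine (Finset.sum_le_sum hstep).trans ?_
  have e5 : ∑ n ∈ Finset.Icc 1 N, (if m ≤ n then c * ((n:ℝ)^2)⁻¹ else 0)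
      = ∑ n ∈ (Finset.Icc 1 N).filter (fun n => m ≤ n), c * ((n:ℝ)^2)⁻¹ :=
    (Finset.sum_filter _ _).symm
  rw [e5, ← Finset.mul_sum]
  have e6 : ∑ n ∈ (Finset.Icc 1 N).filter (fun n => m ≤ n), ((n:ℝ)^2)⁻¹ ≤ 2/(m:ℝ) := by
    refine le_trans (Finset.sum_le_sum_of_subset_of_nonneg ?_ (fun n _ _ => by positivity))
      (sum_inv_sq_le m hm1 N)
    intro n hn
    rw [Finset.mem_filter, Finset.mem_Icc] at hn
    rw [Finset.mem_Icc]
    omega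
  calc c * ∑ n ∈ (Finset.Icc 1 N).filter (fun n => m ≤ n), ((n:ℝ)^2)⁻¹
      ≤ c * (2/(m:ℝ)) := mul_le_mul_of_nonneg_left e6 hc0
  _ = 4*(d:ℝ)*3^(d-1) * ((m:ℝ)^(d-5) * (m:ℝ))⁻¹ := by
      rw [hcdef, mul_inv]
      field_simp
      ring
  _ = 4*(d:ℝ)*3^(d-1) * ((m:ℝ)^(d-4))⁻¹ := by
      rw [← pow_succ]
      congr 3
      omega
  _ ≤ 4*d*3^(d-1) * Real.sqrt d ^ (d-4) * (R^(d-4))⁻¹ := by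
      have h7 : (R / Real.sqrt d)^(d-4) ≤ (m:ℝ)^(d-4) :=
        pow_le_pow_left₀ (le_of_lt hRd) hmR _
      have h8 : ((m:ℝ)^(d-4))⁻¹ ≤ ((R / Real.sqrt d)^(d-4))⁻¹ :=
        inv_anti₀ (by positivity) h7
      have h9 : ((R / Real.sqrt d)^(d-4))⁻¹ = Real.sqrt d ^ (d-4) * (R^(d-4))⁻¹ := by
        rw [div_pow, inv_div]
        ring
      have h10 : (0:ℝ) ≤ 4*(d:ℝ)*3^(d-1) := by positivity
      calc 4*(d:ℝ)*3^(d-1) * ((m:ℝ)^(d-4))⁻¹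
          ≤ 4*(d:ℝ)*3^(d-1) * ((R / Real.sqrt d)^(d-4))⁻¹ :=
            mul_le_mul_of_nonneg_left h8 h10
      _ = 4*d*3^(d-1) * Real.sqrt d ^ (d-4) * (R^(d-4))⁻¹ := by rw [h9]; ring

noncomputable def P (k : ℕ) (v : Fin d → ℤ) : ℝ := (nrm v ^ k)⁻¹

lemma P_nonneg (k : ℕ) (v : Fin d → ℤ) : 0 ≤ P k v :=
  inv_nonneg.2 (pow_nonneg (nrm_nonneg v) k)

lemma P_le_one (k : ℕ) {v : Fin d → ℤ} (hv : v ≠ 0) : P k v ≤ 1 := by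
  rw [P]
  have h1 : (1:ℝ) ≤ nrm v ^ k := one_le_pow₀ (one_le_nrm hv)
  rw [inv_le_one_iff₀]
  right
  exact h1

lemma P_le_double (k : ℕ) {u v : Fin d → ℤ} (hu : u ≠ 0) (h : nrm u ≤ 2 * nrm v) :
    P k v ≤ 2^k * P k u := by
  have hu1 : 1 ≤ nrm u := one_le_nrm hu
  have hv : 0 < nrm v := by linarith
  rw [P, P]
  have e : (2:ℝ)^k * (nrm u ^ k)⁻¹ = ((nrm u / 2)^k)⁻¹ := by
    rw [div_pow, inv_div, div_eq_mul_inv]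
  rw [e]
  exact inv_anti₀ (by positivity) (pow_le_pow_left₀ (by linarith) (by linarith) k)

lemma P_mul_sq {v : Fin d → ℤ} (hd4 : 4 ≤ d) (hv : v ≠ 0) :
    P (d-2) v * nrm v ^ 2 = P (d-4) v := by
  have h1 : 0 < nrm v := nrm_pos hv
  rw [P, P, show d-2 = (d-4)+2 by omega, pow_add, mul_inv]
  field_simp

lemma P_P_eq {v : Fin d → ℤ} (hd2 : 2 ≤ d) :
    P (d-2) v * P (d-2) v = P (2*d-4) v := by
  simp only [P]
  rw [← mul_inv, ← pow_add]
  congr 2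
  omega

lemma tri_half {p q w : Fin d → ℤ} (h : 2 * nrm (w - p) ≤ nrm (p - q)) :
    nrm (p - q) ≤ 2 * nrm (w - q) := by
  have := nrm_tri p q w
  linarith

lemma tri_half₀ {p w : Fin d → ℤ} (h : 2 * nrm (w - p) ≤ nrm p) : nrm p ≤ 2 * nrm w := by
  have h1 := tri_half (p := p) (q := 0) (w := w) (by rwa [sub_zero])
  simp only [sub_zero] at h1
  exact h1

lemma tri_half₀' {p w : Fin d → ℤ} (h : 2 * nrm w ≤ nrm p) : nrm p ≤ 2 * nrm (w - p) := by
  have e : nrm ((0 : Fin d → ℤ) - p) = nrm p := by rw [nrm_sub_comm, sub_zero]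
  have h1 := tri_half (p := (0 : Fin d → ℤ)) (q := p) (w := w)
    (by rw [sub_zero, e]; exact h)
  rwa [e] at h1

/-- centered near-ball bound -/
lemma lemA' (hd5 : 5 ≤ d) (k : ℕ) (hk : k + 1 ≤ d) (c : Fin d → ℤ) (R : ℝ) (hR : 1 ≤ R)
    (s : Finset (Fin d → ℤ)) (hs : ∀ w ∈ s, w ≠ c ∧ nrm (w - c) ≤ R) :
    ∑ w ∈ s, P k (w - c) ≤ 2*d*3^(d-1) * R^(d-k) := by
  have hinj : ∀ x ∈ s, ∀ y ∈ s, x - c = y - c → x = y := fun x _ y _ h => by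
    have := sub_left_injective h
    exact this
  rw [show (∑ w ∈ s, P k (w - c)) = ∑ v ∈ s.image (· - c), (nrm v ^ k)⁻¹ from
    (Finset.sum_image hinj).symm]
  apply lemA hd5 k hk R hR
  intro v hv
  obtain ⟨w, hw, rfl⟩ := Finset.mem_image.1 hv
  exact ⟨sub_ne_zero.2 (hs w hw).1, (hs w hw).2⟩

/-- centered far bound -/
lemma lemB' (hd5 : 5 ≤ d) (c : Fin d → ℤ) (R : ℝ) (hR : 1 ≤ R)
    (s : Finset (Fin d → ℤ)) (hs : ∀ w ∈ s, w ≠ c ∧ R ≤ nrm (w - c)) :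
    ∑ w ∈ s, P (2*d-4) (w - c) ≤ 4*d*3^(d-1) * Real.sqrt d ^ (d-4) * (R^(d-4))⁻¹ := by
  have hinj : ∀ x ∈ s, ∀ y ∈ s, x - c = y - c → x = y := fun x _ y _ h =>
    sub_left_injective h
  rw [show (∑ w ∈ s, P (2*d-4) (w - c)) = ∑ v ∈ s.image (· - c), (nrm v ^ (2*d-4))⁻¹ from
    (Finset.sum_image hinj).symm]
  apply lemB hd5 R hR
  intro v hv
  obtain ⟨w, hw, rfl⟩ := Finset.mem_image.1 hv
  exact ⟨sub_ne_zero.2 (hs w hw).1, (hs w hw).2⟩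

lemma tri₀ (w z : Fin d → ℤ) : nrm w ≤ nrm z + nrm (w - z) := by
  have h := nrm_tri w 0 z
  simp only [sub_zero] at h
  rw [nrm_sub_comm z w] at h
  linarith

lemma two_pt (hd5 : 5 ≤ d) : ∃ C : ℝ, 0 < C ∧ ∀ z : Fin d → ℤ, z ≠ 0 →
    ∀ s : Finset (Fin d → ℤ), (∀ w ∈ s, w ≠ 0 ∧ w ≠ z) →
    ∑ w ∈ s, P (d-2) w * P (d-2) (w - z) ≤ C * P (d-4) z := by
  classical
  have hd0 : (0:ℝ) < (d:ℝ) := by exact_mod_cast (show 0 < d by omega)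
  have h3p : (0:ℝ) < 3^(d-1) := by positivity
  have hsq : (0:ℝ) < Real.sqrt d ^ (d-4) := pow_pos (Real.sqrt_pos.2 hd0) _
  set CA : ℝ := 2*(d:ℝ)*3^(d-1) with hCAdef
  set CB : ℝ := 4*(d:ℝ)*3^(d-1) * Real.sqrt d ^ (d-4) with hCBdef
  have hCA : 0 < CA := by rw [hCAdef]; nlinarith
  have hCB : 0 < CB := by rw [hCBdef]; nlinarith
  have h2p : (0:ℝ) < 2^(d-2) := by positivity
  refine ⟨2^(d-2) * (6*CA + CB), by nlinarith, ?_⟩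
  intro z hz s hs
  have hz1 : 1 ≤ nrm z := one_le_nrm hz
  have hzpos : 0 < nrm z := by linarith
  have hzP : 0 ≤ P (d-4) z := P_nonneg _ _
  set f : (Fin d → ℤ) → ℝ := fun w => P (d-2) w * P (d-2) (w - z) with hfdef
  have hf0 : ∀ w, 0 ≤ f w := fun w => mul_nonneg (P_nonneg _ _) (P_nonneg _ _)
  set q1 : (Fin d → ℤ) → Prop := fun w => 2 * nrm w ≤ nrm z with hq1
  set q2 : (Fin d → ℤ) → Prop := fun w => 2 * nrm (w - z) ≤ nrm z with hq2
  set q3 : (Fin d → ℤ) → Prop := fun w => nrm w ≤ 2 * nrm z with hq3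
  set s1 := s.filter q1 with hs1
  set t1 := s.filter (fun w => ¬ q1 w) with ht1
  set s2 := t1.filter q2 with hs2
  set t2 := t1.filter (fun w => ¬ q2 w) with ht2
  set s3a := t2.filter q3 with hs3a
  set s3b := t2.filter (fun w => ¬ q3 w) with hs3b
  have hsplit : ∑ w ∈ s, f w = ∑ w ∈ s1, f w + (∑ w ∈ s2, f w + (∑ w ∈ s3a, f w + ∑ w ∈ s3b, f w)) := by
    rw [hs3a, hs3b, Finset.sum_filter_add_sum_filter_not t2 q3 f]
    rw [hs2, ht2, Finset.sum_filter_add_sum_filter_not t1 q2 f]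
    rw [hs1, ht1, Finset.sum_filter_add_sum_filter_not s q1 f]
  -- region 1
  have hb1 : ∑ w ∈ s1, f w ≤ 2^(d-2) * CA * P (d-4) z := by
    have hstep : ∑ w ∈ s1, f w ≤ (2^(d-2) * P (d-2) z) * ∑ w ∈ s1, P (d-2) w := by
      rw [Finset.mul_sum]
      refine Finset.sum_le_sum fun w hw => ?_
      have hcond : q1 w := (Finset.mem_filter.1 hw).2
      have h2 : nrm z ≤ 2 * nrm (w - z) := tri_half₀' hcond
      have h3 : P (d-2) (w - z) ≤ 2^(d-2) * P (d-2) z := P_le_double _ hz h2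
      calc f w ≤ P (d-2) w * (2^(d-2) * P (d-2) z) :=
            mul_le_mul_of_nonneg_left h3 (P_nonneg _ _)
      _ = 2^(d-2) * P (d-2) z * P (d-2) w := by ring
    have hsum : ∑ w ∈ s1, P (d-2) w ≤ CA * nrm z ^ 2 := by
      have happ := lemA hd5 (d-2) (by omega) (nrm z) hz1 s1 (fun w hw => by
        have hmem := Finset.mem_filter.1 hw
        have hw0 := (hs w hmem.1).1
        have hcond : 2 * nrm w ≤ nrm z := hmem.2
        exact ⟨hw0, by linarith [nrm_nonneg w]⟩)
      rw [show d - (d-2) = 2 by omega] at happ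
      simpa [P] using happ
    calc ∑ w ∈ s1, f w ≤ (2^(d-2) * P (d-2) z) * (CA * nrm z ^ 2) := by
          refine hstep.trans (mul_le_mul_of_nonneg_left hsum ?_)
          exact mul_nonneg (by positivity) (P_nonneg _ _)
    _ = 2^(d-2) * CA * (P (d-2) z * nrm z ^ 2) := by ring
    _ = 2^(d-2) * CA * P (d-4) z := by rw [P_mul_sq (by omega) hz]
  -- region 2
  have hb2 : ∑ w ∈ s2, f w ≤ 2^(d-2) * CA * P (d-4) z := by
    have hstep : ∑ w ∈ s2, f w ≤ (2^(d-2) * P (d-2) z) * ∑ w ∈ s2, P (d-2) (w - z) := by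
      rw [Finset.mul_sum]
      refine Finset.sum_le_sum fun w hw => ?_
      have hcond : q2 w := (Finset.mem_filter.1 hw).2
      have h2 : nrm z ≤ 2 * nrm w := tri_half₀ hcond
      have h3 : P (d-2) w ≤ 2^(d-2) * P (d-2) z := P_le_double _ hz h2
      calc f w ≤ (2^(d-2) * P (d-2) z) * P (d-2) (w - z) :=
            mul_le_mul_of_nonneg_right h3 (P_nonneg _ _)
      _ = 2^(d-2) * P (d-2) z * P (d-2) (w - z) := by ring
    have hsum : ∑ w ∈ s2, P (d-2) (w - z) ≤ CA * nrm z ^ 2 := by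
      have happ := lemA' hd5 (d-2) (by omega) z (nrm z) hz1 s2 (fun w hw => by
        have hmem := Finset.mem_filter.1 hw
        have hmem1 := Finset.mem_filter.1 hmem.1
        have hwz := (hs w hmem1.1).2
        have hcond : 2 * nrm (w - z) ≤ nrm z := hmem.2
        exact ⟨hwz, by linarith [nrm_nonneg (w - z)]⟩)
      rw [show d - (d-2) = 2 by omega] at happ
      exact happ
    calc ∑ w ∈ s2, f w ≤ (2^(d-2) * P (d-2) z) * (CA * nrm z ^ 2) := by
          refine hstep.trans (mul_le_mul_of_nonneg_left hsum ?_)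
          exact mul_nonneg (by positivity) (P_nonneg _ _)
    _ = 2^(d-2) * CA * (P (d-2) z * nrm z ^ 2) := by ring
    _ = 2^(d-2) * CA * P (d-4) z := by rw [P_mul_sq (by omega) hz]
  -- region 3a
  have hb3a : ∑ w ∈ s3a, f w ≤ 2^(d-2) * (4 * CA) * P (d-4) z := by
    have hstep : ∑ w ∈ s3a, f w ≤ (2^(d-2) * P (d-2) z) * ∑ w ∈ s3a, P (d-2) w := by
      rw [Finset.mul_sum]
      refine Finset.sum_le_sum fun w hw => ?_
      have hmem := Finset.mem_filter.1 hw
      have hmem2 := Finset.mem_filter.1 hmem.1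
      have hcond : ¬ q2 w := hmem2.2
      have h2 : nrm z ≤ 2 * nrm (w - z) := by
        rw [hq2] at hcond
        push_neg at hcond
        linarith
      have h3 : P (d-2) (w - z) ≤ 2^(d-2) * P (d-2) z := P_le_double _ hz h2
      calc f w ≤ P (d-2) w * (2^(d-2) * P (d-2) z) :=
            mul_le_mul_of_nonneg_left h3 (P_nonneg _ _)
      _ = 2^(d-2) * P (d-2) z * P (d-2) w := by ring
    have hsum : ∑ w ∈ s3a, P (d-2) w ≤ CA * (2 * nrm z) ^ 2 := by
      have happ := lemA hd5 (d-2) (by omega) (2 * nrm z) (by linarith) s3a (fun w hw => by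
        have hmem := Finset.mem_filter.1 hw
        have hmem2 := Finset.mem_filter.1 hmem.1
        have hmem1 := Finset.mem_filter.1 hmem2.1
        exact ⟨(hs w hmem1.1).1, hmem.2⟩)
      rw [show d - (d-2) = 2 by omega] at happ
      simpa [P] using happ
    calc ∑ w ∈ s3a, f w ≤ (2^(d-2) * P (d-2) z) * (CA * (2 * nrm z) ^ 2) := by
          refine hstep.trans (mul_le_mul_of_nonneg_left hsum ?_)
          exact mul_nonneg (by positivity) (P_nonneg _ _)
    _ = 2^(d-2) * (4 * CA) * (P (d-2) z * nrm z ^ 2) := by ring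
    _ = 2^(d-2) * (4 * CA) * P (d-4) z := by rw [P_mul_sq (by omega) hz]
  -- region 3b
  have hb3b : ∑ w ∈ s3b, f w ≤ 2^(d-2) * CB * P (d-4) z := by
    have hstep : ∑ w ∈ s3b, f w ≤ 2^(d-2) * ∑ w ∈ s3b, P (2*d-4) w := by
      rw [Finset.mul_sum]
      refine Finset.sum_le_sum fun w hw => ?_
      have hmem := Finset.mem_filter.1 hw
      have hmem2 := Finset.mem_filter.1 hmem.1
      have hmem1 := Finset.mem_filter.1 hmem2.1
      have hw0 := (hs w hmem1.1).1
      have hcond : ¬ q3 w := hmem.2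
      have hwz2 : 2 * nrm z < nrm w := by
        rw [hq3] at hcond
        exact lt_of_not_ge hcond
      have h2 : nrm w ≤ 2 * nrm (w - z) := by
        have := tri₀ w z
        linarith
      have h3 : P (d-2) (w - z) ≤ 2^(d-2) * P (d-2) w := P_le_double _ hw0 h2
      calc f w ≤ P (d-2) w * (2^(d-2) * P (d-2) w) :=
            mul_le_mul_of_nonneg_left h3 (P_nonneg _ _)
      _ = 2^(d-2) * (P (d-2) w * P (d-2) w) := by ring
      _ = 2^(d-2) * P (2*d-4) w := by rw [P_P_eq (by omega)]
    have hsum : ∑ w ∈ s3b, P (2*d-4) w ≤ CB * (((2 * nrm z))^(d-4))⁻¹ := by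
      have happ := lemB hd5 (2 * nrm z) (by linarith) s3b (fun w hw => by
        have hmem := Finset.mem_filter.1 hw
        have hmem2 := Finset.mem_filter.1 hmem.1
        have hmem1 := Finset.mem_filter.1 hmem2.1
        have hcond : ¬ q3 w := hmem.2
        rw [hq3] at hcond
        exact ⟨(hs w hmem1.1).1, le_of_lt (lt_of_not_ge hcond)⟩)
      simpa [P] using happ
    have hfin : (((2 * nrm z))^(d-4))⁻¹ ≤ P (d-4) z := by
      rw [P]
      exact inv_anti₀ (by positivity) (pow_le_pow_left₀ (by linarith) (by linarith) _)
    calc ∑ w ∈ s3b, f w ≤ 2^(d-2) * (CB * (((2 * nrm z))^(d-4))⁻¹) := by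
          refine hstep.trans ?_
          exact mul_le_mul_of_nonneg_left hsum (by positivity)
    _ ≤ 2^(d-2) * (CB * P (d-4) z) := by
          refine mul_le_mul_of_nonneg_left ?_ (by positivity)
          exact mul_le_mul_of_nonneg_left hfin (le_of_lt hCB)
    _ = 2^(d-2) * CB * P (d-4) z := by ring
  rw [hsplit]
  have : 2^(d-2) * CA * P (d-4) z + (2^(d-2) * CA * P (d-4) z +
      (2^(d-2) * (4 * CA) * P (d-4) z + 2^(d-2) * CB * P (d-4) z))
      = 2^(d-2) * (6*CA + CB) * P (d-4) z := by ring
  linarith [hb1, hb2, hb3a, hb3b]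

lemma P_le_half (k : ℕ) {v : Fin d → ℤ} {t : ℝ} (ht : 0 < t) (h : t ≤ 2 * nrm v) :
    P k v ≤ 2^k * (t^k)⁻¹ := by
  have hv : 0 < nrm v := by linarith
  rw [P]
  have e : (2:ℝ)^k * (t ^ k)⁻¹ = ((t / 2)^k)⁻¹ := by
    rw [div_pow, inv_div, div_eq_mul_inv]
  rw [e]
  exact inv_anti₀ (by positivity) (pow_le_pow_left₀ (by linarith) (by linarith) k)

lemma three_pt (hd5 : 5 ≤ d) : ∃ C : ℝ, 0 < C ∧ ∀ x z : Fin d → ℤ,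
    x ≠ 0 → z ≠ 0 → x ≠ z →
    ∀ s : Finset (Fin d → ℤ), (∀ w ∈ s, w ≠ 0 ∧ w ≠ x ∧ w ≠ z) →
    ∑ w ∈ s, P (d-2) w * P (d-4) (w - x) * P (d-2) (w - z)
      ≤ C * (P (d-4) x * P (d-4) (x - z) + P (d-4) x * P (d-4) z +
          P (d-4) (x - z) * P (d-4) z) := by
  classical
  obtain ⟨C2, hC2, h2pt⟩ := two_pt hd5
  have hd0 : (0:ℝ) < (d:ℝ) := by exact_mod_cast (show 0 < d by omega)
  have h3p : (0:ℝ) < 3^(d-1) := by positivity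
  set CA : ℝ := 2*(d:ℝ)*3^(d-1) with hCAdef
  have hCA : 0 < CA := by rw [hCAdef]; nlinarith
  have h4p : (0:ℝ) < 4^(d-2) := by positivity
  have h2k : (0:ℝ) < 2^(d-4) := by positivity
  refine ⟨4^(d-2) * CA + 2^(d-4) * C2, by nlinarith, ?_⟩
  intro x z hx hz hxz s hs
  have hx1 : 1 ≤ nrm x := one_le_nrm hx
  have hxz1 : 1 ≤ nrm (x - z) := one_le_nrm (sub_ne_zero.2 hxz)
  have hz1 : 1 ≤ nrm z := one_le_nrm hz
  set D : ℝ := min (nrm x) (nrm (x - z)) with hDdef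
  have hD1 : 1 ≤ D := le_min hx1 hxz1
  have hDx : D ≤ nrm x := min_le_left _ _
  have hDxz : D ≤ nrm (x - z) := min_le_right _ _
  set f : (Fin d → ℤ) → ℝ := fun w => P (d-2) w * P (d-4) (w - x) * P (d-2) (w - z)
    with hfdef
  set q : (Fin d → ℤ) → Prop := fun w => 2 * nrm (w - x) ≤ D with hq
  set sn' := s.filter q with hsn
  set sf := s.filter (fun w => ¬ q w) with hsf
  have hsplit : ∑ w ∈ s, f w = ∑ w ∈ sn', f w + ∑ w ∈ sf, f w :=
    (Finset.sum_filter_add_sum_filter_not s q f).symm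
  -- nonnegativity of tree terms
  have hT1 : 0 ≤ P (d-4) x * P (d-4) (x - z) := mul_nonneg (P_nonneg _ _) (P_nonneg _ _)
  have hT2 : 0 ≤ P (d-4) x * P (d-4) z := mul_nonneg (P_nonneg _ _) (P_nonneg _ _)
  have hT3 : 0 ≤ P (d-4) (x - z) * P (d-4) z := mul_nonneg (P_nonneg _ _) (P_nonneg _ _)
  -- near region
  have hnear : ∑ w ∈ sn', f w ≤ 4^(d-2) * CA * (P (d-4) x * P (d-4) (x - z)) := by
    have hstep : ∑ w ∈ sn', f w
        ≤ (4^(d-2) * (P (d-2) x * P (d-2) (x - z))) * ∑ w ∈ sn', P (d-4) (w - x) := by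
      rw [Finset.mul_sum]
      refine Finset.sum_le_sum fun w hw => ?_
      have hcond : q w := (Finset.mem_filter.1 hw).2
      rw [hq] at hcond
      have hc1 : 2 * nrm (w - x) ≤ nrm x := le_trans hcond hDx
      have hc2 : 2 * nrm (w - x) ≤ nrm (x - z) := le_trans hcond hDxz
      have h2 : nrm x ≤ 2 * nrm w := tri_half₀ hc1
      have h3 : nrm (x - z) ≤ 2 * nrm (w - z) := tri_half hc2
      have h4 : P (d-2) w ≤ 2^(d-2) * P (d-2) x := P_le_double _ hx h2
      have h5 : P (d-2) (w - z) ≤ 2^(d-2) * P (d-2) (x - z) :=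
        P_le_double _ (sub_ne_zero.2 hxz) h3
      calc f w = (P (d-2) w * P (d-2) (w - z)) * P (d-4) (w - x) := by rw [hfdef]; ring
      _ ≤ ((2^(d-2) * P (d-2) x) * (2^(d-2) * P (d-2) (x - z))) * P (d-4) (w - x) := by
          refine mul_le_mul_of_nonneg_right ?_ (P_nonneg _ _)
          exact mul_le_mul h4 h5 (P_nonneg _ _) (mul_nonneg (by positivity) (P_nonneg _ _))
      _ = (4^(d-2) * (P (d-2) x * P (d-2) (x - z))) * P (d-4) (w - x) := by
          rw [show (4:ℝ)^(d-2) = 2^(d-2) * 2^(d-2) by rw [← mul_pow]; norm_num]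
          ring
    have hsum : ∑ w ∈ sn', P (d-4) (w - x) ≤ CA * D ^ 4 := by
      have happ := lemA' hd5 (d-4) (by omega) x D hD1 sn' (fun w hw => by
        have hmem := Finset.mem_filter.1 hw
        have hcond : q w := hmem.2
        rw [hq] at hcond
        exact ⟨(hs w hmem.1).2.1, by linarith [nrm_nonneg (w - x)]⟩)
      rw [show d - (d-4) = 4 by omega] at happ
      exact happ
    have hD4 : D ^ 4 ≤ nrm x ^ 2 * nrm (x - z) ^ 2 := by
      have e : D ^ 4 = D^2 * D^2 := by ring
      rw [e]
      exact mul_le_mul (pow_le_pow_left₀ (by linarith) hDx 2)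
        (pow_le_pow_left₀ (by linarith) hDxz 2) (by positivity) (by positivity)
    calc ∑ w ∈ sn', f w ≤ (4^(d-2) * (P (d-2) x * P (d-2) (x - z))) * (CA * D ^ 4) := by
          refine hstep.trans (mul_le_mul_of_nonneg_left hsum ?_)
          exact mul_nonneg (by positivity) (mul_nonneg (P_nonneg _ _) (P_nonneg _ _))
    _ ≤ (4^(d-2) * (P (d-2) x * P (d-2) (x - z))) * (CA * (nrm x ^ 2 * nrm (x - z) ^ 2)) := by
          refine mul_le_mul_of_nonneg_left ?_
            (mul_nonneg (by positivity) (mul_nonneg (P_nonneg _ _) (P_nonneg _ _)))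
          exact mul_le_mul_of_nonneg_left hD4 (le_of_lt hCA)
    _ = 4^(d-2) * CA * ((P (d-2) x * nrm x ^ 2) * (P (d-2) (x - z) * nrm (x - z) ^ 2)) := by
          ring
    _ = 4^(d-2) * CA * (P (d-4) x * P (d-4) (x - z)) := by
          rw [P_mul_sq (by omega) hx, P_mul_sq (by omega) (sub_ne_zero.2 hxz)]
  -- far region
  have hfar : ∑ w ∈ sf, f w
      ≤ 2^(d-4) * C2 * (P (d-4) x * P (d-4) z + P (d-4) (x - z) * P (d-4) z) := by
    set B : ℝ := 2^(d-4) * (D^(d-4))⁻¹ with hBdef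
    have hB0 : 0 ≤ B := by rw [hBdef]; positivity
    have hstep : ∑ w ∈ sf, f w ≤ B * ∑ w ∈ sf, P (d-2) w * P (d-2) (w - z) := by
      rw [Finset.mul_sum]
      refine Finset.sum_le_sum fun w hw => ?_
      have hcond : ¬ q w := (Finset.mem_filter.1 hw).2
      rw [hq] at hcond
      have hD2 : D ≤ 2 * nrm (w - x) := le_of_lt (lt_of_not_ge hcond)
      have h6 : P (d-4) (w - x) ≤ B := by
        rw [hBdef]
        exact P_le_half _ (by linarith) hD2
      calc f w ≤ P (d-2) w * B * P (d-2) (w - z) := by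
            refine mul_le_mul_of_nonneg_right ?_ (P_nonneg _ _)
            exact mul_le_mul_of_nonneg_left h6 (P_nonneg _ _)
      _ = B * (P (d-2) w * P (d-2) (w - z)) := by ring
    have hsum : ∑ w ∈ sf, P (d-2) w * P (d-2) (w - z) ≤ C2 * P (d-4) z := by
      refine h2pt z hz sf fun w hw => ?_
      have hmem := Finset.mem_filter.1 hw
      exact ⟨(hs w hmem.1).1, (hs w hmem.1).2.2⟩
    have hDinv : (D^(d-4))⁻¹ ≤ P (d-4) x + P (d-4) (x - z) := by
      rcases min_cases (nrm x) (nrm (x - z)) with ⟨he, _⟩ | ⟨he, _⟩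
      · rw [hDdef, he]
        have h7 := P_nonneg (d-4) (x - z)
        have h8 : (nrm x ^ (d-4))⁻¹ = P (d-4) x := rfl
        rw [h8]
        linarith
      · rw [hDdef, he]
        have h7 := P_nonneg (d-4) x
        have h8 : (nrm (x - z) ^ (d-4))⁻¹ = P (d-4) (x - z) := rfl
        rw [h8]
        linarith
    calc ∑ w ∈ sf, f w ≤ B * (C2 * P (d-4) z) :=
          hstep.trans (mul_le_mul_of_nonneg_left hsum hB0)
    _ = 2^(d-4) * C2 * ((D^(d-4))⁻¹ * P (d-4) z) := by rw [hBdef]; ring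
    _ ≤ 2^(d-4) * C2 * ((P (d-4) x + P (d-4) (x - z)) * P (d-4) z) := by
        refine mul_le_mul_of_nonneg_left ?_ (by positivity)
        exact mul_le_mul_of_nonneg_right hDinv (P_nonneg _ _)
    _ = 2^(d-4) * C2 * (P (d-4) x * P (d-4) z + P (d-4) (x - z) * P (d-4) z) := by ring
  rw [hsplit]
  have c1 : (0:ℝ) ≤ 4^(d-2) * CA := by positivity
  have c2 : (0:ℝ) ≤ 2^(d-4) * C2 := by positivity
  nlinarith [hnear, hfar, mul_nonneg c1 hT2, mul_nonneg c1 hT3, mul_nonneg c2 hT1]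

lemma mul_le_mul₄ {a1 a2 a3 a4 b1 b2 b3 b4 : ℝ}
    (h1 : a1 ≤ b1) (h2 : a2 ≤ b2) (h3 : a3 ≤ b3) (h4 : a4 ≤ b4)
    (ha1 : 0 ≤ a1) (ha2 : 0 ≤ a2) (ha3 : 0 ≤ a3) (ha4 : 0 ≤ a4) :
    a1*a2*a3*a4 ≤ b1*b2*b3*b4 := by
  have hb1 := ha1.trans h1
  have hb2 := ha2.trans h2
  have hb3 := ha3.trans h3
  have h12 : a1*a2 ≤ b1*b2 := mul_le_mul h1 h2 ha2 hb1
  have h123 : a1*a2*a3 ≤ b1*b2*b3 := mul_le_mul h12 h3 ha3 (mul_nonneg hb1 hb2)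
  exact mul_le_mul h123 h4 ha4 (mul_nonneg (mul_nonneg hb1 hb2) hb3)

lemma four_pt (hd5 : 5 ≤ d) : ∃ C : ℝ, 0 < C ∧ ∀ x y z : Fin d → ℤ,
    x ≠ 0 → y ≠ 0 → z ≠ 0 → x ≠ y → x ≠ z → y ≠ z →
    ∀ s : Finset (Fin d → ℤ), (∀ w ∈ s, w ≠ 0 ∧ w ≠ x ∧ w ≠ y ∧ w ≠ z) →
    ∑ w ∈ s, P (d-2) w * P (d-4) (w - x) * P (d-4) (w - y) * P (d-2) (w - z)
      ≤ C * (P (d-4) x * P (d-4) y * P (d-4) z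
          + P (d-4) x * P (d-4) y * P (d-4) (x-z)
          + P (d-4) x * P (d-4) y * P (d-4) (y-z)
          + P (d-4) x * P (d-4) z * P (d-4) (x-y)
          + P (d-4) x * P (d-4) z * P (d-4) (y-z)
          + P (d-4) x * P (d-4) (x-y) * P (d-4) (x-z)
          + P (d-4) x * P (d-4) (x-y) * P (d-4) (y-z)
          + P (d-4) x * P (d-4) (x-z) * P (d-4) (y-z)
          + P (d-4) y * P (d-4) z * P (d-4) (x-y)
          + P (d-4) y * P (d-4) z * P (d-4) (x-z)
          + P (d-4) y * P (d-4) (x-y) * P (d-4) (x-z)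
          + P (d-4) y * P (d-4) (x-y) * P (d-4) (y-z)
          + P (d-4) y * P (d-4) (x-z) * P (d-4) (y-z)
          + P (d-4) z * P (d-4) (x-y) * P (d-4) (x-z)
          + P (d-4) z * P (d-4) (x-y) * P (d-4) (y-z)
          + P (d-4) z * P (d-4) (x-z) * P (d-4) (y-z)) := by
  classical
  obtain ⟨C2, hC2, h2pt⟩ := two_pt hd5
  obtain ⟨C3, hC3, h3pt⟩ := three_pt hd5
  have hd0 : (0:ℝ) < (d:ℝ) := by exact_mod_cast (show 0 < d by omega)
  have h3p : (0:ℝ) < 3^(d-1) := by positivity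
  set CA : ℝ := 2*(d:ℝ)*3^(d-1) with hCAdef
  have hCA : 0 < CA := by rw [hCAdef]; nlinarith
  set K1 : ℝ := 2^(d-2) * 2^(d-4) * 2^(d-2) * CA with hK1def
  have hK1 : 0 < K1 := by rw [hK1def]; positivity
  set K3 : ℝ := 2^(d-4) * C3 with hK3def
  have hK3 : 0 < K3 := by rw [hK3def]; positivity
  set K4 : ℝ := 2^(d-4) * 2^(d-4) * C2 with hK4def
  have hK4 : 0 < K4 := by rw [hK4def]; positivity
  refine ⟨K1 + K1 + K3 + K4, by positivity, ?_⟩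
  intro x y z hx hy hz hxy hxz hyz s hs
  have hxy0 : x - y ≠ 0 := sub_ne_zero.2 hxy
  have hxz0 : x - z ≠ 0 := sub_ne_zero.2 hxz
  have hyz0 : y - z ≠ 0 := sub_ne_zero.2 hyz
  have hx1 : 1 ≤ nrm x := one_le_nrm hx
  have hy1 : 1 ≤ nrm y := one_le_nrm hy
  have hz1 : 1 ≤ nrm z := one_le_nrm hz
  have hxy1 : 1 ≤ nrm (x-y) := one_le_nrm hxy0
  have hxz1 : 1 ≤ nrm (x-z) := one_le_nrm hxz0
  have hyz1 : 1 ≤ nrm (y-z) := one_le_nrm hyz0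
  set p1 := P (d-4) x with hp1def
  set p2 := P (d-4) y with hp2def
  set p3 := P (d-4) z with hp3def
  set p4 := P (d-4) (x-y) with hp4def
  set p5 := P (d-4) (x-z) with hp5def
  set p6 := P (d-4) (y-z) with hp6def
  have hp1 : 0 ≤ p1 := P_nonneg _ _
  have hp2 : 0 ≤ p2 := P_nonneg _ _
  have hp3 : 0 ≤ p3 := P_nonneg _ _
  have hp4 : 0 ≤ p4 := P_nonneg _ _
  have hp5 : 0 ≤ p5 := P_nonneg _ _
  have hp6 : 0 ≤ p6 := P_nonneg _ _
  set D1 : ℝ := min (nrm x) (min (nrm (x-y)) (nrm (x-z))) with hD1def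
  set D2 : ℝ := min (nrm y) (nrm (y-z)) with hD2def
  have hD11 : 1 ≤ D1 := le_min hx1 (le_min hxy1 hxz1)
  have hD21 : 1 ≤ D2 := le_min hy1 hyz1
  have hD1x : D1 ≤ nrm x := min_le_left _ _
  have hD1xy : D1 ≤ nrm (x-y) := le_trans (min_le_right _ _) (min_le_left _ _)
  have hD1xz : D1 ≤ nrm (x-z) := le_trans (min_le_right _ _) (min_le_right _ _)
  have hD2y : D2 ≤ nrm y := min_le_left _ _
  have hD2yz : D2 ≤ nrm (y-z) := min_le_right _ _
  set f : (Fin d → ℤ) → ℝ :=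
    fun w => P (d-2) w * P (d-4) (w - x) * P (d-4) (w - y) * P (d-2) (w - z) with hfdef
  set q1 : (Fin d → ℤ) → Prop := fun w => 2 * nrm (w - x) ≤ D1 with hq1
  set q2 : (Fin d → ℤ) → Prop := fun w => 2 * nrm (w - y) ≤ D2 with hq2
  set q3 : (Fin d → ℤ) → Prop := fun w => 2 * nrm (w - y) ≤ nrm (x - y) with hq3
  set r1 := s.filter q1 with hr1
  set t1 := s.filter (fun w => ¬ q1 w) with ht1
  set u2 := t1.filter q2 with hu2
  set r4 := t1.filter (fun w => ¬ q2 w) with hr4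
  set r2 := u2.filter q3 with hr2
  set r3 := u2.filter (fun w => ¬ q3 w) with hr3
  have hsplit : ∑ w ∈ s, f w
      = ∑ w ∈ r1, f w + ((∑ w ∈ r2, f w + ∑ w ∈ r3, f w) + ∑ w ∈ r4, f w) := by
    rw [hr2, hr3, Finset.sum_filter_add_sum_filter_not u2 q3 f]
    rw [hu2, hr4, Finset.sum_filter_add_sum_filter_not t1 q2 f]
    rw [hr1, ht1, Finset.sum_filter_add_sum_filter_not s q1 f]
  -- region r1 : near x
  have hb1 : ∑ w ∈ r1, f w ≤ K1 * (p1 * p4 * p5) := by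
    set M : ℝ := (2^(d-2) * P (d-2) x) * (2^(d-4) * p4) * (2^(d-2) * P (d-2) (x-z))
      with hMdef
    have hM0 : 0 ≤ M := by
      rw [hMdef]
      exact mul_nonneg (mul_nonneg (mul_nonneg (by positivity) (P_nonneg _ _))
        (mul_nonneg (by positivity) hp4)) (mul_nonneg (by positivity) (P_nonneg _ _))
    have hstep : ∑ w ∈ r1, f w ≤ M * ∑ w ∈ r1, P (d-4) (w - x) := by
      rw [Finset.mul_sum]
      refine Finset.sum_le_sum fun w hw => ?_
      have hmem := Finset.mem_filter.1 hw
      have hcond : 2 * nrm (w - x) ≤ D1 := hmem.2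
      have b1 : P (d-2) w ≤ 2^(d-2) * P (d-2) x :=
        P_le_double _ hx (tri_half₀ (le_trans hcond hD1x))
      have b3 : P (d-4) (w - y) ≤ 2^(d-4) * p4 := by
        rw [hp4def]
        exact P_le_double _ hxy0 (tri_half (le_trans hcond hD1xy))
      have b4 : P (d-2) (w - z) ≤ 2^(d-2) * P (d-2) (x-z) :=
        P_le_double _ hxz0 (tri_half (le_trans hcond hD1xz))
      calc f w ≤ (2^(d-2) * P (d-2) x) * P (d-4) (w - x) * (2^(d-4) * p4)
            * (2^(d-2) * P (d-2) (x-z)) := by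
            simp only [hfdef]
            exact mul_le_mul₄ b1 (le_refl _) b3 b4 (P_nonneg _ _) (P_nonneg _ _)
              (P_nonneg _ _) (P_nonneg _ _)
      _ = M * P (d-4) (w - x) := by rw [hMdef]; ring
    have hsum : ∑ w ∈ r1, P (d-4) (w - x) ≤ CA * D1 ^ 4 := by
      have happ := lemA' hd5 (d-4) (by omega) x D1 hD11 r1 (fun w hw => by
        have hmem := Finset.mem_filter.1 hw
        have hcond : 2 * nrm (w - x) ≤ D1 := hmem.2
        exact ⟨(hs w hmem.1).2.1, by linarith [nrm_nonneg (w - x)]⟩)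
      rw [show d - (d-4) = 4 by omega] at happ
      exact happ
    have hD4 : D1 ^ 4 ≤ nrm x ^ 2 * nrm (x-z) ^ 2 := by
      have e : D1 ^ 4 = D1^2 * D1^2 := by ring
      rw [e]
      exact mul_le_mul (pow_le_pow_left₀ (by linarith) hD1x 2)
        (pow_le_pow_left₀ (by linarith) hD1xz 2) (by positivity) (by positivity)
    calc ∑ w ∈ r1, f w ≤ M * (CA * D1 ^ 4) :=
          hstep.trans (mul_le_mul_of_nonneg_left hsum hM0)
    _ ≤ M * (CA * (nrm x ^ 2 * nrm (x-z) ^ 2)) := by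
          refine mul_le_mul_of_nonneg_left ?_ hM0
          exact mul_le_mul_of_nonneg_left hD4 (le_of_lt hCA)
    _ = K1 * ((P (d-2) x * nrm x ^ 2) * p4 * (P (d-2) (x-z) * nrm (x-z)^2)) := by
          rw [hMdef, hK1def]
          ring
    _ = K1 * (p1 * p4 * p5) := by
          rw [P_mul_sq (by omega) hx, P_mul_sq (by omega) hxz0, ← hp1def, ← hp5def]
  -- region r2 : near y, x-edge recovered
  have hb2 : ∑ w ∈ r2, f w ≤ K1 * (p2 * p4 * p6) := by
    set M : ℝ := (2^(d-2) * P (d-2) y) * (2^(d-4) * p4) * (2^(d-2) * P (d-2) (y-z))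
      with hMdef
    have hM0 : 0 ≤ M := by
      rw [hMdef]
      exact mul_nonneg (mul_nonneg (mul_nonneg (by positivity) (P_nonneg _ _))
        (mul_nonneg (by positivity) hp4)) (mul_nonneg (by positivity) (P_nonneg _ _))
    have hstep : ∑ w ∈ r2, f w ≤ M * ∑ w ∈ r2, P (d-4) (w - y) := by
      rw [Finset.mul_sum]
      refine Finset.sum_le_sum fun w hw => ?_
      have hmem := Finset.mem_filter.1 hw
      have hmemu := Finset.mem_filter.1 hmem.1
      have hmemt := Finset.mem_filter.1 hmemu.1
      have hcond2 : 2 * nrm (w - y) ≤ D2 := hmemu.2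
      have hcond3 : 2 * nrm (w - y) ≤ nrm (x - y) := hmem.2
      have b1 : P (d-2) w ≤ 2^(d-2) * P (d-2) y :=
        P_le_double _ hy (tri_half₀ (le_trans hcond2 hD2y))
      have b2 : P (d-4) (w - x) ≤ 2^(d-4) * p4 := by
        rw [hp4def]
        have h7 : nrm (y - x) ≤ 2 * nrm (w - x) := tri_half (by rwa [nrm_sub_comm y x])
        rw [nrm_sub_comm y x] at h7
        exact P_le_double _ hxy0 h7
      have b4 : P (d-2) (w - z) ≤ 2^(d-2) * P (d-2) (y-z) :=
        P_le_double _ hyz0 (tri_half (le_trans hcond2 hD2yz))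
      calc f w ≤ (2^(d-2) * P (d-2) y) * (2^(d-4) * p4) * P (d-4) (w - y)
            * (2^(d-2) * P (d-2) (y-z)) := by
            simp only [hfdef]
            exact mul_le_mul₄ b1 b2 (le_refl _) b4 (P_nonneg _ _) (P_nonneg _ _)
              (P_nonneg _ _) (P_nonneg _ _)
      _ = M * P (d-4) (w - y) := by rw [hMdef]; ring
    have hsum : ∑ w ∈ r2, P (d-4) (w - y) ≤ CA * D2 ^ 4 := by
      have happ := lemA' hd5 (d-4) (by omega) y D2 hD21 r2 (fun w hw => by
        have hmem := Finset.mem_filter.1 hw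
        have hmemu := Finset.mem_filter.1 hmem.1
        have hmemt := Finset.mem_filter.1 hmemu.1
        have hcond2 : 2 * nrm (w - y) ≤ D2 := hmemu.2
        exact ⟨(hs w hmemt.1).2.2.1, by linarith [nrm_nonneg (w - y)]⟩)
      rw [show d - (d-4) = 4 by omega] at happ
      exact happ
    have hD4 : D2 ^ 4 ≤ nrm y ^ 2 * nrm (y-z) ^ 2 := by
      have e : D2 ^ 4 = D2^2 * D2^2 := by ring
      rw [e]
      exact mul_le_mul (pow_le_pow_left₀ (by linarith) hD2y 2)
        (pow_le_pow_left₀ (by linarith) hD2yz 2) (by positivity) (by positivity)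
    calc ∑ w ∈ r2, f w ≤ M * (CA * D2 ^ 4) :=
          hstep.trans (mul_le_mul_of_nonneg_left hsum hM0)
    _ ≤ M * (CA * (nrm y ^ 2 * nrm (y-z) ^ 2)) := by
          refine mul_le_mul_of_nonneg_left ?_ hM0
          exact mul_le_mul_of_nonneg_left hD4 (le_of_lt hCA)
    _ = K1 * ((P (d-2) y * nrm y ^ 2) * p4 * (P (d-2) (y-z) * nrm (y-z)^2)) := by
          rw [hMdef, hK1def]
          ring
    _ = K1 * (p2 * p4 * p6) := by
          rw [P_mul_sq (by omega) hy, P_mul_sq (by omega) hyz0, ← hp2def, ← hp6def]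
  -- region r3 : reduce to three-point
  have hb3 : ∑ w ∈ r3, f w ≤ K3 * (p1*p4*p5 + p1*p3*p4 + p3*p4*p5) := by
    have hstep : ∑ w ∈ r3, f w
        ≤ (2^(d-4) * p4) * ∑ w ∈ r3, P (d-2) w * P (d-4) (w - x) * P (d-2) (w - z) := by
      rw [Finset.mul_sum]
      refine Finset.sum_le_sum fun w hw => ?_
      have hmem := Finset.mem_filter.1 hw
      have hcond3 : ¬ (2 * nrm (w - y) ≤ nrm (x - y)) := hmem.2
      have b3 : P (d-4) (w - y) ≤ 2^(d-4) * p4 := by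
        rw [hp4def]
        exact P_le_half _ (by linarith) (le_of_lt (lt_of_not_ge hcond3))
      calc f w ≤ P (d-2) w * P (d-4) (w - x) * (2^(d-4) * p4) * P (d-2) (w - z) := by
            simp only [hfdef]
            exact mul_le_mul₄ (le_refl _) (le_refl _) b3 (le_refl _) (P_nonneg _ _)
              (P_nonneg _ _) (P_nonneg _ _) (P_nonneg _ _)
      _ = (2^(d-4) * p4) * (P (d-2) w * P (d-4) (w - x) * P (d-2) (w - z)) := by ring
    have hsum : ∑ w ∈ r3, P (d-2) w * P (d-4) (w - x) * P (d-2) (w - z)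
        ≤ C3 * (p1 * p5 + p1 * p3 + p5 * p3) := by
      have happ := h3pt x z hx hz hxz r3 (fun w hw => by
        have hmem := Finset.mem_filter.1 hw
        have hmemu := Finset.mem_filter.1 hmem.1
        have hmemt := Finset.mem_filter.1 hmemu.1
        obtain ⟨h0, hwx, hwy, hwz⟩ := hs w hmemt.1
        exact ⟨h0, hwx, hwz⟩)
      calc ∑ w ∈ r3, P (d-2) w * P (d-4) (w - x) * P (d-2) (w - z)
          ≤ C3 * (P (d-4) x * P (d-4) (x - z) + P (d-4) x * P (d-4) z +
              P (d-4) (x - z) * P (d-4) z) := happ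
      _ = C3 * (p1 * p5 + p1 * p3 + p5 * p3) := by
          rw [← hp1def, ← hp3def, ← hp5def]
    have hc0 : (0:ℝ) ≤ 2^(d-4) * p4 := mul_nonneg (by positivity) hp4
    calc ∑ w ∈ r3, f w ≤ (2^(d-4) * p4) * (C3 * (p1 * p5 + p1 * p3 + p5 * p3)) :=
          hstep.trans (mul_le_mul_of_nonneg_left hsum hc0)
    _ = K3 * (p1*p4*p5 + p1*p3*p4 + p3*p4*p5) := by rw [hK3def]; ring
  -- region r4 : both far, reduce to two-point
  have hb4 : ∑ w ∈ r4, f w ≤ K4 * ((p1+p4+p5) * (p2+p6) * p3) := by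
    set E1 : ℝ := (D1^(d-4))⁻¹ with hE1def
    set E2 : ℝ := (D2^(d-4))⁻¹ with hE2def
    have hE10 : 0 ≤ E1 := by rw [hE1def]; positivity
    have hE20 : 0 ≤ E2 := by rw [hE2def]; positivity
    have hstep : ∑ w ∈ r4, f w
        ≤ (2^(d-4) * E1 * (2^(d-4) * E2)) * ∑ w ∈ r4, P (d-2) w * P (d-2) (w - z) := by
      rw [Finset.mul_sum]
      refine Finset.sum_le_sum fun w hw => ?_
      have hmem := Finset.mem_filter.1 hw
      have hmemt := Finset.mem_filter.1 hmem.1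
      have hcond1 : ¬ (2 * nrm (w - x) ≤ D1) := hmemt.2
      have hcond2 : ¬ (2 * nrm (w - y) ≤ D2) := hmem.2
      have b2 : P (d-4) (w - x) ≤ 2^(d-4) * E1 := by
        rw [hE1def]
        exact P_le_half _ (by linarith) (le_of_lt (lt_of_not_ge hcond1))
      have b3 : P (d-4) (w - y) ≤ 2^(d-4) * E2 := by
        rw [hE2def]
        exact P_le_half _ (by linarith) (le_of_lt (lt_of_not_ge hcond2))
      calc f w ≤ P (d-2) w * (2^(d-4) * E1) * (2^(d-4) * E2) * P (d-2) (w - z) := by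
            simp only [hfdef]
            exact mul_le_mul₄ (le_refl _) b2 b3 (le_refl _) (P_nonneg _ _)
              (P_nonneg _ _) (P_nonneg _ _) (P_nonneg _ _)
      _ = (2^(d-4) * E1 * (2^(d-4) * E2)) * (P (d-2) w * P (d-2) (w - z)) := by ring
    have hsum : ∑ w ∈ r4, P (d-2) w * P (d-2) (w - z) ≤ C2 * p3 := by
      have happ := h2pt z hz r4 (fun w hw => by
        have hmem := Finset.mem_filter.1 hw
        have hmemt := Finset.mem_filter.1 hmem.1
        obtain ⟨h0, hwx, hwy, hwz⟩ := hs w hmemt.1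
        exact ⟨h0, hwz⟩)
      rw [← hp3def] at happ
      exact happ
    have hE1le : E1 ≤ p1 + p4 + p5 := by
      rw [hE1def, hD1def]
      rcases min_cases (nrm x) (min (nrm (x-y)) (nrm (x-z))) with ⟨he,_⟩|⟨he,_⟩
      · rw [he]
        have e : (nrm x ^ (d-4))⁻¹ = p1 := by rw [hp1def]; rfl
        rw [e]
        linarith
      · rcases min_cases (nrm (x-y)) (nrm (x-z)) with ⟨he2,_⟩|⟨he2,_⟩
        · rw [he, he2]
          have e : (nrm (x-y) ^ (d-4))⁻¹ = p4 := by rw [hp4def]; rfl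
          rw [e]
          linarith
        · rw [he, he2]
          have e : (nrm (x-z) ^ (d-4))⁻¹ = p5 := by rw [hp5def]; rfl
          rw [e]
          linarith
    have hE2le : E2 ≤ p2 + p6 := by
      rw [hE2def, hD2def]
      rcases min_cases (nrm y) (nrm (y-z)) with ⟨he,_⟩|⟨he,_⟩
      · rw [he]
        have e : (nrm y ^ (d-4))⁻¹ = p2 := by rw [hp2def]; rfl
        rw [e]
        linarith
      · rw [he]
        have e : (nrm (y-z) ^ (d-4))⁻¹ = p6 := by rw [hp6def]; rfl
        rw [e]
        linarith
    have hc0 : (0:ℝ) ≤ 2^(d-4) * E1 * (2^(d-4) * E2) :=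
      mul_nonneg (mul_nonneg (by positivity) hE10) (mul_nonneg (by positivity) hE20)
    calc ∑ w ∈ r4, f w ≤ (2^(d-4) * E1 * (2^(d-4) * E2)) * (C2 * p3) :=
          hstep.trans (mul_le_mul_of_nonneg_left hsum hc0)
    _ = K4 * (E1 * E2 * p3) := by rw [hK4def]; ring
    _ ≤ K4 * ((p1+p4+p5) * (p2+p6) * p3) := by
          refine mul_le_mul_of_nonneg_left ?_ (le_of_lt hK4)
          refine mul_le_mul_of_nonneg_right ?_ hp3
          exact mul_le_mul hE1le hE2le hE20 (by linarith)
  -- assemble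
  have n123 : 0 ≤ p1*p2*p3 := mul_nonneg (mul_nonneg hp1 hp2) hp3
  have n125 : 0 ≤ p1*p2*p5 := mul_nonneg (mul_nonneg hp1 hp2) hp5
  have n126 : 0 ≤ p1*p2*p6 := mul_nonneg (mul_nonneg hp1 hp2) hp6
  have n134 : 0 ≤ p1*p3*p4 := mul_nonneg (mul_nonneg hp1 hp3) hp4
  have n136 : 0 ≤ p1*p3*p6 := mul_nonneg (mul_nonneg hp1 hp3) hp6
  have n145 : 0 ≤ p1*p4*p5 := mul_nonneg (mul_nonneg hp1 hp4) hp5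
  have n146 : 0 ≤ p1*p4*p6 := mul_nonneg (mul_nonneg hp1 hp4) hp6
  have n156 : 0 ≤ p1*p5*p6 := mul_nonneg (mul_nonneg hp1 hp5) hp6
  have n234 : 0 ≤ p2*p3*p4 := mul_nonneg (mul_nonneg hp2 hp3) hp4
  have n235 : 0 ≤ p2*p3*p5 := mul_nonneg (mul_nonneg hp2 hp3) hp5
  have n245 : 0 ≤ p2*p4*p5 := mul_nonneg (mul_nonneg hp2 hp4) hp5
  have n246 : 0 ≤ p2*p4*p6 := mul_nonneg (mul_nonneg hp2 hp4) hp6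
  have n256 : 0 ≤ p2*p5*p6 := mul_nonneg (mul_nonneg hp2 hp5) hp6
  have n345 : 0 ≤ p3*p4*p5 := mul_nonneg (mul_nonneg hp3 hp4) hp5
  have n346 : 0 ≤ p3*p4*p6 := mul_nonneg (mul_nonneg hp3 hp4) hp6
  have n356 : 0 ≤ p3*p5*p6 := mul_nonneg (mul_nonneg hp3 hp5) hp6
  set T : ℝ := p1*p2*p3 + p1*p2*p5 + p1*p2*p6 + p1*p3*p4 + p1*p3*p6 + p1*p4*p5
      + p1*p4*p6 + p1*p5*p6 + p2*p3*p4 + p2*p3*p5 + p2*p4*p5 + p2*p4*p6 + p2*p5*p6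
      + p3*p4*p5 + p3*p4*p6 + p3*p5*p6 with hTdef
  have hT1 : p1*p4*p5 ≤ T := by
    rw [hTdef]
    linarith
  have hT2 : p2*p4*p6 ≤ T := by
    rw [hTdef]
    linarith
  have hT3 : p1*p4*p5 + p1*p3*p4 + p3*p4*p5 ≤ T := by
    rw [hTdef]
    linarith
  have hT4 : (p1+p4+p5) * (p2+p6) * p3 ≤ T := by
    rw [hTdef]
    linarith [n123, n125, n126, n134, n136, n145, n146, n156, n234, n235, n245, n246, n256, n345, n346, n356]
  have c1 : ∑ w ∈ r1, f w ≤ K1 * T :=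
    hb1.trans (mul_le_mul_of_nonneg_left hT1 (le_of_lt hK1))
  have c2 : ∑ w ∈ r2, f w ≤ K1 * T :=
    hb2.trans (mul_le_mul_of_nonneg_left hT2 (le_of_lt hK1))
  have c3 : ∑ w ∈ r3, f w ≤ K3 * T :=
    hb3.trans (mul_le_mul_of_nonneg_left hT3 (le_of_lt hK3))
  have c4 : ∑ w ∈ r4, f w ≤ K4 * T :=
    hb4.trans (mul_le_mul_of_nonneg_left hT4 (le_of_lt hK4))
  calc ∑ w ∈ s, f w
      = ∑ w ∈ r1, f w + ((∑ w ∈ r2, f w + ∑ w ∈ r3, f w) + ∑ w ∈ r4, f w) := hsplit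
  _ ≤ K1 * T + ((K1 * T + K3 * T) + K4 * T) := by linarith
  _ = (K1 + K1 + K3 + K4) * T := by ring

lemma rpow_two_sub {v : Fin d → ℤ} (hd2 : 2 ≤ d) : nrm v ^ ((2:ℝ) - d) = P (d-2) v := by
  have h : ((2:ℝ) - d) = -(((d-2:ℕ)) : ℝ) := by
    have e : ((d-2:ℕ):ℝ) = (d:ℝ) - 2 := by
      push_cast [Nat.cast_sub hd2]
      ring
    rw [e]
    ring
  rw [h, Real.rpow_neg (nrm_nonneg v), Real.rpow_natCast, P]

lemma rpow_four_sub {v : Fin d → ℤ} (hd4 : 4 ≤ d) : nrm v ^ ((4:ℝ) - d) = P (d-4) v := by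
  have h : ((4:ℝ) - d) = -(((d-4:ℕ)) : ℝ) := by
    have e : ((d-4:ℕ):ℝ) = (d:ℝ) - 4 := by
      push_cast [Nat.cast_sub hd4]
      ring
    rw [e]
    ring
  rw [h, Real.rpow_neg (nrm_nonneg v), Real.rpow_natCast, P]

end QCTB

/-- For `d ≥ 5` there is `C < ∞` such that for pairwise distinct
nonzero `x, y, z ∈ ℤ^d`,
`∑_{w ∉ {0,x,y,z}} |w|^{2-d} |w-x|^{4-d} |w-y|^{4-d} |w-z|^{2-d} ≤ C · h_c(x,y,z)`. -/
theorem quadruple_convolution_tree_bound (d : ℕ) (hd : 5 ≤ d) :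
    ∃ C : ℝ, 0 < C ∧ ∀ x y z : Fin d → ℤ,
      x ≠ 0 → y ≠ 0 → z ≠ 0 → x ≠ y → x ≠ z → y ≠ z →
      Summable (fun w : {w : Fin d → ℤ // w ≠ 0 ∧ w ≠ x ∧ w ≠ y ∧ w ≠ z} =>
        nrm w.1 ^ ((2 : ℝ) - d) * nrm (w.1 - x) ^ ((4 : ℝ) - d) *
          nrm (w.1 - y) ^ ((4 : ℝ) - d) * nrm (w.1 - z) ^ ((2 : ℝ) - d)) ∧
      (∑' w : {w : Fin d → ℤ // w ≠ 0 ∧ w ≠ x ∧ w ≠ y ∧ w ≠ z},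
          nrm w.1 ^ ((2 : ℝ) - d) * nrm (w.1 - x) ^ ((4 : ℝ) - d) *
            nrm (w.1 - y) ^ ((4 : ℝ) - d) * nrm (w.1 - z) ^ ((2 : ℝ) - d))
        ≤ C * hcFun d x y z := by
  classical
  obtain ⟨C, hC, h4⟩ := QCTB.four_pt hd
  refine ⟨C, hC, ?_⟩
  intro x y z hx hy hz hxy hxz hyz
  set g : (Fin d → ℤ) → ℝ := fun w =>
    QCTB.P (d-2) w * QCTB.P (d-4) (w - x) * QCTB.P (d-4) (w - y) * QCTB.P (d-2) (w - z)
    with hgdef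
  set F : {w : Fin d → ℤ // w ≠ 0 ∧ w ≠ x ∧ w ≠ y ∧ w ≠ z} → ℝ := fun w =>
    nrm w.1 ^ ((2 : ℝ) - d) * nrm (w.1 - x) ^ ((4 : ℝ) - d) *
      nrm (w.1 - y) ^ ((4 : ℝ) - d) * nrm (w.1 - z) ^ ((2 : ℝ) - d) with hFdef
  have hFeq : ∀ w : {w : Fin d → ℤ // w ≠ 0 ∧ w ≠ x ∧ w ≠ y ∧ w ≠ z}, F w = g w.1 := by
    rintro ⟨w, h0, hwx, hwy, hwz⟩
    simp only [hFdef, hgdef]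
    rw [QCTB.rpow_two_sub (by omega), QCTB.rpow_four_sub (by omega),
      QCTB.rpow_four_sub (by omega), QCTB.rpow_two_sub (by omega)]
  have hhc : hcFun d x y z
      = QCTB.P (d-4) x * QCTB.P (d-4) y * QCTB.P (d-4) z
      + QCTB.P (d-4) x * QCTB.P (d-4) y * QCTB.P (d-4) (x-z)
      + QCTB.P (d-4) x * QCTB.P (d-4) y * QCTB.P (d-4) (y-z)
      + QCTB.P (d-4) x * QCTB.P (d-4) z * QCTB.P (d-4) (x-y)
      + QCTB.P (d-4) x * QCTB.P (d-4) z * QCTB.P (d-4) (y-z)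
      + QCTB.P (d-4) x * QCTB.P (d-4) (x-y) * QCTB.P (d-4) (x-z)
      + QCTB.P (d-4) x * QCTB.P (d-4) (x-y) * QCTB.P (d-4) (y-z)
      + QCTB.P (d-4) x * QCTB.P (d-4) (x-z) * QCTB.P (d-4) (y-z)
      + QCTB.P (d-4) y * QCTB.P (d-4) z * QCTB.P (d-4) (x-y)
      + QCTB.P (d-4) y * QCTB.P (d-4) z * QCTB.P (d-4) (x-z)
      + QCTB.P (d-4) y * QCTB.P (d-4) (x-y) * QCTB.P (d-4) (x-z)
      + QCTB.P (d-4) y * QCTB.P (d-4) (x-y) * QCTB.P (d-4) (y-z)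
      + QCTB.P (d-4) y * QCTB.P (d-4) (x-z) * QCTB.P (d-4) (y-z)
      + QCTB.P (d-4) z * QCTB.P (d-4) (x-y) * QCTB.P (d-4) (x-z)
      + QCTB.P (d-4) z * QCTB.P (d-4) (x-y) * QCTB.P (d-4) (y-z)
      + QCTB.P (d-4) z * QCTB.P (d-4) (x-z) * QCTB.P (d-4) (y-z) := by
    simp only [hcFun]
    rw [QCTB.rpow_four_sub (v := x) (by omega), QCTB.rpow_four_sub (v := y) (by omega),
      QCTB.rpow_four_sub (v := z) (by omega), QCTB.rpow_four_sub (v := x - y) (by omega),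
      QCTB.rpow_four_sub (v := x - z) (by omega), QCTB.rpow_four_sub (v := y - z) (by omega)]
  have hbound : ∀ u : Finset {w : Fin d → ℤ // w ≠ 0 ∧ w ≠ x ∧ w ≠ y ∧ w ≠ z},
      ∑ i ∈ u, F i ≤ C * hcFun d x y z := by
    intro u
    rw [hhc]
    have hmem : ∀ w ∈ u.image Subtype.val, w ≠ 0 ∧ w ≠ x ∧ w ≠ y ∧ w ≠ z := by
      intro w hw
      obtain ⟨i, _, rfl⟩ := Finset.mem_image.1 hw
      exact i.2
    calc ∑ i ∈ u, F i = ∑ i ∈ u, g i.1 := Finset.sum_congr rfl fun i _ => hFeq i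
    _ = ∑ w ∈ u.image Subtype.val, g w :=
        (Finset.sum_image fun a _ b _ h => Subtype.ext h).symm
    _ ≤ _ := h4 x y z hx hy hz hxy hxz hyz (u.image Subtype.val) hmem
  have hF0 : (0 : {w : Fin d → ℤ // w ≠ 0 ∧ w ≠ x ∧ w ≠ y ∧ w ≠ z} → ℝ) ≤ F := by
    intro w
    simp only [hFdef, Pi.zero_apply]
    have h1 := Real.rpow_nonneg (QCTB.nrm_nonneg w.1) ((2:ℝ) - d)
    have h2 := Real.rpow_nonneg (QCTB.nrm_nonneg (w.1 - x)) ((4:ℝ) - d)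
    have h3 := Real.rpow_nonneg (QCTB.nrm_nonneg (w.1 - y)) ((4:ℝ) - d)
    have h4 := Real.rpow_nonneg (QCTB.nrm_nonneg (w.1 - z)) ((2:ℝ) - d)
    exact mul_nonneg (mul_nonneg (mul_nonneg h1 h2) h3) h4
  have hsummable := summable_of_sum_le hF0 hbound
  exact ⟨hsummable, hsummable.tsum_le_of_sum_le hbound⟩
end
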